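/- arXiv:2206.05925 — 2 statements merged into one kernel-verified Lean document; each statement's English description precedes it below -/
import Mathlib

section
/- Every commutative post-Lie superalgebra structure ∘ on the N=1 super-BMS₃ algebra ℬ is trivial, i.e. x ∘ y = 0 for all x, y ∈ ℬ. -/
namespace BMS3

abbrev I := ((ℤ ⊕ ℤ) ⊕ (Unit ⊕ Unit)) ⊕ ℤ

def iL (m : ℤ) : I := Sum.inl (Sum.inl (Sum.inl m))
def iW (m : ℤ) : I := Sum.inl (Sum.inl (Sum.inr m))
def iC1 : I := Sum.inl (Sum.inr (Sum.inl ()))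
def iC2 : I := Sum.inl (Sum.inr (Sum.inr ()))
def iQ (k : ℤ) : I := Sum.inr k

/-- data+axioms bundle -/
structure Setup (V : Type) [AddCommGroup V] [Module ℂ V] where
  bV : Module.Basis I ℂ V
  br : V →ₗ[ℂ] V →ₗ[ℂ] V
  L : ℤ → V
  W : ℤ → V
  C1 : V
  C2 : V
  Q : ℤ → V
  hLdef : ∀ m : ℤ, L m = bV (iL m)
  hWdef : ∀ m : ℤ, W m = bV (iW m)
  hC1def : C1 = bV iC1
  hC2def : C2 = bV iC2
  hQdef : ∀ k : ℤ, Q k = bV (iQ k)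
  Vsub : ZMod 2 → Submodule ℂ V
  hV0 : Vsub 0 = Submodule.span ℂ (Set.range (fun i : (ℤ ⊕ ℤ) ⊕ (Unit ⊕ Unit) => bV (Sum.inl i)))
  hV1 : Vsub 1 = Submodule.span ℂ (Set.range (fun j : ℤ => bV (Sum.inr j)))
  sgn : ZMod 2 → ℂ
  hsgn : ∀ p : ZMod 2, sgn p = if p = 1 then -1 else 1
  hLL : ∀ m n : ℤ, br (L m) (L n) = ((m : ℂ) - n) • L (m + n) +
      (if m + n = 0 then ((m : ℂ) ^ 3 - m) / 12 else 0) • C1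
  hLW : ∀ m n : ℤ, br (L m) (W n) = ((m : ℂ) - n) • W (m + n) +
      (if m + n = 0 then ((m : ℂ) ^ 3 - m) / 12 else 0) • C2
  hQQ : ∀ k l : ℤ, br (Q k) (Q l) = (2 : ℂ) • W (k + l + 1) +
      (if k + l + 1 = 0 then (((k : ℂ) + 1 / 2) ^ 2 - 1 / 4) / 3 else 0) • C2
  hLQ : ∀ m k : ℤ, br (L m) (Q k) = ((m : ℂ) / 2 - ((k : ℂ) + 1 / 2)) • Q (m + k)
  hWW : ∀ m n : ℤ, br (W m) (W n) = 0
  hWQ : ∀ m k : ℤ, br (W m) (Q k) = 0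
  hC1x : ∀ x : V, br C1 x = 0
  hC2x : ∀ x : V, br C2 x = 0
  hskew : ∀ p q : ZMod 2, ∀ x ∈ Vsub p, ∀ y ∈ Vsub q, br x y = (-(sgn (p * q))) • br y x
  circ : V →ₗ[ℂ] V →ₗ[ℂ] V
  hcomm : ∀ p q : ZMod 2, ∀ x ∈ Vsub p, ∀ y ∈ Vsub q, circ x y = sgn (p * q) • circ y x
  hpost1 : ∀ p q t : ZMod 2, ∀ x ∈ Vsub p, ∀ y ∈ Vsub q, ∀ z ∈ Vsub t,
      circ (br x y) z = circ x (circ y z) - sgn (p * q) • circ y (circ x z)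
  hpost2 : ∀ p q t : ZMod 2, ∀ x ∈ Vsub p, ∀ y ∈ Vsub q, ∀ z ∈ Vsub t,
      circ x (br y z) = br (circ x y) z + sgn (p * q) • br y (circ x z)

namespace Setup

variable {V : Type} [AddCommGroup V] [Module ℂ V] (S : Setup V)

noncomputable def cL (j : ℤ) : V →ₗ[ℂ] ℂ := S.bV.coord (iL j)
noncomputable def cW (j : ℤ) : V →ₗ[ℂ] ℂ := S.bV.coord (iW j)
noncomputable def cQ (j : ℤ) : V →ₗ[ℂ] ℂ := S.bV.coord (iQ j)
noncomputable def cC1 : V →ₗ[ℂ] ℂ := S.bV.coord iC1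
noncomputable def cC2 : V →ₗ[ℂ] ℂ := S.bV.coord iC2

lemma coordb (i i' : I) : S.bV.coord i (S.bV i') = if i' = i then 1 else 0 := by
  simp [Module.Basis.coord_apply, Module.Basis.repr_self, Finsupp.single_apply]

lemma cL_L (j m : ℤ) : S.cL j (S.L m) = if m = j then 1 else 0 := by
  rw [cL, S.hLdef, coordb]; simp [iL]
lemma cL_W (j m : ℤ) : S.cL j (S.W m) = 0 := by
  rw [cL, S.hWdef, coordb]; simp [iL, iW]
lemma cL_Q (j m : ℤ) : S.cL j (S.Q m) = 0 := by
  rw [cL, S.hQdef, coordb]; simp [iL, iQ]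
lemma cL_C1 (j : ℤ) : S.cL j S.C1 = 0 := by
  rw [cL, S.hC1def, coordb]; simp [iL, iC1]
lemma cL_C2 (j : ℤ) : S.cL j S.C2 = 0 := by
  rw [cL, S.hC2def, coordb]; simp [iL, iC2]

lemma cW_L (j m : ℤ) : S.cW j (S.L m) = 0 := by
  rw [cW, S.hLdef, coordb]; simp [iL, iW]
lemma cW_W (j m : ℤ) : S.cW j (S.W m) = if m = j then 1 else 0 := by
  rw [cW, S.hWdef, coordb]; simp [iW]
lemma cW_Q (j m : ℤ) : S.cW j (S.Q m) = 0 := by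
  rw [cW, S.hQdef, coordb]; simp [iW, iQ]
lemma cW_C1 (j : ℤ) : S.cW j S.C1 = 0 := by
  rw [cW, S.hC1def, coordb]; simp [iW, iC1]
lemma cW_C2 (j : ℤ) : S.cW j S.C2 = 0 := by
  rw [cW, S.hC2def, coordb]; simp [iW, iC2]

lemma cQ_L (j m : ℤ) : S.cQ j (S.L m) = 0 := by
  rw [cQ, S.hLdef, coordb]; simp [iL, iQ]
lemma cQ_W (j m : ℤ) : S.cQ j (S.W m) = 0 := by
  rw [cQ, S.hWdef, coordb]; simp [iW, iQ]
lemma cQ_Q (j m : ℤ) : S.cQ j (S.Q m) = if m = j then 1 else 0 := by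
  rw [cQ, S.hQdef, coordb]; simp [iQ]
lemma cQ_C1 (j : ℤ) : S.cQ j S.C1 = 0 := by
  rw [cQ, S.hC1def, coordb]; simp [iQ, iC1]
lemma cQ_C2 (j : ℤ) : S.cQ j S.C2 = 0 := by
  rw [cQ, S.hC2def, coordb]; simp [iQ, iC2]

lemma cC1_L (m : ℤ) : S.cC1 (S.L m) = 0 := by
  rw [cC1, S.hLdef, coordb]; simp [iL, iC1]
lemma cC1_W (m : ℤ) : S.cC1 (S.W m) = 0 := by
  rw [cC1, S.hWdef, coordb]; simp [iW, iC1]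
lemma cC1_Q (m : ℤ) : S.cC1 (S.Q m) = 0 := by
  rw [cC1, S.hQdef, coordb]; simp [iQ, iC1]
lemma cC1_C1 : S.cC1 S.C1 = 1 := by
  rw [cC1, S.hC1def, coordb]; simp
lemma cC1_C2 : S.cC1 S.C2 = 0 := by
  rw [cC1, S.hC2def, coordb]; simp [iC1, iC2]
lemma cC2_C1 : S.cC2 S.C1 = 0 := by
  rw [cC2, S.hC1def, coordb]; simp [iC1, iC2]
lemma cC2_C2 : S.cC2 S.C2 = 1 := by
  rw [cC2, S.hC2def, coordb]; simp

lemma sgn_zero : S.sgn 0 = 1 := by rw [S.hsgn]; norm_num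
lemma sgn_one : S.sgn 1 = -1 := by rw [S.hsgn]; norm_num

lemma memL (m : ℤ) : S.L m ∈ S.Vsub 0 := by
  rw [S.hV0, S.hLdef]; exact Submodule.subset_span ⟨Sum.inl (Sum.inl m), rfl⟩
lemma memW (m : ℤ) : S.W m ∈ S.Vsub 0 := by
  rw [S.hV0, S.hWdef]; exact Submodule.subset_span ⟨Sum.inl (Sum.inr m), rfl⟩
lemma memC1 : S.C1 ∈ S.Vsub 0 := by
  rw [S.hV0, S.hC1def]; exact Submodule.subset_span ⟨Sum.inr (Sum.inl ()), rfl⟩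
lemma memC2 : S.C2 ∈ S.Vsub 0 := by
  rw [S.hV0, S.hC2def]; exact Submodule.subset_span ⟨Sum.inr (Sum.inr ()), rfl⟩
lemma memQ (k : ℤ) : S.Q k ∈ S.Vsub 1 := by
  rw [S.hV1, S.hQdef]; exact Submodule.subset_span ⟨k, rfl⟩

def par : I → ZMod 2 := fun i => Sum.elim (fun _ => 0) (fun _ => 1) i

lemma memb (i : I) : S.bV i ∈ S.Vsub (par i) := by
  obtain (i|k) := i
  · rw [par]; simp only [Sum.elim_inl]
    rw [S.hV0]; exact Submodule.subset_span ⟨i, rfl⟩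
  · rw [par]; simp only [Sum.elim_inr]
    rw [S.hV1]; exact Submodule.subset_span ⟨k, rfl⟩

/-- skew conveniences -/
lemma br_WL (m n : ℤ) : S.br (S.W m) (S.L n) = ((m : ℂ) - n) • S.W (m + n) +
    (if m + n = 0 then ((m : ℂ) ^ 3 - m) / 12 else 0) • S.C2 := by
  have h := S.hskew 0 0 (S.W m) (S.memW m) (S.L n) (S.memL n)
  rw [h, zero_mul, S.sgn_zero, S.hLW n m]
  rcases eq_or_ne (m+n) 0 with h0 | h0
  · have h1 : n + m = 0 := by omega
    have h2 : n = -m := by omega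
    rw [if_pos h0, if_pos h1, show n + m = m + n from by ring, h2]
    push_cast
    match_scalars <;> ring
  · rw [if_neg h0, if_neg (show n+m ≠ 0 by omega), show n+m = m+n from by ring]
    match_scalars <;> ring

lemma br_QL (k n : ℤ) : S.br (S.Q k) (S.L n) = (((k : ℂ) + 1/2) - (n:ℂ)/2) • S.Q (n + k) := by
  have h := S.hskew 1 0 (S.Q k) (S.memQ k) (S.L n) (S.memL n)
  rw [h, mul_zero, S.sgn_zero, S.hLQ n k, smul_smul]
  rw [show (-(1:ℂ)) * ((n:ℂ)/2 - ((k:ℂ)+1/2)) = ((k : ℂ) + 1/2) - (n:ℂ)/2 from by ring]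

lemma br_QW (k n : ℤ) : S.br (S.Q k) (S.W n) = 0 := by
  have h := S.hskew 1 0 (S.Q k) (S.memQ k) (S.W n) (S.memW n)
  rw [h, mul_zero, S.sgn_zero, S.hWQ n k, smul_zero]

lemma br_vC1 (v : V) : S.br v S.C1 = 0 := by
  have h : (S.br.flip S.C1) = 0 := by
    apply S.bV.ext; intro i
    have h := S.hskew (par i) 0 (S.bV i) (S.memb i) S.C1 S.memC1
    simp only [LinearMap.flip_apply, LinearMap.zero_apply]
    rw [h, mul_zero, S.hC1x, smul_zero]
  exact DFunLike.congr_fun h v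

lemma br_vC2 (v : V) : S.br v S.C2 = 0 := by
  have h : (S.br.flip S.C2) = 0 := by
    apply S.bV.ext; intro i
    have h := S.hskew (par i) 0 (S.bV i) (S.memb i) S.C2 S.memC2
    simp only [LinearMap.flip_apply, LinearMap.zero_apply]
    rw [h, mul_zero, S.hC2x, smul_zero]
  exact DFunLike.congr_fun h v

@[simp] lemma bV_iL (p : ℤ) : S.bV (Sum.inl (Sum.inl (Sum.inl p))) = S.L p := (S.hLdef p).symm
@[simp] lemma bV_iW (p : ℤ) : S.bV (Sum.inl (Sum.inl (Sum.inr p))) = S.W p := (S.hWdef p).symm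
@[simp] lemma bV_iC1 : S.bV (Sum.inl (Sum.inr (Sum.inl ()))) = S.C1 := S.hC1def.symm
@[simp] lemma bV_iC2 : S.bV (Sum.inl (Sum.inr (Sum.inr ()))) = S.C2 := S.hC2def.symm
@[simp] lemma bV_iQ (p : ℤ) : S.bV (Sum.inr p) = S.Q p := (S.hQdef p).symm


lemma cL_brL (n j : ℤ) (v : V) :
    S.cL j (S.br v (S.L n)) = ((j:ℂ) - 2*(n:ℂ)) * S.cL (j-n) v := by
  have h : (S.cL j).comp (S.br.flip (S.L n)) = ((j:ℂ) - 2*(n:ℂ)) • S.cL (j-n) := by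
    apply S.bV.ext; intro i
    simp only [LinearMap.comp_apply, LinearMap.flip_apply, LinearMap.smul_apply,
      smul_eq_mul, LinearMap.zero_apply]
    obtain ((p|p)|(u|u))|p := i
    · rw [bV_iL, S.hLL p n]
      simp only [map_add, map_smul, cL_L, cL_W, cL_Q, cL_C1, cL_C2, cW_L, cW_W, cW_Q, cW_C1, cW_C2, cQ_L, cQ_W, cQ_Q, cQ_C1, cQ_C2, smul_eq_mul, mul_zero, mul_one, add_zero, zero_add]
      rcases eq_or_ne p (j - n) with h1 | h1
      · subst h1
        rw [if_pos (show (j - n) + n = j by omega), if_pos rfl] <;> (push_cast; ring1)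
      · rw [if_neg (show ¬(p + n = j) by omega), if_neg h1] <;> ring1
    · rw [bV_iW, S.br_WL p n]
      simp [cL_L, cL_W, cL_Q, cL_C1, cL_C2, cW_L, cW_W, cW_Q, cW_C1, cW_C2, cQ_L, cQ_W, cQ_Q, cQ_C1, cQ_C2,
        apply_ite (S.cL j), apply_ite (S.cW j), apply_ite (S.cQ j)]
    · rw [bV_iC1, S.hC1x (S.L n)]
      simp [cL_L, cL_W, cL_Q, cL_C1, cL_C2, cW_L, cW_W, cW_Q, cW_C1, cW_C2, cQ_L, cQ_W, cQ_Q, cQ_C1, cQ_C2,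
        apply_ite (S.cL j), apply_ite (S.cW j), apply_ite (S.cQ j)]
    · rw [bV_iC2, S.hC2x (S.L n)]
      simp [cL_L, cL_W, cL_Q, cL_C1, cL_C2, cW_L, cW_W, cW_Q, cW_C1, cW_C2, cQ_L, cQ_W, cQ_Q, cQ_C1, cQ_C2,
        apply_ite (S.cL j), apply_ite (S.cW j), apply_ite (S.cQ j)]
    · rw [bV_iQ, S.br_QL p n]
      simp [cL_L, cL_W, cL_Q, cL_C1, cL_C2, cW_L, cW_W, cW_Q, cW_C1, cW_C2, cQ_L, cQ_W, cQ_Q, cQ_C1, cQ_C2,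
        apply_ite (S.cL j), apply_ite (S.cW j), apply_ite (S.cQ j)]
  have h2 := DFunLike.congr_fun h v
  simpa only [LinearMap.comp_apply, LinearMap.flip_apply, LinearMap.smul_apply,
    smul_eq_mul, LinearMap.zero_apply] using h2

lemma cW_brL (n j : ℤ) (v : V) :
    S.cW j (S.br v (S.L n)) = ((j:ℂ) - 2*(n:ℂ)) * S.cW (j-n) v := by
  have h : (S.cW j).comp (S.br.flip (S.L n)) = ((j:ℂ) - 2*(n:ℂ)) • S.cW (j-n) := by
    apply S.bV.ext; intro i
    simp only [LinearMap.comp_apply, LinearMap.flip_apply, LinearMap.smul_apply,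
      smul_eq_mul, LinearMap.zero_apply]
    obtain ((p|p)|(u|u))|p := i
    · rw [bV_iL, S.hLL p n]
      simp [cL_L, cL_W, cL_Q, cL_C1, cL_C2, cW_L, cW_W, cW_Q, cW_C1, cW_C2, cQ_L, cQ_W, cQ_Q, cQ_C1, cQ_C2,
        apply_ite (S.cL j), apply_ite (S.cW j), apply_ite (S.cQ j)]
    · rw [bV_iW, S.br_WL p n]
      simp only [map_add, map_smul, cL_L, cL_W, cL_Q, cL_C1, cL_C2, cW_L, cW_W, cW_Q, cW_C1, cW_C2, cQ_L, cQ_W, cQ_Q, cQ_C1, cQ_C2, smul_eq_mul, mul_zero, mul_one, add_zero, zero_add]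
      rcases eq_or_ne p (j - n) with h1 | h1
      · subst h1
        rw [if_pos (show (j - n) + n = j by omega), if_pos rfl] <;> (push_cast; ring1)
      · rw [if_neg (show ¬(p + n = j) by omega), if_neg h1] <;> ring1
    · rw [bV_iC1, S.hC1x (S.L n)]
      simp [cL_L, cL_W, cL_Q, cL_C1, cL_C2, cW_L, cW_W, cW_Q, cW_C1, cW_C2, cQ_L, cQ_W, cQ_Q, cQ_C1, cQ_C2,
        apply_ite (S.cL j), apply_ite (S.cW j), apply_ite (S.cQ j)]
    · rw [bV_iC2, S.hC2x (S.L n)]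
      simp [cL_L, cL_W, cL_Q, cL_C1, cL_C2, cW_L, cW_W, cW_Q, cW_C1, cW_C2, cQ_L, cQ_W, cQ_Q, cQ_C1, cQ_C2,
        apply_ite (S.cL j), apply_ite (S.cW j), apply_ite (S.cQ j)]
    · rw [bV_iQ, S.br_QL p n]
      simp [cL_L, cL_W, cL_Q, cL_C1, cL_C2, cW_L, cW_W, cW_Q, cW_C1, cW_C2, cQ_L, cQ_W, cQ_Q, cQ_C1, cQ_C2,
        apply_ite (S.cL j), apply_ite (S.cW j), apply_ite (S.cQ j)]
  have h2 := DFunLike.congr_fun h v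
  simpa only [LinearMap.comp_apply, LinearMap.flip_apply, LinearMap.smul_apply,
    smul_eq_mul, LinearMap.zero_apply] using h2

lemma cQ_brL (n j : ℤ) (v : V) :
    S.cQ j (S.br v (S.L n)) = ((j:ℂ) + 1/2 - 3*(n:ℂ)/2) * S.cQ (j-n) v := by
  have h : (S.cQ j).comp (S.br.flip (S.L n)) = ((j:ℂ) + 1/2 - 3*(n:ℂ)/2) • S.cQ (j-n) := by
    apply S.bV.ext; intro i
    simp only [LinearMap.comp_apply, LinearMap.flip_apply, LinearMap.smul_apply,
      smul_eq_mul, LinearMap.zero_apply]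
    obtain ((p|p)|(u|u))|p := i
    · rw [bV_iL, S.hLL p n]
      simp [cL_L, cL_W, cL_Q, cL_C1, cL_C2, cW_L, cW_W, cW_Q, cW_C1, cW_C2, cQ_L, cQ_W, cQ_Q, cQ_C1, cQ_C2,
        apply_ite (S.cL j), apply_ite (S.cW j), apply_ite (S.cQ j)]
    · rw [bV_iW, S.br_WL p n]
      simp [cL_L, cL_W, cL_Q, cL_C1, cL_C2, cW_L, cW_W, cW_Q, cW_C1, cW_C2, cQ_L, cQ_W, cQ_Q, cQ_C1, cQ_C2,
        apply_ite (S.cL j), apply_ite (S.cW j), apply_ite (S.cQ j)]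
    · rw [bV_iC1, S.hC1x (S.L n)]
      simp [cL_L, cL_W, cL_Q, cL_C1, cL_C2, cW_L, cW_W, cW_Q, cW_C1, cW_C2, cQ_L, cQ_W, cQ_Q, cQ_C1, cQ_C2,
        apply_ite (S.cL j), apply_ite (S.cW j), apply_ite (S.cQ j)]
    · rw [bV_iC2, S.hC2x (S.L n)]
      simp [cL_L, cL_W, cL_Q, cL_C1, cL_C2, cW_L, cW_W, cW_Q, cW_C1, cW_C2, cQ_L, cQ_W, cQ_Q, cQ_C1, cQ_C2,
        apply_ite (S.cL j), apply_ite (S.cW j), apply_ite (S.cQ j)]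
    · rw [bV_iQ, S.br_QL p n]
      simp only [map_add, map_smul, cL_L, cL_W, cL_Q, cL_C1, cL_C2, cW_L, cW_W, cW_Q, cW_C1, cW_C2, cQ_L, cQ_W, cQ_Q, cQ_C1, cQ_C2, smul_eq_mul, mul_zero, mul_one, add_zero, zero_add]
      rcases eq_or_ne p (j - n) with h1 | h1
      · subst h1
        rw [if_pos (show n + (j - n) = j by omega), if_pos rfl] <;> (push_cast; ring1)
      · rw [if_neg (show ¬(n + p = j) by omega), if_neg h1] <;> ring1
  have h2 := DFunLike.congr_fun h v
  simpa only [LinearMap.comp_apply, LinearMap.flip_apply, LinearMap.smul_apply,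
    smul_eq_mul, LinearMap.zero_apply] using h2

lemma cL_brW (n j : ℤ) (v : V) :
    S.cL j (S.br v (S.W n)) = 0 := by
  have h : (S.cL j).comp (S.br.flip (S.W n)) = 0 := by
    apply S.bV.ext; intro i
    simp only [LinearMap.comp_apply, LinearMap.flip_apply, LinearMap.smul_apply,
      smul_eq_mul, LinearMap.zero_apply]
    obtain ((p|p)|(u|u))|p := i
    · rw [bV_iL, S.hLW p n]
      simp [cL_L, cL_W, cL_Q, cL_C1, cL_C2, cW_L, cW_W, cW_Q, cW_C1, cW_C2, cQ_L, cQ_W, cQ_Q, cQ_C1, cQ_C2,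
        apply_ite (S.cL j), apply_ite (S.cW j), apply_ite (S.cQ j)]
    · rw [bV_iW, S.hWW p n]
      simp [cL_L, cL_W, cL_Q, cL_C1, cL_C2, cW_L, cW_W, cW_Q, cW_C1, cW_C2, cQ_L, cQ_W, cQ_Q, cQ_C1, cQ_C2,
        apply_ite (S.cL j), apply_ite (S.cW j), apply_ite (S.cQ j)]
    · rw [bV_iC1, S.hC1x (S.W n)]
      simp [cL_L, cL_W, cL_Q, cL_C1, cL_C2, cW_L, cW_W, cW_Q, cW_C1, cW_C2, cQ_L, cQ_W, cQ_Q, cQ_C1, cQ_C2,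
        apply_ite (S.cL j), apply_ite (S.cW j), apply_ite (S.cQ j)]
    · rw [bV_iC2, S.hC2x (S.W n)]
      simp [cL_L, cL_W, cL_Q, cL_C1, cL_C2, cW_L, cW_W, cW_Q, cW_C1, cW_C2, cQ_L, cQ_W, cQ_Q, cQ_C1, cQ_C2,
        apply_ite (S.cL j), apply_ite (S.cW j), apply_ite (S.cQ j)]
    · rw [bV_iQ, S.br_QW p n]
      simp [cL_L, cL_W, cL_Q, cL_C1, cL_C2, cW_L, cW_W, cW_Q, cW_C1, cW_C2, cQ_L, cQ_W, cQ_Q, cQ_C1, cQ_C2,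
        apply_ite (S.cL j), apply_ite (S.cW j), apply_ite (S.cQ j)]
  have h2 := DFunLike.congr_fun h v
  simpa only [LinearMap.comp_apply, LinearMap.flip_apply, LinearMap.smul_apply,
    smul_eq_mul, LinearMap.zero_apply] using h2

lemma cW_brW (n j : ℤ) (v : V) :
    S.cW j (S.br v (S.W n)) = ((j:ℂ) - 2*(n:ℂ)) * S.cL (j-n) v := by
  have h : (S.cW j).comp (S.br.flip (S.W n)) = ((j:ℂ) - 2*(n:ℂ)) • S.cL (j-n) := by
    apply S.bV.ext; intro i
    simp only [LinearMap.comp_apply, LinearMap.flip_apply, LinearMap.smul_apply,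
      smul_eq_mul, LinearMap.zero_apply]
    obtain ((p|p)|(u|u))|p := i
    · rw [bV_iL, S.hLW p n]
      simp only [map_add, map_smul, cL_L, cL_W, cL_Q, cL_C1, cL_C2, cW_L, cW_W, cW_Q, cW_C1, cW_C2, cQ_L, cQ_W, cQ_Q, cQ_C1, cQ_C2, smul_eq_mul, mul_zero, mul_one, add_zero, zero_add]
      rcases eq_or_ne p (j - n) with h1 | h1
      · subst h1
        rw [if_pos (show (j - n) + n = j by omega), if_pos rfl] <;> (push_cast; ring1)
      · rw [if_neg (show ¬(p + n = j) by omega), if_neg h1] <;> ring1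
    · rw [bV_iW, S.hWW p n]
      simp [cL_L, cL_W, cL_Q, cL_C1, cL_C2, cW_L, cW_W, cW_Q, cW_C1, cW_C2, cQ_L, cQ_W, cQ_Q, cQ_C1, cQ_C2,
        apply_ite (S.cL j), apply_ite (S.cW j), apply_ite (S.cQ j)]
    · rw [bV_iC1, S.hC1x (S.W n)]
      simp [cL_L, cL_W, cL_Q, cL_C1, cL_C2, cW_L, cW_W, cW_Q, cW_C1, cW_C2, cQ_L, cQ_W, cQ_Q, cQ_C1, cQ_C2,
        apply_ite (S.cL j), apply_ite (S.cW j), apply_ite (S.cQ j)]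
    · rw [bV_iC2, S.hC2x (S.W n)]
      simp [cL_L, cL_W, cL_Q, cL_C1, cL_C2, cW_L, cW_W, cW_Q, cW_C1, cW_C2, cQ_L, cQ_W, cQ_Q, cQ_C1, cQ_C2,
        apply_ite (S.cL j), apply_ite (S.cW j), apply_ite (S.cQ j)]
    · rw [bV_iQ, S.br_QW p n]
      simp [cL_L, cL_W, cL_Q, cL_C1, cL_C2, cW_L, cW_W, cW_Q, cW_C1, cW_C2, cQ_L, cQ_W, cQ_Q, cQ_C1, cQ_C2,
        apply_ite (S.cL j), apply_ite (S.cW j), apply_ite (S.cQ j)]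
  have h2 := DFunLike.congr_fun h v
  simpa only [LinearMap.comp_apply, LinearMap.flip_apply, LinearMap.smul_apply,
    smul_eq_mul, LinearMap.zero_apply] using h2

lemma cQ_brW (n j : ℤ) (v : V) :
    S.cQ j (S.br v (S.W n)) = 0 := by
  have h : (S.cQ j).comp (S.br.flip (S.W n)) = 0 := by
    apply S.bV.ext; intro i
    simp only [LinearMap.comp_apply, LinearMap.flip_apply, LinearMap.smul_apply,
      smul_eq_mul, LinearMap.zero_apply]
    obtain ((p|p)|(u|u))|p := i
    · rw [bV_iL, S.hLW p n]
      simp [cL_L, cL_W, cL_Q, cL_C1, cL_C2, cW_L, cW_W, cW_Q, cW_C1, cW_C2, cQ_L, cQ_W, cQ_Q, cQ_C1, cQ_C2,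
        apply_ite (S.cL j), apply_ite (S.cW j), apply_ite (S.cQ j)]
    · rw [bV_iW, S.hWW p n]
      simp [cL_L, cL_W, cL_Q, cL_C1, cL_C2, cW_L, cW_W, cW_Q, cW_C1, cW_C2, cQ_L, cQ_W, cQ_Q, cQ_C1, cQ_C2,
        apply_ite (S.cL j), apply_ite (S.cW j), apply_ite (S.cQ j)]
    · rw [bV_iC1, S.hC1x (S.W n)]
      simp [cL_L, cL_W, cL_Q, cL_C1, cL_C2, cW_L, cW_W, cW_Q, cW_C1, cW_C2, cQ_L, cQ_W, cQ_Q, cQ_C1, cQ_C2,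
        apply_ite (S.cL j), apply_ite (S.cW j), apply_ite (S.cQ j)]
    · rw [bV_iC2, S.hC2x (S.W n)]
      simp [cL_L, cL_W, cL_Q, cL_C1, cL_C2, cW_L, cW_W, cW_Q, cW_C1, cW_C2, cQ_L, cQ_W, cQ_Q, cQ_C1, cQ_C2,
        apply_ite (S.cL j), apply_ite (S.cW j), apply_ite (S.cQ j)]
    · rw [bV_iQ, S.br_QW p n]
      simp [cL_L, cL_W, cL_Q, cL_C1, cL_C2, cW_L, cW_W, cW_Q, cW_C1, cW_C2, cQ_L, cQ_W, cQ_Q, cQ_C1, cQ_C2,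
        apply_ite (S.cL j), apply_ite (S.cW j), apply_ite (S.cQ j)]
  have h2 := DFunLike.congr_fun h v
  simpa only [LinearMap.comp_apply, LinearMap.flip_apply, LinearMap.smul_apply,
    smul_eq_mul, LinearMap.zero_apply] using h2

lemma cL_brQ (k j : ℤ) (v : V) :
    S.cL j (S.br v (S.Q k)) = 0 := by
  have h : (S.cL j).comp (S.br.flip (S.Q k)) = 0 := by
    apply S.bV.ext; intro i
    simp only [LinearMap.comp_apply, LinearMap.flip_apply, LinearMap.smul_apply,
      smul_eq_mul, LinearMap.zero_apply]
    obtain ((p|p)|(u|u))|p := i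
    · rw [bV_iL, S.hLQ p k]
      simp [cL_L, cL_W, cL_Q, cL_C1, cL_C2, cW_L, cW_W, cW_Q, cW_C1, cW_C2, cQ_L, cQ_W, cQ_Q, cQ_C1, cQ_C2,
        apply_ite (S.cL j), apply_ite (S.cW j), apply_ite (S.cQ j)]
    · rw [bV_iW, S.hWQ p k]
      simp [cL_L, cL_W, cL_Q, cL_C1, cL_C2, cW_L, cW_W, cW_Q, cW_C1, cW_C2, cQ_L, cQ_W, cQ_Q, cQ_C1, cQ_C2,
        apply_ite (S.cL j), apply_ite (S.cW j), apply_ite (S.cQ j)]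
    · rw [bV_iC1, S.hC1x (S.Q k)]
      simp [cL_L, cL_W, cL_Q, cL_C1, cL_C2, cW_L, cW_W, cW_Q, cW_C1, cW_C2, cQ_L, cQ_W, cQ_Q, cQ_C1, cQ_C2,
        apply_ite (S.cL j), apply_ite (S.cW j), apply_ite (S.cQ j)]
    · rw [bV_iC2, S.hC2x (S.Q k)]
      simp [cL_L, cL_W, cL_Q, cL_C1, cL_C2, cW_L, cW_W, cW_Q, cW_C1, cW_C2, cQ_L, cQ_W, cQ_Q, cQ_C1, cQ_C2,
        apply_ite (S.cL j), apply_ite (S.cW j), apply_ite (S.cQ j)]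
    · rw [bV_iQ, S.hQQ p k]
      simp [cL_L, cL_W, cL_Q, cL_C1, cL_C2, cW_L, cW_W, cW_Q, cW_C1, cW_C2, cQ_L, cQ_W, cQ_Q, cQ_C1, cQ_C2,
        apply_ite (S.cL j), apply_ite (S.cW j), apply_ite (S.cQ j)]
  have h2 := DFunLike.congr_fun h v
  simpa only [LinearMap.comp_apply, LinearMap.flip_apply, LinearMap.smul_apply,
    smul_eq_mul, LinearMap.zero_apply] using h2

lemma cW_brQ (k j : ℤ) (v : V) :
    S.cW j (S.br v (S.Q k)) = (2:ℂ) * S.cQ (j-k-1) v := by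
  have h : (S.cW j).comp (S.br.flip (S.Q k)) = (2:ℂ) • S.cQ (j-k-1) := by
    apply S.bV.ext; intro i
    simp only [LinearMap.comp_apply, LinearMap.flip_apply, LinearMap.smul_apply,
      smul_eq_mul, LinearMap.zero_apply]
    obtain ((p|p)|(u|u))|p := i
    · rw [bV_iL, S.hLQ p k]
      simp [cL_L, cL_W, cL_Q, cL_C1, cL_C2, cW_L, cW_W, cW_Q, cW_C1, cW_C2, cQ_L, cQ_W, cQ_Q, cQ_C1, cQ_C2,
        apply_ite (S.cL j), apply_ite (S.cW j), apply_ite (S.cQ j)]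
    · rw [bV_iW, S.hWQ p k]
      simp [cL_L, cL_W, cL_Q, cL_C1, cL_C2, cW_L, cW_W, cW_Q, cW_C1, cW_C2, cQ_L, cQ_W, cQ_Q, cQ_C1, cQ_C2,
        apply_ite (S.cL j), apply_ite (S.cW j), apply_ite (S.cQ j)]
    · rw [bV_iC1, S.hC1x (S.Q k)]
      simp [cL_L, cL_W, cL_Q, cL_C1, cL_C2, cW_L, cW_W, cW_Q, cW_C1, cW_C2, cQ_L, cQ_W, cQ_Q, cQ_C1, cQ_C2,
        apply_ite (S.cL j), apply_ite (S.cW j), apply_ite (S.cQ j)]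
    · rw [bV_iC2, S.hC2x (S.Q k)]
      simp [cL_L, cL_W, cL_Q, cL_C1, cL_C2, cW_L, cW_W, cW_Q, cW_C1, cW_C2, cQ_L, cQ_W, cQ_Q, cQ_C1, cQ_C2,
        apply_ite (S.cL j), apply_ite (S.cW j), apply_ite (S.cQ j)]
    · rw [bV_iQ, S.hQQ p k]
      simp only [map_add, map_smul, cL_L, cL_W, cL_Q, cL_C1, cL_C2, cW_L, cW_W, cW_Q, cW_C1, cW_C2, cQ_L, cQ_W, cQ_Q, cQ_C1, cQ_C2, smul_eq_mul, mul_zero, mul_one, add_zero, zero_add]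
      rcases eq_or_ne p (j - k - 1) with h1 | h1
      · subst h1
        rw [if_pos (show (j - k - 1) + k + 1 = j by omega), if_pos rfl] <;> (push_cast; ring1)
      · rw [if_neg (show ¬(p + k + 1 = j) by omega), if_neg h1] <;> ring1
  have h2 := DFunLike.congr_fun h v
  simpa only [LinearMap.comp_apply, LinearMap.flip_apply, LinearMap.smul_apply,
    smul_eq_mul, LinearMap.zero_apply] using h2

lemma cQ_brQ (k j : ℤ) (v : V) :
    S.cQ j (S.br v (S.Q k)) = (((j:ℂ)-(k:ℂ))/2 - (k:ℂ) - 1/2) * S.cL (j-k) v := by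
  have h : (S.cQ j).comp (S.br.flip (S.Q k)) = (((j:ℂ)-(k:ℂ))/2 - (k:ℂ) - 1/2) • S.cL (j-k) := by
    apply S.bV.ext; intro i
    simp only [LinearMap.comp_apply, LinearMap.flip_apply, LinearMap.smul_apply,
      smul_eq_mul, LinearMap.zero_apply]
    obtain ((p|p)|(u|u))|p := i
    · rw [bV_iL, S.hLQ p k]
      simp only [map_add, map_smul, cL_L, cL_W, cL_Q, cL_C1, cL_C2, cW_L, cW_W, cW_Q, cW_C1, cW_C2, cQ_L, cQ_W, cQ_Q, cQ_C1, cQ_C2, smul_eq_mul, mul_zero, mul_one, add_zero, zero_add]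
      rcases eq_or_ne p (j - k) with h1 | h1
      · subst h1
        rw [if_pos (show (j - k) + k = j by omega), if_pos rfl] <;> (push_cast; ring1)
      · rw [if_neg (show ¬(p + k = j) by omega), if_neg h1] <;> ring1
    · rw [bV_iW, S.hWQ p k]
      simp [cL_L, cL_W, cL_Q, cL_C1, cL_C2, cW_L, cW_W, cW_Q, cW_C1, cW_C2, cQ_L, cQ_W, cQ_Q, cQ_C1, cQ_C2,
        apply_ite (S.cL j), apply_ite (S.cW j), apply_ite (S.cQ j)]
    · rw [bV_iC1, S.hC1x (S.Q k)]
      simp [cL_L, cL_W, cL_Q, cL_C1, cL_C2, cW_L, cW_W, cW_Q, cW_C1, cW_C2, cQ_L, cQ_W, cQ_Q, cQ_C1, cQ_C2,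
        apply_ite (S.cL j), apply_ite (S.cW j), apply_ite (S.cQ j)]
    · rw [bV_iC2, S.hC2x (S.Q k)]
      simp [cL_L, cL_W, cL_Q, cL_C1, cL_C2, cW_L, cW_W, cW_Q, cW_C1, cW_C2, cQ_L, cQ_W, cQ_Q, cQ_C1, cQ_C2,
        apply_ite (S.cL j), apply_ite (S.cW j), apply_ite (S.cQ j)]
    · rw [bV_iQ, S.hQQ p k]
      simp [cL_L, cL_W, cL_Q, cL_C1, cL_C2, cW_L, cW_W, cW_Q, cW_C1, cW_C2, cQ_L, cQ_W, cQ_Q, cQ_C1, cQ_C2,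
        apply_ite (S.cL j), apply_ite (S.cW j), apply_ite (S.cQ j)]
  have h2 := DFunLike.congr_fun h v
  simpa only [LinearMap.comp_apply, LinearMap.flip_apply, LinearMap.smul_apply,
    smul_eq_mul, LinearMap.zero_apply] using h2

lemma cL_Lbr (m j : ℤ) (v : V) :
    S.cL j (S.br (S.L m) v) = (2*(m:ℂ) - (j:ℂ)) * S.cL (j-m) v := by
  have h : (S.cL j).comp (S.br (S.L m)) = (2*(m:ℂ) - (j:ℂ)) • S.cL (j-m) := by
    apply S.bV.ext; intro i
    simp only [LinearMap.comp_apply, LinearMap.flip_apply, LinearMap.smul_apply,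
      smul_eq_mul, LinearMap.zero_apply]
    obtain ((p|p)|(u|u))|p := i
    · rw [bV_iL, S.hLL m p]
      simp only [map_add, map_smul, cL_L, cL_W, cL_Q, cL_C1, cL_C2, cW_L, cW_W, cW_Q, cW_C1, cW_C2, cQ_L, cQ_W, cQ_Q, cQ_C1, cQ_C2, smul_eq_mul, mul_zero, mul_one, add_zero, zero_add]
      rcases eq_or_ne p (j - m) with h1 | h1
      · subst h1
        rw [if_pos (show m + (j - m) = j by omega), if_pos rfl] <;> (push_cast; ring1)
      · rw [if_neg (show ¬(m + p = j) by omega), if_neg h1] <;> ring1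
    · rw [bV_iW, S.hLW m p]
      simp [cL_L, cL_W, cL_Q, cL_C1, cL_C2, cW_L, cW_W, cW_Q, cW_C1, cW_C2, cQ_L, cQ_W, cQ_Q, cQ_C1, cQ_C2,
        apply_ite (S.cL j), apply_ite (S.cW j), apply_ite (S.cQ j)]
    · rw [bV_iC1, S.br_vC1 (S.L m)]
      simp [cL_L, cL_W, cL_Q, cL_C1, cL_C2, cW_L, cW_W, cW_Q, cW_C1, cW_C2, cQ_L, cQ_W, cQ_Q, cQ_C1, cQ_C2,
        apply_ite (S.cL j), apply_ite (S.cW j), apply_ite (S.cQ j)]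
    · rw [bV_iC2, S.br_vC2 (S.L m)]
      simp [cL_L, cL_W, cL_Q, cL_C1, cL_C2, cW_L, cW_W, cW_Q, cW_C1, cW_C2, cQ_L, cQ_W, cQ_Q, cQ_C1, cQ_C2,
        apply_ite (S.cL j), apply_ite (S.cW j), apply_ite (S.cQ j)]
    · rw [bV_iQ, S.hLQ m p]
      simp [cL_L, cL_W, cL_Q, cL_C1, cL_C2, cW_L, cW_W, cW_Q, cW_C1, cW_C2, cQ_L, cQ_W, cQ_Q, cQ_C1, cQ_C2,
        apply_ite (S.cL j), apply_ite (S.cW j), apply_ite (S.cQ j)]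
  have h2 := DFunLike.congr_fun h v
  simpa only [LinearMap.comp_apply, LinearMap.flip_apply, LinearMap.smul_apply,
    smul_eq_mul, LinearMap.zero_apply] using h2

lemma cW_Lbr (m j : ℤ) (v : V) :
    S.cW j (S.br (S.L m) v) = (2*(m:ℂ) - (j:ℂ)) * S.cW (j-m) v := by
  have h : (S.cW j).comp (S.br (S.L m)) = (2*(m:ℂ) - (j:ℂ)) • S.cW (j-m) := by
    apply S.bV.ext; intro i
    simp only [LinearMap.comp_apply, LinearMap.flip_apply, LinearMap.smul_apply,
      smul_eq_mul, LinearMap.zero_apply]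
    obtain ((p|p)|(u|u))|p := i
    · rw [bV_iL, S.hLL m p]
      simp [cL_L, cL_W, cL_Q, cL_C1, cL_C2, cW_L, cW_W, cW_Q, cW_C1, cW_C2, cQ_L, cQ_W, cQ_Q, cQ_C1, cQ_C2,
        apply_ite (S.cL j), apply_ite (S.cW j), apply_ite (S.cQ j)]
    · rw [bV_iW, S.hLW m p]
      simp only [map_add, map_smul, cL_L, cL_W, cL_Q, cL_C1, cL_C2, cW_L, cW_W, cW_Q, cW_C1, cW_C2, cQ_L, cQ_W, cQ_Q, cQ_C1, cQ_C2, smul_eq_mul, mul_zero, mul_one, add_zero, zero_add]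
      rcases eq_or_ne p (j - m) with h1 | h1
      · subst h1
        rw [if_pos (show m + (j - m) = j by omega), if_pos rfl] <;> (push_cast; ring1)
      · rw [if_neg (show ¬(m + p = j) by omega), if_neg h1] <;> ring1
    · rw [bV_iC1, S.br_vC1 (S.L m)]
      simp [cL_L, cL_W, cL_Q, cL_C1, cL_C2, cW_L, cW_W, cW_Q, cW_C1, cW_C2, cQ_L, cQ_W, cQ_Q, cQ_C1, cQ_C2,
        apply_ite (S.cL j), apply_ite (S.cW j), apply_ite (S.cQ j)]
    · rw [bV_iC2, S.br_vC2 (S.L m)]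
      simp [cL_L, cL_W, cL_Q, cL_C1, cL_C2, cW_L, cW_W, cW_Q, cW_C1, cW_C2, cQ_L, cQ_W, cQ_Q, cQ_C1, cQ_C2,
        apply_ite (S.cL j), apply_ite (S.cW j), apply_ite (S.cQ j)]
    · rw [bV_iQ, S.hLQ m p]
      simp [cL_L, cL_W, cL_Q, cL_C1, cL_C2, cW_L, cW_W, cW_Q, cW_C1, cW_C2, cQ_L, cQ_W, cQ_Q, cQ_C1, cQ_C2,
        apply_ite (S.cL j), apply_ite (S.cW j), apply_ite (S.cQ j)]
  have h2 := DFunLike.congr_fun h v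
  simpa only [LinearMap.comp_apply, LinearMap.flip_apply, LinearMap.smul_apply,
    smul_eq_mul, LinearMap.zero_apply] using h2

lemma cQ_Lbr (m j : ℤ) (v : V) :
    S.cQ j (S.br (S.L m) v) = (3*(m:ℂ)/2 - (j:ℂ) - 1/2) * S.cQ (j-m) v := by
  have h : (S.cQ j).comp (S.br (S.L m)) = (3*(m:ℂ)/2 - (j:ℂ) - 1/2) • S.cQ (j-m) := by
    apply S.bV.ext; intro i
    simp only [LinearMap.comp_apply, LinearMap.flip_apply, LinearMap.smul_apply,
      smul_eq_mul, LinearMap.zero_apply]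
    obtain ((p|p)|(u|u))|p := i
    · rw [bV_iL, S.hLL m p]
      simp [cL_L, cL_W, cL_Q, cL_C1, cL_C2, cW_L, cW_W, cW_Q, cW_C1, cW_C2, cQ_L, cQ_W, cQ_Q, cQ_C1, cQ_C2,
        apply_ite (S.cL j), apply_ite (S.cW j), apply_ite (S.cQ j)]
    · rw [bV_iW, S.hLW m p]
      simp [cL_L, cL_W, cL_Q, cL_C1, cL_C2, cW_L, cW_W, cW_Q, cW_C1, cW_C2, cQ_L, cQ_W, cQ_Q, cQ_C1, cQ_C2,
        apply_ite (S.cL j), apply_ite (S.cW j), apply_ite (S.cQ j)]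
    · rw [bV_iC1, S.br_vC1 (S.L m)]
      simp [cL_L, cL_W, cL_Q, cL_C1, cL_C2, cW_L, cW_W, cW_Q, cW_C1, cW_C2, cQ_L, cQ_W, cQ_Q, cQ_C1, cQ_C2,
        apply_ite (S.cL j), apply_ite (S.cW j), apply_ite (S.cQ j)]
    · rw [bV_iC2, S.br_vC2 (S.L m)]
      simp [cL_L, cL_W, cL_Q, cL_C1, cL_C2, cW_L, cW_W, cW_Q, cW_C1, cW_C2, cQ_L, cQ_W, cQ_Q, cQ_C1, cQ_C2,
        apply_ite (S.cL j), apply_ite (S.cW j), apply_ite (S.cQ j)]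
    · rw [bV_iQ, S.hLQ m p]
      simp only [map_add, map_smul, cL_L, cL_W, cL_Q, cL_C1, cL_C2, cW_L, cW_W, cW_Q, cW_C1, cW_C2, cQ_L, cQ_W, cQ_Q, cQ_C1, cQ_C2, smul_eq_mul, mul_zero, mul_one, add_zero, zero_add]
      rcases eq_or_ne p (j - m) with h1 | h1
      · subst h1
        rw [if_pos (show m + (j - m) = j by omega), if_pos rfl] <;> (push_cast; ring1)
      · rw [if_neg (show ¬(m + p = j) by omega), if_neg h1] <;> ring1
  have h2 := DFunLike.congr_fun h v
  simpa only [LinearMap.comp_apply, LinearMap.flip_apply, LinearMap.smul_apply,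
    smul_eq_mul, LinearMap.zero_apply] using h2

lemma cL_Wbr (m j : ℤ) (v : V) :
    S.cL j (S.br (S.W m) v) = 0 := by
  have h : (S.cL j).comp (S.br (S.W m)) = 0 := by
    apply S.bV.ext; intro i
    simp only [LinearMap.comp_apply, LinearMap.flip_apply, LinearMap.smul_apply,
      smul_eq_mul, LinearMap.zero_apply]
    obtain ((p|p)|(u|u))|p := i
    · rw [bV_iL, S.br_WL m p]
      simp [cL_L, cL_W, cL_Q, cL_C1, cL_C2, cW_L, cW_W, cW_Q, cW_C1, cW_C2, cQ_L, cQ_W, cQ_Q, cQ_C1, cQ_C2,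
        apply_ite (S.cL j), apply_ite (S.cW j), apply_ite (S.cQ j)]
    · rw [bV_iW, S.hWW m p]
      simp [cL_L, cL_W, cL_Q, cL_C1, cL_C2, cW_L, cW_W, cW_Q, cW_C1, cW_C2, cQ_L, cQ_W, cQ_Q, cQ_C1, cQ_C2,
        apply_ite (S.cL j), apply_ite (S.cW j), apply_ite (S.cQ j)]
    · rw [bV_iC1, S.br_vC1 (S.W m)]
      simp [cL_L, cL_W, cL_Q, cL_C1, cL_C2, cW_L, cW_W, cW_Q, cW_C1, cW_C2, cQ_L, cQ_W, cQ_Q, cQ_C1, cQ_C2,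
        apply_ite (S.cL j), apply_ite (S.cW j), apply_ite (S.cQ j)]
    · rw [bV_iC2, S.br_vC2 (S.W m)]
      simp [cL_L, cL_W, cL_Q, cL_C1, cL_C2, cW_L, cW_W, cW_Q, cW_C1, cW_C2, cQ_L, cQ_W, cQ_Q, cQ_C1, cQ_C2,
        apply_ite (S.cL j), apply_ite (S.cW j), apply_ite (S.cQ j)]
    · rw [bV_iQ, S.hWQ m p]
      simp [cL_L, cL_W, cL_Q, cL_C1, cL_C2, cW_L, cW_W, cW_Q, cW_C1, cW_C2, cQ_L, cQ_W, cQ_Q, cQ_C1, cQ_C2,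
        apply_ite (S.cL j), apply_ite (S.cW j), apply_ite (S.cQ j)]
  have h2 := DFunLike.congr_fun h v
  simpa only [LinearMap.comp_apply, LinearMap.flip_apply, LinearMap.smul_apply,
    smul_eq_mul, LinearMap.zero_apply] using h2

lemma cW_Wbr (m j : ℤ) (v : V) :
    S.cW j (S.br (S.W m) v) = (2*(m:ℂ) - (j:ℂ)) * S.cL (j-m) v := by
  have h : (S.cW j).comp (S.br (S.W m)) = (2*(m:ℂ) - (j:ℂ)) • S.cL (j-m) := by
    apply S.bV.ext; intro i
    simp only [LinearMap.comp_apply, LinearMap.flip_apply, LinearMap.smul_apply,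
      smul_eq_mul, LinearMap.zero_apply]
    obtain ((p|p)|(u|u))|p := i
    · rw [bV_iL, S.br_WL m p]
      simp only [map_add, map_smul, cL_L, cL_W, cL_Q, cL_C1, cL_C2, cW_L, cW_W, cW_Q, cW_C1, cW_C2, cQ_L, cQ_W, cQ_Q, cQ_C1, cQ_C2, smul_eq_mul, mul_zero, mul_one, add_zero, zero_add]
      rcases eq_or_ne p (j - m) with h1 | h1
      · subst h1
        rw [if_pos (show m + (j - m) = j by omega), if_pos rfl] <;> (push_cast; ring1)
      · rw [if_neg (show ¬(m + p = j) by omega), if_neg h1] <;> ring1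
    · rw [bV_iW, S.hWW m p]
      simp [cL_L, cL_W, cL_Q, cL_C1, cL_C2, cW_L, cW_W, cW_Q, cW_C1, cW_C2, cQ_L, cQ_W, cQ_Q, cQ_C1, cQ_C2,
        apply_ite (S.cL j), apply_ite (S.cW j), apply_ite (S.cQ j)]
    · rw [bV_iC1, S.br_vC1 (S.W m)]
      simp [cL_L, cL_W, cL_Q, cL_C1, cL_C2, cW_L, cW_W, cW_Q, cW_C1, cW_C2, cQ_L, cQ_W, cQ_Q, cQ_C1, cQ_C2,
        apply_ite (S.cL j), apply_ite (S.cW j), apply_ite (S.cQ j)]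
    · rw [bV_iC2, S.br_vC2 (S.W m)]
      simp [cL_L, cL_W, cL_Q, cL_C1, cL_C2, cW_L, cW_W, cW_Q, cW_C1, cW_C2, cQ_L, cQ_W, cQ_Q, cQ_C1, cQ_C2,
        apply_ite (S.cL j), apply_ite (S.cW j), apply_ite (S.cQ j)]
    · rw [bV_iQ, S.hWQ m p]
      simp [cL_L, cL_W, cL_Q, cL_C1, cL_C2, cW_L, cW_W, cW_Q, cW_C1, cW_C2, cQ_L, cQ_W, cQ_Q, cQ_C1, cQ_C2,
        apply_ite (S.cL j), apply_ite (S.cW j), apply_ite (S.cQ j)]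
  have h2 := DFunLike.congr_fun h v
  simpa only [LinearMap.comp_apply, LinearMap.flip_apply, LinearMap.smul_apply,
    smul_eq_mul, LinearMap.zero_apply] using h2

lemma cQ_Wbr (m j : ℤ) (v : V) :
    S.cQ j (S.br (S.W m) v) = 0 := by
  have h : (S.cQ j).comp (S.br (S.W m)) = 0 := by
    apply S.bV.ext; intro i
    simp only [LinearMap.comp_apply, LinearMap.flip_apply, LinearMap.smul_apply,
      smul_eq_mul, LinearMap.zero_apply]
    obtain ((p|p)|(u|u))|p := i
    · rw [bV_iL, S.br_WL m p]
      simp [cL_L, cL_W, cL_Q, cL_C1, cL_C2, cW_L, cW_W, cW_Q, cW_C1, cW_C2, cQ_L, cQ_W, cQ_Q, cQ_C1, cQ_C2,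
        apply_ite (S.cL j), apply_ite (S.cW j), apply_ite (S.cQ j)]
    · rw [bV_iW, S.hWW m p]
      simp [cL_L, cL_W, cL_Q, cL_C1, cL_C2, cW_L, cW_W, cW_Q, cW_C1, cW_C2, cQ_L, cQ_W, cQ_Q, cQ_C1, cQ_C2,
        apply_ite (S.cL j), apply_ite (S.cW j), apply_ite (S.cQ j)]
    · rw [bV_iC1, S.br_vC1 (S.W m)]
      simp [cL_L, cL_W, cL_Q, cL_C1, cL_C2, cW_L, cW_W, cW_Q, cW_C1, cW_C2, cQ_L, cQ_W, cQ_Q, cQ_C1, cQ_C2,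
        apply_ite (S.cL j), apply_ite (S.cW j), apply_ite (S.cQ j)]
    · rw [bV_iC2, S.br_vC2 (S.W m)]
      simp [cL_L, cL_W, cL_Q, cL_C1, cL_C2, cW_L, cW_W, cW_Q, cW_C1, cW_C2, cQ_L, cQ_W, cQ_Q, cQ_C1, cQ_C2,
        apply_ite (S.cL j), apply_ite (S.cW j), apply_ite (S.cQ j)]
    · rw [bV_iQ, S.hWQ m p]
      simp [cL_L, cL_W, cL_Q, cL_C1, cL_C2, cW_L, cW_W, cW_Q, cW_C1, cW_C2, cQ_L, cQ_W, cQ_Q, cQ_C1, cQ_C2,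
        apply_ite (S.cL j), apply_ite (S.cW j), apply_ite (S.cQ j)]
  have h2 := DFunLike.congr_fun h v
  simpa only [LinearMap.comp_apply, LinearMap.flip_apply, LinearMap.smul_apply,
    smul_eq_mul, LinearMap.zero_apply] using h2

lemma cL_Qbr (k j : ℤ) (v : V) :
    S.cL j (S.br (S.Q k) v) = 0 := by
  have h : (S.cL j).comp (S.br (S.Q k)) = 0 := by
    apply S.bV.ext; intro i
    simp only [LinearMap.comp_apply, LinearMap.flip_apply, LinearMap.smul_apply,
      smul_eq_mul, LinearMap.zero_apply]
    obtain ((p|p)|(u|u))|p := i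
    · rw [bV_iL, S.br_QL k p]
      simp [cL_L, cL_W, cL_Q, cL_C1, cL_C2, cW_L, cW_W, cW_Q, cW_C1, cW_C2, cQ_L, cQ_W, cQ_Q, cQ_C1, cQ_C2,
        apply_ite (S.cL j), apply_ite (S.cW j), apply_ite (S.cQ j)]
    · rw [bV_iW, S.br_QW k p]
      simp [cL_L, cL_W, cL_Q, cL_C1, cL_C2, cW_L, cW_W, cW_Q, cW_C1, cW_C2, cQ_L, cQ_W, cQ_Q, cQ_C1, cQ_C2,
        apply_ite (S.cL j), apply_ite (S.cW j), apply_ite (S.cQ j)]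
    · rw [bV_iC1, S.br_vC1 (S.Q k)]
      simp [cL_L, cL_W, cL_Q, cL_C1, cL_C2, cW_L, cW_W, cW_Q, cW_C1, cW_C2, cQ_L, cQ_W, cQ_Q, cQ_C1, cQ_C2,
        apply_ite (S.cL j), apply_ite (S.cW j), apply_ite (S.cQ j)]
    · rw [bV_iC2, S.br_vC2 (S.Q k)]
      simp [cL_L, cL_W, cL_Q, cL_C1, cL_C2, cW_L, cW_W, cW_Q, cW_C1, cW_C2, cQ_L, cQ_W, cQ_Q, cQ_C1, cQ_C2,
        apply_ite (S.cL j), apply_ite (S.cW j), apply_ite (S.cQ j)]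
    · rw [bV_iQ, S.hQQ k p]
      simp [cL_L, cL_W, cL_Q, cL_C1, cL_C2, cW_L, cW_W, cW_Q, cW_C1, cW_C2, cQ_L, cQ_W, cQ_Q, cQ_C1, cQ_C2,
        apply_ite (S.cL j), apply_ite (S.cW j), apply_ite (S.cQ j)]
  have h2 := DFunLike.congr_fun h v
  simpa only [LinearMap.comp_apply, LinearMap.flip_apply, LinearMap.smul_apply,
    smul_eq_mul, LinearMap.zero_apply] using h2

lemma cW_Qbr (k j : ℤ) (v : V) :
    S.cW j (S.br (S.Q k) v) = (2:ℂ) * S.cQ (j-k-1) v := by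
  have h : (S.cW j).comp (S.br (S.Q k)) = (2:ℂ) • S.cQ (j-k-1) := by
    apply S.bV.ext; intro i
    simp only [LinearMap.comp_apply, LinearMap.flip_apply, LinearMap.smul_apply,
      smul_eq_mul, LinearMap.zero_apply]
    obtain ((p|p)|(u|u))|p := i
    · rw [bV_iL, S.br_QL k p]
      simp [cL_L, cL_W, cL_Q, cL_C1, cL_C2, cW_L, cW_W, cW_Q, cW_C1, cW_C2, cQ_L, cQ_W, cQ_Q, cQ_C1, cQ_C2,
        apply_ite (S.cL j), apply_ite (S.cW j), apply_ite (S.cQ j)]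
    · rw [bV_iW, S.br_QW k p]
      simp [cL_L, cL_W, cL_Q, cL_C1, cL_C2, cW_L, cW_W, cW_Q, cW_C1, cW_C2, cQ_L, cQ_W, cQ_Q, cQ_C1, cQ_C2,
        apply_ite (S.cL j), apply_ite (S.cW j), apply_ite (S.cQ j)]
    · rw [bV_iC1, S.br_vC1 (S.Q k)]
      simp [cL_L, cL_W, cL_Q, cL_C1, cL_C2, cW_L, cW_W, cW_Q, cW_C1, cW_C2, cQ_L, cQ_W, cQ_Q, cQ_C1, cQ_C2,
        apply_ite (S.cL j), apply_ite (S.cW j), apply_ite (S.cQ j)]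
    · rw [bV_iC2, S.br_vC2 (S.Q k)]
      simp [cL_L, cL_W, cL_Q, cL_C1, cL_C2, cW_L, cW_W, cW_Q, cW_C1, cW_C2, cQ_L, cQ_W, cQ_Q, cQ_C1, cQ_C2,
        apply_ite (S.cL j), apply_ite (S.cW j), apply_ite (S.cQ j)]
    · rw [bV_iQ, S.hQQ k p]
      simp only [map_add, map_smul, cL_L, cL_W, cL_Q, cL_C1, cL_C2, cW_L, cW_W, cW_Q, cW_C1, cW_C2, cQ_L, cQ_W, cQ_Q, cQ_C1, cQ_C2, smul_eq_mul, mul_zero, mul_one, add_zero, zero_add]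
      rcases eq_or_ne p (j - k - 1) with h1 | h1
      · subst h1
        rw [if_pos (show k + (j - k - 1) + 1 = j by omega), if_pos rfl] <;> (push_cast; ring1)
      · rw [if_neg (show ¬(k + p + 1 = j) by omega), if_neg h1] <;> ring1
  have h2 := DFunLike.congr_fun h v
  simpa only [LinearMap.comp_apply, LinearMap.flip_apply, LinearMap.smul_apply,
    smul_eq_mul, LinearMap.zero_apply] using h2

lemma cQ_Qbr (k j : ℤ) (v : V) :
    S.cQ j (S.br (S.Q k) v) = ((k:ℂ) + 1/2 - ((j:ℂ)-(k:ℂ))/2) * S.cL (j-k) v := by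
  have h : (S.cQ j).comp (S.br (S.Q k)) = ((k:ℂ) + 1/2 - ((j:ℂ)-(k:ℂ))/2) • S.cL (j-k) := by
    apply S.bV.ext; intro i
    simp only [LinearMap.comp_apply, LinearMap.flip_apply, LinearMap.smul_apply,
      smul_eq_mul, LinearMap.zero_apply]
    obtain ((p|p)|(u|u))|p := i
    · rw [bV_iL, S.br_QL k p]
      simp only [map_add, map_smul, cL_L, cL_W, cL_Q, cL_C1, cL_C2, cW_L, cW_W, cW_Q, cW_C1, cW_C2, cQ_L, cQ_W, cQ_Q, cQ_C1, cQ_C2, smul_eq_mul, mul_zero, mul_one, add_zero, zero_add]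
      rcases eq_or_ne p (j - k) with h1 | h1
      · subst h1
        rw [if_pos (show (j - k) + k = j by omega), if_pos rfl] <;> (push_cast; ring1)
      · rw [if_neg (show ¬(p + k = j) by omega), if_neg h1] <;> ring1
    · rw [bV_iW, S.br_QW k p]
      simp [cL_L, cL_W, cL_Q, cL_C1, cL_C2, cW_L, cW_W, cW_Q, cW_C1, cW_C2, cQ_L, cQ_W, cQ_Q, cQ_C1, cQ_C2,
        apply_ite (S.cL j), apply_ite (S.cW j), apply_ite (S.cQ j)]
    · rw [bV_iC1, S.br_vC1 (S.Q k)]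
      simp [cL_L, cL_W, cL_Q, cL_C1, cL_C2, cW_L, cW_W, cW_Q, cW_C1, cW_C2, cQ_L, cQ_W, cQ_Q, cQ_C1, cQ_C2,
        apply_ite (S.cL j), apply_ite (S.cW j), apply_ite (S.cQ j)]
    · rw [bV_iC2, S.br_vC2 (S.Q k)]
      simp [cL_L, cL_W, cL_Q, cL_C1, cL_C2, cW_L, cW_W, cW_Q, cW_C1, cW_C2, cQ_L, cQ_W, cQ_Q, cQ_C1, cQ_C2,
        apply_ite (S.cL j), apply_ite (S.cW j), apply_ite (S.cQ j)]
    · rw [bV_iQ, S.hQQ k p]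
      simp [cL_L, cL_W, cL_Q, cL_C1, cL_C2, cW_L, cW_W, cW_Q, cW_C1, cW_C2, cQ_L, cQ_W, cQ_Q, cQ_C1, cQ_C2,
        apply_ite (S.cL j), apply_ite (S.cW j), apply_ite (S.cQ j)]
  have h2 := DFunLike.congr_fun h v
  simpa only [LinearMap.comp_apply, LinearMap.flip_apply, LinearMap.smul_apply,
    smul_eq_mul, LinearMap.zero_apply] using h2

lemma addLin (d : ℤ → ℂ) (h : ∀ m n : ℤ, m ≠ n → d (m+n) = d m + d n) :
    ∀ m : ℤ, d m = (m : ℂ) * d 1 := by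
  have h0 : d 0 = 0 := by
    have t := h 0 1 (by omega); norm_num at t; linear_combination t
  have hneg : ∀ m : ℤ, m ≠ 0 → d (-m) = - d m := by
    intro m hm
    have t := h m (-m) (by omega)
    rw [show m + -m = 0 by ring, h0] at t
    linear_combination -t
  have h2 : d 2 = 2 * d 1 := by
    have t1 := h 1 4 (by omega); have t2 := h 2 3 (by omega); have t3 := h 1 3 (by omega)
    norm_num at t1 t2 t3
    linear_combination t1 - t2 + t3
  have hnat : ∀ n : ℕ, d (n : ℤ) = ((n : ℤ) : ℂ) * d 1 := by
    intro n
    induction n with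
    | zero => simpa using h0
    | succ k ih =>
      rcases eq_or_ne k 1 with hk | hk
      · subst hk; norm_num; linear_combination h2
      · have t := h k 1 (by exact_mod_cast hk)
        push_cast at t ih ⊢
        rw [t, ih]; ring
  intro m
  rcases le_or_gt 0 m with hm | hm
  · obtain ⟨n, rfl⟩ := Int.eq_ofNat_of_zero_le hm
    exact hnat n
  · have t := hneg m (by omega)
    have hmn : (((-m).toNat : ℤ)) = -m := by omega
    have t2 := hnat (-m).toNat
    rw [hmn] at t2
    rw [t2] at t
    push_cast at t ⊢
    linear_combination t

lemma recDiag (F : ℤ → ℤ → ℂ)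
    (hF : ∀ m n j : ℤ, ((m:ℂ) - n) * F (m+n) j =
      ((j:ℂ) - 2*n) * F m (j-n) + (2*(m:ℂ) - j) * F n (j-m)) :
    ∀ m : ℤ, F m m = (m:ℂ) * F 1 1 := by
  have hadd : ∀ m n : ℤ, m ≠ n → F (m+n) (m+n) = F m m + F n n := by
    intro m n hmn
    have t := hF m n (m+n)
    rw [show m + n - n = m by ring, show m + n - m = n by ring] at t
    have hne : ((m:ℂ) - n) ≠ 0 := by
      intro hc
      have h2 : ((m - n : ℤ) : ℂ) = 0 := by push_cast; linear_combination hc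
      exact absurd (by exact_mod_cast h2) (show (m - n : ℤ) ≠ 0 by omega)
    have t2 : ((m:ℂ) - n) * F (m+n) (m+n) = ((m:ℂ) - n) * (F m m + F n n) := by
      push_cast at t ⊢; linear_combination t
    exact mul_left_cancel₀ hne t2
  exact addLin (fun m => F m m) hadd

lemma keyz {c : ℤ} {z : ℂ} (h : ((c:ℤ):ℂ) * z = 0) (hc : c ≠ 0) : z = 0 :=
  (mul_eq_zero.mp h).resolve_left (Int.cast_ne_zero.mpr hc)

lemma symm0 (X : ℤ → ℤ → ℤ → ℂ)
    (hX : ∀ a b j : ℤ, ((j:ℂ) - b) * X a b j = ((j:ℂ) - 2*b) * X a 0 (j-b))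
    (hsym : ∀ a b j : ℤ, X a b j = X b a j)
    (hdiag : ∀ a b : ℤ, X a b b = (b:ℂ) * X a 1 1) :
    ∀ a b j : ℤ, X a b j = 0 := by
  have hT0 : ∀ a : ℤ, X a 0 0 = 0 := by
    intro a; have := hdiag a 0; simpa using this
  have h00 : ∀ s : ℤ, X 0 0 s = 0 := by
    intro s
    rcases eq_or_ne s 0 with h | h
    · rw [h]; exact hT0 0
    · have t := hX 0 (-s) 0
      rw [hsym 0 (-s) 0, hT0 (-s), mul_zero, show (0:ℤ) - -s = s by ring] at t
      have t2 : ((2*s : ℤ):ℂ) * X 0 0 s = 0 := by push_cast at t ⊢; linear_combination -t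
      exact keyz t2 (by omega)
  have hT : ∀ a j : ℤ, j ≠ a → X a 0 j = 0 := by
    intro a j hj
    have t := hX 0 a j
    rw [h00 (j-a), mul_zero] at t
    have t2 : ((j - a : ℤ):ℂ) * X 0 a j = 0 := by push_cast at t ⊢; linear_combination t
    rw [hsym a 0 j]
    exact keyz t2 (by omega)
  have hg0 : X 0 1 1 = 0 := by
    have t1 := hX 1 2 3
    have t2 := hX 2 1 3
    have hs := hsym 1 2 3
    have d1 : X 1 0 1 = X 0 1 1 := hsym 1 0 1
    have d2 : X 2 0 2 = 2 * X 0 1 1 := by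
      rw [hsym 2 0 2, hdiag 0 2]; norm_num
    norm_num at t1 t2
    rw [d1] at t1
    rw [hs] at t1
    have t3 : ((4:ℤ):ℂ) * X 0 1 1 = 0 := by push_cast; linear_combination 2*t1 - t2 - d2
    exact keyz t3 (by omega)
  have hTall : ∀ a j : ℤ, X a 0 j = 0 := by
    intro a j
    rcases eq_or_ne j a with h | h
    · rw [h, hsym a 0 a, hdiag 0 a, hg0, mul_zero]
    · exact hT a j h
  have hg1 : X 1 1 1 = 0 := by
    have t := hX 2 1 2
    norm_num at t
    have d := hdiag 1 2
    have t3 : ((2:ℤ):ℂ) * X 1 1 1 = 0 := by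
      have e : X 1 2 2 = 0 := by rw [hsym 1 2 2, t]
      rw [e] at d
      push_cast at d ⊢
      linear_combination -d
    exact keyz t3 (by omega)
  have hgall : ∀ a : ℤ, X a 1 1 = 0 := by
    intro a
    rcases eq_or_ne a 1 with h | h
    · rw [h]; exact hg1
    · rw [hsym a 1 1]
      have t := hX 1 a 1
      rw [hTall 1 (1-a), mul_zero] at t
      have t2 : ((1 - a : ℤ):ℂ) * X 1 a 1 = 0 := by push_cast at t ⊢; linear_combination t
      exact keyz t2 (by omega)
  intro a b j
  rcases eq_or_ne j b with h | h
  · rw [h, hdiag a b, hgall a, mul_zero]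
  · have t := hX a b j
    rw [hTall a (j-b), mul_zero] at t
    have t2 : ((j - b : ℤ):ℂ) * X a b j = 0 := by push_cast at t ⊢; linear_combination t
    exact keyz t2 (by omega)

lemma symmQh (X : ℤ → ℤ → ℤ → ℂ)
    (hX : ∀ a b j : ℤ, ((j:ℂ) + 1/2 - b) * X a b j = ((j:ℂ) + 1/2 - 3*(b:ℂ)/2) * X a 0 (j-b))
    (hsym : ∀ a b j : ℤ, X a b j = X b a j) :
    ∀ a b j : ℤ, X a b j = 0 := by
  have starQ : ∀ a b j : ℤ, ((j:ℂ) + 1/2 - a) * (((j:ℂ) + 1/2 - 3*(b:ℂ)/2) * X a 0 (j-b)) =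
      ((j:ℂ) + 1/2 - b) * (((j:ℂ) + 1/2 - 3*(a:ℂ)/2) * X b 0 (j-a)) := by
    intro a b j
    have t1 := hX a b j
    have t2 := hX b a j
    rw [hsym a b j] at t1
    linear_combination ((j:ℂ) + 1/2 - b) * t2 - ((j:ℂ) + 1/2 - a) * t1
  have Q0 : ∀ b j : ℤ, ((j:ℂ) + 1/2 - b) * X b 0 j = ((j:ℂ) + 1/2 - 3*(b:ℂ)/2) * X 0 0 (j-b) := by
    intro b j
    have t := starQ 0 b j
    have hne : ((j:ℂ) + 1/2) ≠ 0 := by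
      intro hc
      have h2 : ((2*j + 1 : ℤ) : ℂ) = 0 := by push_cast; linear_combination 2*hc
      exact absurd (by exact_mod_cast h2) (show (2*j + 1 : ℤ) ≠ 0 by omega)
    apply mul_left_cancel₀ hne
    rw [show j - (0:ℤ) = j by ring] at t
    push_cast at t ⊢
    linear_combination -t
  have R00 : ∀ s : ℤ, X 0 0 s = 0 := by
    intro s
    have m1 := starQ 2 1 (s+3)
    have q2 := Q0 2 (s+2)
    have q1 := Q0 1 (s+1)
    rw [show s + 3 - 1 = s + 2 by ring, show s + 3 - 2 = s + 1 by ring] at m1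
    rw [show s + 2 - 2 = s by ring] at q2
    rw [show s + 1 - 1 = s by ring] at q1
    have key : ((3:ℤ):ℂ) * X 0 0 s = 0 := by
      push_cast at m1 q2 q1 ⊢
      linear_combination (-2*((s:ℂ)+1/2)) * m1 + (2*((s:ℂ)+3/2)*((s:ℂ)+2)) * q2
        - (2*((s:ℂ)+5/2)*((s:ℂ)+1/2)) * q1
    exact keyz key (by omega)
  have Rall : ∀ b j : ℤ, X b 0 j = 0 := by
    intro b j
    have t := Q0 b j
    rw [R00 (j-b), mul_zero] at t
    have t2 : ((2*j + 1 - 2*b : ℤ):ℂ) * X b 0 j = 0 := by push_cast at t ⊢; linear_combination 2*t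
    exact keyz t2 (by omega)
  intro a b j
  have t := hX a b j
  rw [Rall a (j-b), mul_zero] at t
  have t2 : ((2*j + 1 - 2*b : ℤ):ℂ) * X a b j = 0 := by push_cast at t ⊢; linear_combination 2*t
  exact keyz t2 (by omega)

lemma if_0n (n : ℤ) : (if 0 + n = 0 then ((0:ℤ):ℂ)^3/12 - ((0:ℤ):ℂ)/12 else 0) = 0 := by
  split_ifs <;> norm_num

/-- E1 (y = W m, z = Q k), cQ comp : A^L = 0 -/
lemma SA1 (p : ZMod 2) (x : V) (hx : x ∈ S.Vsub p) (m j : ℤ) :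
    S.cL j (S.circ x (S.W m)) = 0 := by
  set k : ℤ := if j = 1 then 1 else 0 with hk
  have hkj : j - 2*k - 1 ≠ 0 := by rcases eq_or_ne j 1 with h | h <;> simp [hk, h] <;> omega
  have e1 := S.hpost2 p 0 1 x hx (S.W m) (S.memW m) (S.Q k) (S.memQ k)
  rw [S.hWQ m k, map_zero] at e1
  have e2 := congrArg (S.cQ (j+k)) e1
  simp only [map_add, map_smul, map_zero, cQ_brQ, cQ_Wbr, smul_eq_mul, mul_zero, add_zero,
    show j + k - k = j by ring] at e2
  have key : ((j - 2*k - 1 : ℤ):ℂ) * S.cL j (S.circ x (S.W m)) = 0 := by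
    push_cast at e2 ⊢; linear_combination -2*e2
  exact keyz key hkj

/-- E3 (y = W m, z = L 0), cQ comp : A^Q = 0 -/
lemma SA2 (p : ZMod 2) (x : V) (hx : x ∈ S.Vsub p) (m j : ℤ) :
    S.cQ j (S.circ x (S.W m)) = 0 := by
  have e1 := S.hpost2 p 0 0 x hx (S.W m) (S.memW m) (S.L 0) (S.memL 0)
  rw [S.br_WL m 0, mul_zero, S.sgn_zero, one_smul] at e1
  have hz : (if m + 0 = 0 then ((m:ℂ)^3 - m)/12 else 0) = 0 := by
    split_ifs with h
    · have : m = 0 := by omega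
      subst this; norm_num
    · rfl
  rw [hz, zero_smul, add_zero, map_smul] at e1
  have e2 := congrArg (S.cQ j) e1
  simp only [map_add, map_smul, cQ_brL, cQ_Wbr, smul_eq_mul, add_zero, add_zero,
    show m + 0 = m by ring, show j - (0:ℤ) = j by ring] at e2
  have key : ((2*m - 2*j - 1 : ℤ):ℂ) * S.cQ j (S.circ x (S.W m)) = 0 := by
    push_cast at e2 ⊢; linear_combination 2*e2
  exact keyz key (by omega)

/-- E3 (y = W m, z = L 0), cW comp : (m-j) A^W_j = (2m-j) cL_{j-m}(u) -/
lemma SA3 (p : ZMod 2) (x : V) (hx : x ∈ S.Vsub p) (m j : ℤ) :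
    ((m:ℂ) - j) * S.cW j (S.circ x (S.W m)) =
      (2*(m:ℂ) - j) * S.cL (j-m) (S.circ x (S.L 0)) := by
  have e1 := S.hpost2 p 0 0 x hx (S.W m) (S.memW m) (S.L 0) (S.memL 0)
  rw [S.br_WL m 0, mul_zero, S.sgn_zero, one_smul] at e1
  have hz : (if m + 0 = 0 then ((m:ℂ)^3 - m)/12 else 0) = 0 := by
    split_ifs with h
    · have : m = 0 := by omega
      subst this; norm_num
    · rfl
  rw [hz, zero_smul, add_zero, map_smul] at e1
  have e2 := congrArg (S.cW j) e1
  simp only [map_add, map_smul, cW_brL, cW_Wbr, smul_eq_mul,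
    show m + 0 = m by ring, show j - (0:ℤ) = j by ring] at e2
  push_cast at e2 ⊢
  linear_combination e2

/-- E2' (y = Q k, z = W n) : B^L = 0 -/
lemma SA4 (p : ZMod 2) (x : V) (hx : x ∈ S.Vsub p) (k j : ℤ) :
    S.cL j (S.circ x (S.Q k)) = 0 := by
  set n : ℤ := if j = 1 then 2 else 1 with hn
  have hnj : j - n ≠ 0 := by rcases eq_or_ne j 1 with h | h <;> simp [hn, h] <;> omega
  have e1 := S.hpost2 p 1 0 x hx (S.Q k) (S.memQ k) (S.W n) (S.memW n)
  rw [S.br_QW k n, map_zero] at e1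
  have e2 := congrArg (S.cW (j+n)) e1
  simp only [map_add, map_smul, map_zero, cW_brW, cW_Qbr, smul_eq_mul,
    SA2 S p x hx, mul_zero, add_zero, show j + n - n = j by ring] at e2
  have key : ((j - n : ℤ):ℂ) * S.cL j (S.circ x (S.Q k)) = 0 := by
    push_cast at e2 ⊢; linear_combination -e2
  exact keyz key hnj

/-- E6 (y = L 0, z = L n), cL comp -/
lemma SA5 (p : ZMod 2) (x : V) (hx : x ∈ S.Vsub p) (n j : ℤ) :
    ((j:ℂ) - n) * S.cL j (S.circ x (S.L n)) =
      ((j:ℂ) - 2*n) * S.cL (j-n) (S.circ x (S.L 0)) := by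
  have e1 := S.hpost2 p 0 0 x hx (S.L 0) (S.memL 0) (S.L n) (S.memL n)
  rw [S.hLL 0 n, mul_zero, S.sgn_zero, one_smul] at e1
  have hz : (if 0 + n = 0 then (((0:ℤ):ℂ)^3 - ((0:ℤ):ℂ))/12 else 0) = 0 := by
    split_ifs <;> norm_num
  rw [show ((0:ℤ):ℂ)^3 - ((0:ℤ):ℂ) = ((0:ℤ):ℂ)^3 - ((0:ℤ):ℂ) from rfl] at e1
  rw [hz, zero_smul, add_zero, map_smul] at e1
  have e2 := congrArg (S.cL j) e1
  simp only [map_add, map_smul, cL_brL, cL_Lbr, smul_eq_mul, zero_add,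
    show j - (0:ℤ) = j by ring] at e2
  push_cast at e2 ⊢
  linear_combination e2

/-- E6 (y = L 0, z = L n), cW comp -/
lemma SA6 (p : ZMod 2) (x : V) (hx : x ∈ S.Vsub p) (n j : ℤ) :
    ((j:ℂ) - n) * S.cW j (S.circ x (S.L n)) =
      ((j:ℂ) - 2*n) * S.cW (j-n) (S.circ x (S.L 0)) := by
  have e1 := S.hpost2 p 0 0 x hx (S.L 0) (S.memL 0) (S.L n) (S.memL n)
  rw [S.hLL 0 n, mul_zero, S.sgn_zero, one_smul] at e1
  have hz : (if 0 + n = 0 then (((0:ℤ):ℂ)^3 - ((0:ℤ):ℂ))/12 else 0) = 0 := by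
    split_ifs <;> norm_num
  rw [hz, zero_smul, add_zero, map_smul] at e1
  have e2 := congrArg (S.cW j) e1
  simp only [map_add, map_smul, cW_brL, cW_Lbr, smul_eq_mul, zero_add,
    show j - (0:ℤ) = j by ring] at e2
  push_cast at e2 ⊢
  linear_combination e2

/-- E6 (y = L 0, z = L n), cQ comp : GQ2 -/
lemma SA7 (p : ZMod 2) (x : V) (hx : x ∈ S.Vsub p) (n j : ℤ) :
    ((j:ℂ) + 1/2 - n) * S.cQ j (S.circ x (S.L n)) =
      ((j:ℂ) + 1/2 - 3*(n:ℂ)/2) * S.cQ (j-n) (S.circ x (S.L 0)) := by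
  have e1 := S.hpost2 p 0 0 x hx (S.L 0) (S.memL 0) (S.L n) (S.memL n)
  rw [S.hLL 0 n, mul_zero, S.sgn_zero, one_smul] at e1
  have hz : (if 0 + n = 0 then (((0:ℤ):ℂ)^3 - ((0:ℤ):ℂ))/12 else 0) = 0 := by
    split_ifs <;> norm_num
  rw [hz, zero_smul, add_zero, map_smul] at e1
  have e2 := congrArg (S.cQ j) e1
  simp only [map_add, map_smul, cQ_brL, cQ_Lbr, smul_eq_mul, zero_add,
    show j - (0:ℤ) = j by ring] at e2
  push_cast at e2 ⊢
  linear_combination e2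

/-- E6 (y = L 0, z = L 1) at cL 1 : cL 0 (x∘L 0) = 0 -/
lemma SA8 (p : ZMod 2) (x : V) (hx : x ∈ S.Vsub p) :
    S.cL 0 (S.circ x (S.L 0)) = 0 := by
  have t := SA5 S p x hx 1 1
  norm_num at t
  linear_combination t

lemma SA9 (p : ZMod 2) (x : V) (hx : x ∈ S.Vsub p) :
    S.cW 0 (S.circ x (S.L 0)) = 0 := by
  have t := SA6 S p x hx 1 1
  norm_num at t
  linear_combination t

/-- diagonal of cL of x∘L : needs x∘C1 = 0 -/
lemma SA10 (p : ZMod 2) (x : V) (hx : x ∈ S.Vsub p) (h1 : S.circ x S.C1 = 0) (m : ℤ) :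
    S.cL m (S.circ x (S.L m)) = (m:ℂ) * S.cL 1 (S.circ x (S.L 1)) := by
  have hF : ∀ m n j : ℤ, ((m:ℂ) - n) * S.cL j (S.circ x (S.L (m+n))) =
      ((j:ℂ) - 2*n) * S.cL (j-n) (S.circ x (S.L m)) +
      (2*(m:ℂ) - j) * S.cL (j-m) (S.circ x (S.L n)) := by
    intro m n j
    have e1 := S.hpost2 p 0 0 x hx (S.L m) (S.memL m) (S.L n) (S.memL n)
    rw [S.hLL m n, mul_zero, S.sgn_zero, one_smul, map_add, map_smul, map_smul, h1,
      smul_zero, add_zero] at e1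
    have e2 := congrArg (S.cL j) e1
    simp only [map_add, map_smul, cL_brL, cL_Lbr, smul_eq_mul] at e2
    exact e2
  exact recDiag (fun m j => S.cL j (S.circ x (S.L m))) hF m

lemma SA11 (p : ZMod 2) (x : V) (hx : x ∈ S.Vsub p) (h1 : S.circ x S.C1 = 0) (m : ℤ) :
    S.cW m (S.circ x (S.L m)) = (m:ℂ) * S.cW 1 (S.circ x (S.L 1)) := by
  have hF : ∀ m n j : ℤ, ((m:ℂ) - n) * S.cW j (S.circ x (S.L (m+n))) =
      ((j:ℂ) - 2*n) * S.cW (j-n) (S.circ x (S.L m)) +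
      (2*(m:ℂ) - j) * S.cW (j-m) (S.circ x (S.L n)) := by
    intro m n j
    have e1 := S.hpost2 p 0 0 x hx (S.L m) (S.memL m) (S.L n) (S.memL n)
    rw [S.hLL m n, mul_zero, S.sgn_zero, one_smul, map_add, map_smul, map_smul, h1,
      smul_zero, add_zero] at e1
    have e2 := congrArg (S.cW j) e1
    simp only [map_add, map_smul, cW_brL, cW_Lbr, smul_eq_mul] at e2
    exact e2
  exact recDiag (fun m j => S.cW j (S.circ x (S.L m))) hF m

/-- diagonal of cW of x∘W -/
lemma SA12 (p : ZMod 2) (x : V) (hx : x ∈ S.Vsub p) (h1 : S.circ x S.C1 = 0) (m : ℤ) :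
    S.cW m (S.circ x (S.W m)) =
      S.cW 0 (S.circ x (S.W 0)) + (m:ℂ) * S.cL 1 (S.circ x (S.L 1)) := by
  rcases eq_or_ne m 0 with hm | hm
  · subst hm; norm_num
  have e1 := S.hpost2 p 0 0 x hx (S.L m) (S.memL m) (S.W 0) (S.memW 0)
  rw [S.hLW m 0, mul_zero, S.sgn_zero, one_smul] at e1
  have hz : (if m + 0 = 0 then ((m:ℂ)^3 - m)/12 else 0) = 0 := by
    split_ifs with h
    · have : m = 0 := by omega
      subst this; norm_num
    · rfl
  rw [hz, zero_smul, add_zero, map_smul] at e1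
  have e2 := congrArg (S.cW m) e1
  simp only [map_add, map_smul, cW_brW, cW_Lbr, smul_eq_mul, sub_self,
    show m + 0 = m by ring, show m - (0:ℤ) = m by ring] at e2
  rw [SA10 S p x hx h1 m] at e2
  have key : ((m:ℤ):ℂ) * (S.cW m (S.circ x (S.W m)) -
      (S.cW 0 (S.circ x (S.W 0)) + (m:ℂ) * S.cL 1 (S.circ x (S.L 1)))) = 0 := by
    push_cast at e2 ⊢; linear_combination e2
  have := keyz key hm
  linear_combination this

/-- E8 (y = L 0, z = Q k), cQ comp : BQrel -/
lemma SA13 (p : ZMod 2) (x : V) (hx : x ∈ S.Vsub p) (k j : ℤ) :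
    ((j:ℂ) - k) * S.cQ j (S.circ x (S.Q k)) =
      (((j:ℂ) - 3*k - 1)/2) * S.cL (j-k) (S.circ x (S.L 0)) := by
  have e1 := S.hpost2 p 0 1 x hx (S.L 0) (S.memL 0) (S.Q k) (S.memQ k)
  rw [S.hLQ 0 k, mul_zero, S.sgn_zero, one_smul, map_smul] at e1
  have e2 := congrArg (S.cQ j) e1
  simp only [map_add, map_smul, cQ_brQ, cQ_Lbr, smul_eq_mul, zero_add,
    show j - (0:ℤ) = j by ring] at e2
  push_cast at e2 ⊢
  linear_combination e2

/-- E8 (y = L 0, z = Q k), cW comp : BW0 -/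
lemma SA15 (p : ZMod 2) (x : V) (hx : x ∈ S.Vsub p) (k j : ℤ) :
    ((j:ℂ) - k - 1/2) * S.cW j (S.circ x (S.Q k)) =
      2 * S.cQ (j-k-1) (S.circ x (S.L 0)) := by
  have e1 := S.hpost2 p 0 1 x hx (S.L 0) (S.memL 0) (S.Q k) (S.memQ k)
  rw [S.hLQ 0 k, mul_zero, S.sgn_zero, one_smul, map_smul] at e1
  have e2 := congrArg (S.cW j) e1
  simp only [map_add, map_smul, cW_brQ, cW_Lbr, smul_eq_mul, zero_add,
    show j - (0:ℤ) = j by ring] at e2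
  push_cast at e2 ⊢
  linear_combination e2

/-- diagonal of cQ of x∘Q -/
lemma SA14 (p : ZMod 2) (x : V) (hx : x ∈ S.Vsub p) (h1 : S.circ x S.C1 = 0) (k : ℤ) :
    S.cQ k (S.circ x (S.Q k)) =
      S.cQ 0 (S.circ x (S.Q 0)) + (k:ℂ) * S.cL 1 (S.circ x (S.L 1)) := by
  have key : ∀ m k : ℤ, m ≠ 2*k + 1 →
      S.cQ (m+k) (S.circ x (S.Q (m+k))) = (m:ℂ) * S.cL 1 (S.circ x (S.L 1)) +
        S.cQ k (S.circ x (S.Q k)) := by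
    intro m k hmk
    have e1 := S.hpost2 p 0 1 x hx (S.L m) (S.memL m) (S.Q k) (S.memQ k)
    rw [S.hLQ m k, mul_zero, S.sgn_zero, one_smul, map_smul] at e1
    have e2 := congrArg (S.cQ (m+k)) e1
    simp only [map_add, map_smul, cQ_brQ, cQ_Lbr, smul_eq_mul,
      add_sub_cancel_right, add_sub_cancel_left] at e2
    rw [SA10 S p x hx h1 m] at e2
    have key2 : ((m - 2*k - 1 : ℤ):ℂ) * (S.cQ (m+k) (S.circ x (S.Q (m+k))) -
        ((m:ℂ) * S.cL 1 (S.circ x (S.L 1)) + S.cQ k (S.circ x (S.Q k)))) = 0 := by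
      push_cast at e2 ⊢; linear_combination 2*e2
    have := keyz key2 (by omega)
    linear_combination this
  have hk0 : ∀ k : ℤ, k ≠ 1 → S.cQ k (S.circ x (S.Q k)) =
      S.cQ 0 (S.circ x (S.Q 0)) + (k:ℂ) * S.cL 1 (S.circ x (S.L 1)) := by
    intro k hk
    have := key k 0 (by omega)
    rw [show k + 0 = k by ring] at this
    linear_combination this
  rcases eq_or_ne k 1 with hk | hk
  · subst hk
    have hm1 := hk0 (-1) (by omega)
    have h21 := key 2 (-1) (by omega)
    rw [show (2:ℤ) + -1 = 1 by ring] at h21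
    rw [hm1] at h21
    push_cast at h21 ⊢
    linear_combination h21
  · exact hk0 k hk

/-- odd x : g = 0 -/
lemma SA16 (x : V) (hx : x ∈ S.Vsub 1) (h1 : S.circ x S.C1 = 0) :
    S.cL 1 (S.circ x (S.L 1)) = 0 := by
  have e1 := S.hpost2 1 1 0 x hx (S.Q 0) (S.memQ 0) (S.L 2) (S.memL 2)
  rw [S.br_QL 0 2, mul_one, S.sgn_one, map_smul] at e1
  have e2 := congrArg (S.cQ 2) e1
  simp only [map_add, map_smul, cQ_brL, cQ_Qbr, smul_eq_mul,
    show (2:ℤ) + 0 = 2 by ring, show (2:ℤ) - (2:ℤ) = 0 by ring,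
    show (2:ℤ) - 0 = 2 by ring] at e2
  rw [SA10 S 1 x hx h1 2, SA14 S 1 x hx h1 2, SA14 S 1 x hx h1 0] at e2
  have key : ((2:ℤ):ℂ) * S.cL 1 (S.circ x (S.L 1)) = 0 := by
    push_cast at e2 ⊢; linear_combination -e2
  exact keyz key (by omega)

/-- odd x : A^W diagonal = 0 -/
lemma SA17 (x : V) (hx : x ∈ S.Vsub 1) (h1 : S.circ x S.C1 = 0) (m : ℤ) :
    S.cW m (S.circ x (S.W m)) = 0 := by
  have e1 := S.hpost2 1 1 1 x hx (S.Q (m-1)) (S.memQ (m-1)) (S.Q 0) (S.memQ 0)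
  rw [S.hQQ (m-1) 0, mul_one, S.sgn_one] at e1
  have hz : (if m - 1 + 0 + 1 = 0 then ((((m-1:ℤ)):ℂ) + 1/2)^2/3 - (1/4:ℂ)/3 else 0) = 0 := by
    split_ifs with h
    · have : m = 0 := by omega
      subst this; push_cast; ring
    · rfl
  have hz2 : (if m - 1 + 0 + 1 = 0 then (((((m-1:ℤ)):ℂ) + 1/2)^2 - 1/4)/3 else 0) = 0 := by
    split_ifs with h
    · have : m = 0 := by omega
      subst this; push_cast; ring
    · rfl
  rw [hz2, zero_smul, add_zero, map_smul, show m - 1 + 0 + 1 = m by ring] at e1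
  have e2 := congrArg (S.cW m) e1
  simp only [map_add, map_smul, cW_brQ, cW_Qbr, smul_eq_mul,
    show m - 0 - 1 = m - 1 by ring, show m - (m-1) - 1 = 0 by ring] at e2
  rw [SA14 S 1 x hx h1 (m-1), SA14 S 1 x hx h1 0, SA16 S x hx h1] at e2
  have key : ((2:ℤ):ℂ) * S.cW m (S.circ x (S.W m)) = 0 := by
    push_cast at e2 ⊢; linear_combination e2
  exact keyz key (by omega)

lemma sgn_ne (q : ZMod 2) : S.sgn q ≠ 0 := by
  rw [S.hsgn]; split_ifs <;> norm_num

lemma elemZ (v : V) (hL : ∀ j, S.cL j v = 0) (hW : ∀ j, S.cW j v = 0)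
    (hQ : ∀ j, S.cQ j v = 0) :
    v = S.cC1 v • S.C1 + S.cC2 v • S.C2 := by
  apply S.bV.ext_elem
  intro i
  have hco : ∀ w : V, S.bV.repr w i = S.bV.coord i w := fun w => rfl
  rw [hco, hco, map_add, map_smul, map_smul, smul_eq_mul, smul_eq_mul]
  obtain ((q|q)|(u|u))|q := i
  · show S.cL q v = S.cC1 v * S.cL q S.C1 + S.cC2 v * S.cL q S.C2
    rw [hL q, cL_C1, cL_C2]; ring
  · show S.cW q v = S.cC1 v * S.cW q S.C1 + S.cC2 v * S.cW q S.C2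
    rw [hW q, cW_C1, cW_C2]; ring
  · show S.cC1 v = S.cC1 v * S.cC1 S.C1 + S.cC2 v * S.cC1 S.C2
    rw [cC1_C1, cC1_C2]; ring
  · show S.cC2 v = S.cC1 v * S.cC2 S.C1 + S.cC2 v * S.cC2 S.C2
    rw [cC2_C1, cC2_C2]; ring
  · show S.cQ q v = S.cC1 v * S.cQ q S.C1 + S.cC2 v * S.cQ q S.C2
    rw [hQ q, cQ_C1, cQ_C2]; ring

lemma spanBr (i : I) : ∃ (c₁ c₂ : ℂ) (a₁ b₁ a₂ b₂ : I),
    S.bV i = c₁ • S.br (S.bV a₁) (S.bV b₁) + c₂ • S.br (S.bV a₂) (S.bV b₂) := by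
  obtain ((m|m)|(u|u))|k := i
  · -- L m
    rcases eq_or_ne m 0 with hm | hm
    · refine ⟨1/2, 0, iL 1, iL (-1), iC1, iC1, ?_⟩
      subst hm
      rw [show (Sum.inl (Sum.inl (Sum.inl (0:ℤ))) : I) = iL 0 from rfl]
      simp only [iL, iC1, bV_iL, bV_iC1, S.hLL 1 (-1), S.hC1x]
      norm_num [smul_smul]
    · refine ⟨(m:ℂ)⁻¹, 0, iL m, iL 0, iC1, iC1, ?_⟩
      rw [show (Sum.inl (Sum.inl (Sum.inl m)) : I) = iL m from rfl]
      simp only [iL, iC1, bV_iL, bV_iC1, S.hLL m 0, S.hC1x]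
      rw [if_neg (by omega : ¬ m + 0 = 0)]
      rw [show m + 0 = m by ring]
      rw [zero_smul, add_zero, zero_smul, add_zero, smul_smul]
      rw [show (m:ℂ)⁻¹ * ((m:ℂ) - ((0:ℤ):ℂ)) = 1 by
        push_cast
        rw [sub_zero]
        exact inv_mul_cancel₀ (Int.cast_ne_zero.mpr hm)]
      rw [one_smul]
  · -- W m
    rcases eq_or_ne m 0 with hm | hm
    · refine ⟨1/2, 0, iL 1, iW (-1), iC1, iC1, ?_⟩
      subst hm
      rw [show (Sum.inl (Sum.inl (Sum.inr (0:ℤ))) : I) = iW 0 from rfl]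
      simp only [iL, iW, iC1, bV_iL, bV_iW, bV_iC1, S.hLW 1 (-1), S.hC1x]
      norm_num [smul_smul]
    · refine ⟨(m:ℂ)⁻¹, 0, iL m, iW 0, iC1, iC1, ?_⟩
      rw [show (Sum.inl (Sum.inl (Sum.inr m)) : I) = iW m from rfl]
      simp only [iL, iW, iC1, bV_iL, bV_iW, bV_iC1, S.hLW m 0, S.hC1x]
      rw [if_neg (by omega : ¬ m + 0 = 0)]
      rw [show m + 0 = m by ring]
      rw [zero_smul, add_zero, zero_smul, add_zero, smul_smul]
      rw [show (m:ℂ)⁻¹ * ((m:ℂ) - ((0:ℤ):ℂ)) = 1 by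
        push_cast
        rw [sub_zero]
        exact inv_mul_cancel₀ (Int.cast_ne_zero.mpr hm)]
      rw [one_smul]
  · -- C1
    refine ⟨2, -4, iL 2, iL (-2), iL 1, iL (-1), ?_⟩
    rw [show (Sum.inl (Sum.inr (Sum.inl u)) : I) = iC1 from rfl]
    simp only [iL, iC1, bV_iL, bV_iC1, S.hLL 2 (-2), S.hLL 1 (-1)]
    norm_num
    match_scalars <;> norm_num
  · -- C2
    refine ⟨2, -4, iL 2, iW (-2), iL 1, iW (-1), ?_⟩
    rw [show (Sum.inl (Sum.inr (Sum.inr u)) : I) = iC2 from rfl]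
    simp only [iL, iW, iC2, bV_iL, bV_iW, bV_iC2, S.hLW 2 (-2), S.hLW 1 (-1)]
    norm_num
    match_scalars <;> norm_num
  · -- Q k
    have hne : (((0:ℤ):ℂ))/2 - ((k:ℂ) + 1/2) ≠ 0 := by
      intro hc
      have h2 : ((2*k + 1 : ℤ) : ℂ) = 0 := by push_cast; linear_combination -2*hc
      exact absurd (by exact_mod_cast h2) (show (2*k+1 : ℤ) ≠ 0 by omega)
    refine ⟨((((0:ℤ):ℂ))/2 - ((k:ℂ) + 1/2))⁻¹, 0, iL 0, iQ k, iC1, iC1, ?_⟩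
    rw [show (Sum.inr k : I) = iQ k from rfl]
    simp only [iL, iQ, iC1, bV_iL, bV_iQ, bV_iC1, S.hLQ 0 k, S.hC1x]
    rw [zero_smul, add_zero, smul_smul, show (0:ℤ) + k = k by ring]
    rw [inv_mul_cancel₀ hne, one_smul]

/-- Phase 1 : components of x ∘ C1 and x ∘ C2 vanish -/
lemma zC (p : ZMod 2) (x : V) (hx : x ∈ S.Vsub p) (c : V) (hc : c ∈ S.Vsub 0)
    (hbc : ∀ y : V, S.br y c = 0) :
    (∀ j, S.cL j (S.circ x c) = 0) ∧ (∀ j, S.cW j (S.circ x c) = 0) ∧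
      (∀ j, S.cQ j (S.circ x c) = 0) := by
  have hbr : ∀ (q : ZMod 2) (y : V), y ∈ S.Vsub q → S.br y (S.circ x c) = 0 := by
    intro q y hy
    have e1 := S.hpost2 p q 0 x hx y hy c hc
    rw [hbc y, map_zero, hbc (S.circ x y), zero_add] at e1
    have := e1.symm
    rcases smul_eq_zero.mp this with h | h
    · exact absurd h (sgn_ne S _)
    · exact h
  have hL0 := hbr 0 (S.L 0) (S.memL 0)
  have hL1 := hbr 0 (S.L 1) (S.memL 1)
  refine ⟨?_, ?_, ?_⟩
  · intro j
    rcases eq_or_ne j 0 with hj | hj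
    · subst hj
      have t := congrArg (S.cL 1) hL1
      rw [map_zero, cL_Lbr] at t
      have key : ((1:ℤ):ℂ) * S.cL (1-1) (S.circ x c) = 0 := by
        push_cast at t ⊢; linear_combination t
      have := keyz key (by omega)
      rw [show (1:ℤ) - 1 = 0 by ring] at this
      exact this
    · have t := congrArg (S.cL j) hL0
      rw [map_zero, cL_Lbr] at t
      have key : ((-j:ℤ):ℂ) * S.cL (j-0) (S.circ x c) = 0 := by
        push_cast at t ⊢; linear_combination t
      have := keyz key (by omega)
      rw [show j - 0 = j by ring] at this
      exact this
  · intro j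
    rcases eq_or_ne j 0 with hj | hj
    · subst hj
      have t := congrArg (S.cW 1) hL1
      rw [map_zero, cW_Lbr] at t
      have key : ((1:ℤ):ℂ) * S.cW (1-1) (S.circ x c) = 0 := by
        push_cast at t ⊢; linear_combination t
      have := keyz key (by omega)
      rw [show (1:ℤ) - 1 = 0 by ring] at this
      exact this
    · have t := congrArg (S.cW j) hL0
      rw [map_zero, cW_Lbr] at t
      have key : ((-j:ℤ):ℂ) * S.cW (j-0) (S.circ x c) = 0 := by
        push_cast at t ⊢; linear_combination t
      have := keyz key (by omega)
      rw [show j - 0 = j by ring] at this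
      exact this
  · intro j
    have t := congrArg (S.cQ j) hL0
    rw [map_zero, cQ_Lbr] at t
    have key : ((-2*j - 1:ℤ):ℂ) * S.cQ (j-0) (S.circ x c) = 0 := by
      push_cast at t ⊢; linear_combination 2*t
    have := keyz key (by omega)
    rw [show j - 0 = j by ring] at this
    exact this

lemma circC1 (p : ZMod 2) (x : V) (hx : x ∈ S.Vsub p) :
    ∃ α β : ℂ, S.circ x S.C1 = α • S.C1 + β • S.C2 := by
  obtain ⟨h1, h2, h3⟩ := zC S p x hx S.C1 S.memC1 S.br_vC1
  exact ⟨_, _, elemZ S _ h1 h2 h3⟩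

lemma circC2 (p : ZMod 2) (x : V) (hx : x ∈ S.Vsub p) :
    ∃ α β : ℂ, S.circ x S.C2 = α • S.C1 + β • S.C2 := by
  obtain ⟨h1, h2, h3⟩ := zC S p x hx S.C2 S.memC2 S.br_vC2
  exact ⟨_, _, elemZ S _ h1 h2 h3⟩

/-- Phase 2 : C1 ∘ v = 0 -/
lemma Cz (c : V) (hc : c ∈ S.Vsub 0)
    (hcomc : ∀ (q : ZMod 2) (y : V), y ∈ S.Vsub q → S.circ c y = S.circ y c)
    (hzc : ∀ (q : ZMod 2) (y : V), y ∈ S.Vsub q → ∃ α β : ℂ, S.circ y c = α • S.C1 + β • S.C2) :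
    ∀ v : V, S.circ c v = 0 := by
  have key : ∀ a b : I, S.circ c (S.br (S.bV a) (S.bV b)) = 0 := by
    intro a b
    have e1 := S.hpost2 0 (par a) (par b) c hc (S.bV a) (memb S a) (S.bV b) (memb S b)
    obtain ⟨α, β, hab⟩ := hzc (par a) (S.bV a) (memb S a)
    obtain ⟨α', β', hab'⟩ := hzc (par b) (S.bV b) (memb S b)
    rw [hcomc (par a) (S.bV a) (memb S a), hab] at e1
    rw [hcomc (par b) (S.bV b) (memb S b), hab'] at e1
    rw [e1]
    have hz1 : S.br (α • S.C1 + β • S.C2) (S.bV b) = 0 := by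
      simp only [map_add, map_smul, LinearMap.add_apply, LinearMap.smul_apply,
        S.hC1x, S.hC2x, smul_zero, add_zero]
    have hz2 : S.br (S.bV a) (α' • S.C1 + β' • S.C2) = 0 := by
      rw [map_add, map_smul, map_smul, S.br_vC1, S.br_vC2]
      simp only [smul_zero, add_zero]
    rw [hz1, hz2, smul_zero, add_zero]
  have keyb : ∀ i : I, S.circ c (S.bV i) = 0 := by
    intro i
    obtain ⟨c₁, c₂, a₁, b₁, a₂, b₂, hrep⟩ := spanBr S i
    rw [hrep, map_add, map_smul, map_smul, key, key, smul_zero, smul_zero, add_zero]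
  intro v
  have : (S.circ c) = 0 := S.bV.ext fun i => by rw [keyb i]; rfl
  rw [this]; rfl

lemma C1z : ∀ v : V, S.circ S.C1 v = 0 := by
  apply Cz S S.C1 S.memC1
  · intro q y hy
    have := S.hcomm 0 q S.C1 S.memC1 y hy
    rw [this]
    have := S.hcomm q 0 y hy S.C1 S.memC1
    rw [this, mul_zero, zero_mul, S.sgn_zero, one_smul, one_smul]
  · intro q y hy
    exact circC1 S q y hy

lemma C2z : ∀ v : V, S.circ S.C2 v = 0 := by
  apply Cz S S.C2 S.memC2
  · intro q y hy
    have := S.hcomm 0 q S.C2 S.memC2 y hy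
    rw [this]
    have := S.hcomm q 0 y hy S.C2 S.memC2
    rw [this, mul_zero, zero_mul, S.sgn_zero, one_smul, one_smul]
  · intro q y hy
    exact circC2 S q y hy

lemma xC1z (v : V) : S.circ v S.C1 = 0 := by
  have h : (S.circ.flip S.C1) = 0 := by
    apply S.bV.ext
    intro i
    have := S.hcomm (par i) 0 (S.bV i) (memb S i) S.C1 S.memC1
    simp only [LinearMap.flip_apply, LinearMap.zero_apply]
    rw [this, mul_zero, S.sgn_zero, one_smul, C1z]
  exact DFunLike.congr_fun h v

lemma xC2z (v : V) : S.circ v S.C2 = 0 := by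
  have h : (S.circ.flip S.C2) = 0 := by
    apply S.bV.ext
    intro i
    have := S.hcomm (par i) 0 (S.bV i) (memb S i) S.C2 S.memC2
    simp only [LinearMap.flip_apply, LinearMap.zero_apply]
    rw [this, mul_zero, S.sgn_zero, one_smul, C2z]
  exact DFunLike.congr_fun h v

lemma comm00 (x y : V) (hx : x ∈ S.Vsub 0) (hy : y ∈ S.Vsub 0) :
    S.circ x y = S.circ y x := by
  have := S.hcomm 0 0 x hx y hy
  rwa [mul_zero, S.sgn_zero, one_smul] at this

lemma comm01 (x y : V) (hx : x ∈ S.Vsub 0) (hy : y ∈ S.Vsub 1) :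
    S.circ x y = S.circ y x := by
  have := S.hcomm 0 1 x hx y hy
  rwa [zero_mul, S.sgn_zero, one_smul] at this

lemma comm10 (x y : V) (hx : x ∈ S.Vsub 1) (hy : y ∈ S.Vsub 0) :
    S.circ x y = S.circ y x := by
  have := S.hcomm 1 0 x hx y hy
  rwa [mul_zero, S.sgn_zero, one_smul] at this

lemma comm11 (x y : V) (hx : x ∈ S.Vsub 1) (hy : y ∈ S.Vsub 1) :
    S.circ x y = - S.circ y x := by
  have := S.hcomm 1 1 x hx y hy
  rwa [mul_one, S.sgn_one, neg_one_smul] at this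

lemma BLLa (a b j : ℤ) : S.cL j (S.circ (S.L a) (S.L b)) = 0 := by
  have hsym : ∀ a b j : ℤ, S.cL j (S.circ (S.L a) (S.L b)) = S.cL j (S.circ (S.L b) (S.L a)) :=
    fun a b j => by rw [comm00 S _ _ (S.memL a) (S.memL b)]
  exact symm0 (fun a b j => S.cL j (S.circ (S.L a) (S.L b)))
    (fun a b j => SA5 S 0 (S.L a) (S.memL a) b j)
    hsym
    (fun a b => SA10 S 0 (S.L a) (S.memL a) (xC1z S (S.L a)) b) a b j

lemma BLLb (a b j : ℤ) : S.cW j (S.circ (S.L a) (S.L b)) = 0 := by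
  have hsym : ∀ a b j : ℤ, S.cW j (S.circ (S.L a) (S.L b)) = S.cW j (S.circ (S.L b) (S.L a)) :=
    fun a b j => by rw [comm00 S _ _ (S.memL a) (S.memL b)]
  exact symm0 (fun a b j => S.cW j (S.circ (S.L a) (S.L b)))
    (fun a b j => SA6 S 0 (S.L a) (S.memL a) b j)
    hsym
    (fun a b => SA11 S 0 (S.L a) (S.memL a) (xC1z S (S.L a)) b) a b j

lemma BLLc (a b j : ℤ) : S.cQ j (S.circ (S.L a) (S.L b)) = 0 := by
  have hsym : ∀ a b j : ℤ, S.cQ j (S.circ (S.L a) (S.L b)) = S.cQ j (S.circ (S.L b) (S.L a)) :=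
    fun a b j => by rw [comm00 S _ _ (S.memL a) (S.memL b)]
  exact symmQh (fun a b j => S.cQ j (S.circ (S.L a) (S.L b)))
    (fun a b j => SA7 S 0 (S.L a) (S.memL a) b j)
    hsym a b j

lemma offW_LW (a m j : ℤ) (hj : j ≠ m) : S.cW j (S.circ (S.L a) (S.W m)) = 0 := by
  have t := SA3 S 0 (S.L a) (S.memL a) m j
  rw [BLLa, mul_zero] at t
  have key : ((m - j : ℤ):ℂ) * S.cW j (S.circ (S.L a) (S.W m)) = 0 := by
    push_cast at t ⊢; linear_combination t
  exact keyz key (by omega)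

lemma offQ_LQ (a k j : ℤ) (hj : j ≠ k) : S.cQ j (S.circ (S.L a) (S.Q k)) = 0 := by
  have t := SA13 S 0 (S.L a) (S.memL a) k j
  rw [BLLa, mul_zero] at t
  have key : ((j - k : ℤ):ℂ) * S.cQ j (S.circ (S.L a) (S.Q k)) = 0 := by
    push_cast at t ⊢; linear_combination t
  exact keyz key (by omega)

lemma zW_LQ (a k j : ℤ) : S.cW j (S.circ (S.L a) (S.Q k)) = 0 := by
  have t := SA15 S 0 (S.L a) (S.memL a) k j
  rw [BLLc, mul_zero] at t
  have key : ((2*j - 2*k - 1 : ℤ):ℂ) * S.cW j (S.circ (S.L a) (S.Q k)) = 0 := by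
    push_cast at t ⊢; linear_combination 2*t
  exact keyz key (by omega)

lemma TW0 (m s : ℤ) : S.cL s (S.circ (S.W m) (S.L 0)) = 0 := by
  have t := SA5 S 0 (S.W m) (S.memW m) (s+1) (2*s+1)
  rw [comm00 S _ _ (S.memW m) (S.memL (s+1)),
    SA1 S 0 (S.L (s+1)) (S.memL (s+1)) m (2*s+1), mul_zero,
    show 2*s+1 - (s+1) = s by ring] at t
  have key : ((1:ℤ):ℂ) * S.cL s (S.circ (S.W m) (S.L 0)) = 0 := by
    push_cast at t ⊢; linear_combination t
  exact keyz key (by omega)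

lemma SW0 (m s : ℤ) : S.cW s (S.circ (S.W m) (S.L 0)) = 0 := by
  rcases eq_or_ne (2*s+1) m with hm | hm
  · have t := SA6 S 0 (S.W m) (S.memW m) (s+2) (2*s+2)
    rw [comm00 S _ _ (S.memW m) (S.memL (s+2)),
      offW_LW S (s+2) m (2*s+2) (by omega), mul_zero,
      show 2*s+2 - (s+2) = s by ring] at t
    have key : ((2:ℤ):ℂ) * S.cW s (S.circ (S.W m) (S.L 0)) = 0 := by
      push_cast at t ⊢; linear_combination t
    exact keyz key (by omega)
  · have t := SA6 S 0 (S.W m) (S.memW m) (s+1) (2*s+1)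
    rw [comm00 S _ _ (S.memW m) (S.memL (s+1)),
      offW_LW S (s+1) m (2*s+1) hm, mul_zero,
      show 2*s+1 - (s+1) = s by ring] at t
    have key : ((1:ℤ):ℂ) * S.cW s (S.circ (S.W m) (S.L 0)) = 0 := by
      push_cast at t ⊢; linear_combination t
    exact keyz key (by omega)

lemma RW0 (m s : ℤ) : S.cQ s (S.circ (S.W m) (S.L 0)) = 0 := by
  have t := SA7 S 0 (S.W m) (S.memW m) (2*s) (3*s)
  rw [comm00 S _ _ (S.memW m) (S.memL (2*s)),
    SA2 S 0 (S.L (2*s)) (S.memL (2*s)) m (3*s), mul_zero,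
    show 3*s - 2*s = s by ring] at t
  have key : ((1:ℤ):ℂ) * S.cQ s (S.circ (S.W m) (S.L 0)) = 0 := by
    push_cast at t ⊢; linear_combination -2*t
  exact keyz key (by omega)

lemma gW0 (m : ℤ) : S.cL 1 (S.circ (S.W m) (S.L 1)) = 0 := by
  rw [comm00 S _ _ (S.memW m) (S.memL 1)]
  exact SA1 S 0 (S.L 1) (S.memL 1) m 1

lemma wW0 (m : ℤ) : S.cW 1 (S.circ (S.W m) (S.L 1)) = 0 := by
  rcases eq_or_ne m 1 with hm | hm
  · subst hm
    have t := SA11 S 0 (S.W 1) (S.memW 1) (xC1z S (S.W 1)) 2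
    rw [comm00 S _ _ (S.memW 1) (S.memL 2), offW_LW S 2 1 2 (by omega)] at t
    have key : ((2:ℤ):ℂ) * S.cW 1 (S.circ (S.W 1) (S.L 1)) = 0 := by
      push_cast at t ⊢; linear_combination -t
    exact keyz key (by omega)
  · rw [comm00 S _ _ (S.memW m) (S.memL 1)]
    exact offW_LW S 1 m 1 (Ne.symm hm)

lemma a0L (a : ℤ) : S.cW 0 (S.circ (S.L a) (S.W 0)) = 0 := by
  have t := SA12 S 0 (S.L a) (S.memL a) (xC1z S (S.L a)) (a+1)
  rw [BLLa] at t
  have hval : S.cW (a+1) (S.circ (S.L a) (S.W (a+1))) = 0 := by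
    rw [comm00 S _ _ (S.memL a) (S.memW (a+1))]
    have t2 := SA6 S 0 (S.W (a+1)) (S.memW (a+1)) a (a+1)
    rw [SW0, mul_zero] at t2
    have key : ((1:ℤ):ℂ) * S.cW (a+1) (S.circ (S.W (a+1)) (S.L a)) = 0 := by
      push_cast at t2 ⊢; linear_combination t2
    exact keyz key (by omega)
  rw [hval] at t
  linear_combination -t

lemma TQ0 (k s : ℤ) : S.cL s (S.circ (S.Q k) (S.L 0)) = 0 := by
  have t := SA5 S 1 (S.Q k) (S.memQ k) (s+1) (2*s+1)
  rw [comm10 S _ _ (S.memQ k) (S.memL (s+1)),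
    SA4 S 0 (S.L (s+1)) (S.memL (s+1)) k (2*s+1), mul_zero,
    show 2*s+1 - (s+1) = s by ring] at t
  have key : ((1:ℤ):ℂ) * S.cL s (S.circ (S.Q k) (S.L 0)) = 0 := by
    push_cast at t ⊢; linear_combination t
  exact keyz key (by omega)

lemma SQ0 (k s : ℤ) : S.cW s (S.circ (S.Q k) (S.L 0)) = 0 := by
  have t := SA6 S 1 (S.Q k) (S.memQ k) (s+1) (2*s+1)
  rw [comm10 S _ _ (S.memQ k) (S.memL (s+1)),
    zW_LQ S (s+1) k (2*s+1), mul_zero,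
    show 2*s+1 - (s+1) = s by ring] at t
  have key : ((1:ℤ):ℂ) * S.cW s (S.circ (S.Q k) (S.L 0)) = 0 := by
    push_cast at t ⊢; linear_combination t
  exact keyz key (by omega)

lemma RQ0 (k s : ℤ) : S.cQ s (S.circ (S.Q k) (S.L 0)) = 0 := by
  rcases eq_or_ne (k - s + 1) (2*s+1) with ha | ha
  · have t := SA7 S 1 (S.Q k) (S.memQ k) (k-s+2) (k+2)
    rw [comm10 S _ _ (S.memQ k) (S.memL (k-s+2)),
      offQ_LQ S (k-s+2) k (k+2) (by omega), mul_zero,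
      show k+2 - (k-s+2) = s by ring] at t
    have key : ((2*s + 1 - (k-s+2) : ℤ):ℂ) * S.cQ s (S.circ (S.Q k) (S.L 0)) = 0 := by
      push_cast at t ⊢; linear_combination -2*t
    exact keyz key (by omega)
  · have t := SA7 S 1 (S.Q k) (S.memQ k) (k-s+1) (k+1)
    rw [comm10 S _ _ (S.memQ k) (S.memL (k-s+1)),
      offQ_LQ S (k-s+1) k (k+1) (by omega), mul_zero,
      show k+1 - (k-s+1) = s by ring] at t
    have key : ((2*s + 1 - (k-s+1) : ℤ):ℂ) * S.cQ s (S.circ (S.Q k) (S.L 0)) = 0 := by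
      push_cast at t ⊢; linear_combination -2*t
    exact keyz key (by omega)

lemma b0L (a : ℤ) : S.cQ 0 (S.circ (S.L a) (S.Q 0)) = 0 := by
  rw [comm01 S _ _ (S.memL a) (S.memQ 0)]
  have t := SA7 S 1 (S.Q 0) (S.memQ 0) a 0
  rw [RQ0, mul_zero] at t
  have key : ((1 - 2*a : ℤ):ℂ) * S.cQ 0 (S.circ (S.Q 0) (S.L a)) = 0 := by
    push_cast at t ⊢; linear_combination 2*t
  exact keyz key (by omega)

lemma wQ0 (k : ℤ) : S.cW 1 (S.circ (S.Q k) (S.L 1)) = 0 := by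
  rw [comm10 S _ _ (S.memQ k) (S.memL 1)]
  exact zW_LQ S 1 k 1

lemma a0W (n : ℤ) : S.cW 0 (S.circ (S.W n) (S.W 0)) = 0 := by
  have t := SA12 S 0 (S.W n) (S.memW n) (xC1z S (S.W n)) (n+1)
  rw [show S.cL 1 (S.circ (S.W n) (S.L 1)) = 0 from gW0 S n] at t
  have hval : S.cW (n+1) (S.circ (S.W n) (S.W (n+1))) = 0 := by
    rw [comm00 S _ _ (S.memW n) (S.memW (n+1))]
    have t2 := SA3 S 0 (S.W (n+1)) (S.memW (n+1)) n (n+1)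
    rw [show n+1-n = 1 by ring, TW0, mul_zero] at t2
    have key : ((1:ℤ):ℂ) * S.cW (n+1) (S.circ (S.W (n+1)) (S.W n)) = 0 := by
      push_cast at t2 ⊢; linear_combination -t2
    exact keyz key (by omega)
  rw [hval] at t
  linear_combination -t

lemma b0W (n : ℤ) : S.cQ 0 (S.circ (S.W n) (S.Q 0)) = 0 := by
  rw [comm01 S _ _ (S.memW n) (S.memQ 0)]
  exact SA2 S 1 (S.Q 0) (S.memQ 0) n 0

lemma b0Q (k : ℤ) : S.cQ 0 (S.circ (S.Q k) (S.Q 0)) = 0 := by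
  have t := SA14 S 1 (S.Q k) (S.memQ k) (xC1z S (S.Q k)) (k+1)
  rw [SA16 S (S.Q k) (S.memQ k) (xC1z S (S.Q k)), mul_zero, add_zero] at t
  have hval : S.cQ (k+1) (S.circ (S.Q k) (S.Q (k+1))) = 0 := by
    rw [comm11 S _ _ (S.memQ k) (S.memQ (k+1))]
    have t2 := SA13 S 1 (S.Q (k+1)) (S.memQ (k+1)) k (k+1)
    rw [show k+1-k = 1 by ring, TQ0, mul_zero] at t2
    have key : ((1:ℤ):ℂ) * S.cQ (k+1) (S.circ (S.Q (k+1)) (S.Q k)) = 0 := by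
      push_cast at t2 ⊢; linear_combination t2
    rw [map_neg, keyz key (by omega), neg_zero]
  rw [hval] at t
  exact t.symm

lemma PLL (a b : ℤ) : ∃ α β : ℂ, S.circ (S.L a) (S.L b) = α • S.C1 + β • S.C2 :=
  ⟨_, _, elemZ S _ (fun j => BLLa S a b j) (fun j => BLLb S a b j) (fun j => BLLc S a b j)⟩

lemma PLW (a m : ℤ) : ∃ α β : ℂ, S.circ (S.L a) (S.W m) = α • S.C1 + β • S.C2 := by
  refine ⟨_, _, elemZ S _ (fun j => SA1 S 0 (S.L a) (S.memL a) m j) (fun j => ?_)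
    (fun j => SA2 S 0 (S.L a) (S.memL a) m j)⟩
  rcases eq_or_ne j m with hj | hj
  · subst hj
    have t := SA12 S 0 (S.L a) (S.memL a) (xC1z S (S.L a)) j
    rwa [a0L S a, BLLa S a 1 1, mul_zero, add_zero] at t
  · exact offW_LW S a m j hj

lemma PLQ (a k : ℤ) : ∃ α β : ℂ, S.circ (S.L a) (S.Q k) = α • S.C1 + β • S.C2 := by
  refine ⟨_, _, elemZ S _ (fun j => SA4 S 0 (S.L a) (S.memL a) k j) (fun j => zW_LQ S a k j)
    (fun j => ?_)⟩
  rcases eq_or_ne j k with hj | hj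
  · subst hj
    have t := SA14 S 0 (S.L a) (S.memL a) (xC1z S (S.L a)) j
    rwa [b0L S a, BLLa S a 1 1, mul_zero, add_zero] at t
  · exact offQ_LQ S a k j hj

lemma PWL (m a : ℤ) : ∃ α β : ℂ, S.circ (S.W m) (S.L a) = α • S.C1 + β • S.C2 := by
  refine ⟨_, _, elemZ S _ (fun j => ?_) (fun j => ?_) (fun j => ?_)⟩
  · rcases eq_or_ne j a with hj | hj
    · subst hj
      have t := SA10 S 0 (S.W m) (S.memW m) (xC1z S (S.W m)) j
      rwa [gW0 S m, mul_zero] at t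
    · have t := SA5 S 0 (S.W m) (S.memW m) a j
      rw [TW0, mul_zero] at t
      have key : ((j - a : ℤ):ℂ) * S.cL j (S.circ (S.W m) (S.L a)) = 0 := by
        push_cast at t ⊢; linear_combination t
      exact keyz key (by omega)
  · rcases eq_or_ne j a with hj | hj
    · subst hj
      have t := SA11 S 0 (S.W m) (S.memW m) (xC1z S (S.W m)) j
      rwa [wW0 S m, mul_zero] at t
    · have t := SA6 S 0 (S.W m) (S.memW m) a j
      rw [SW0, mul_zero] at t
      have key : ((j - a : ℤ):ℂ) * S.cW j (S.circ (S.W m) (S.L a)) = 0 := by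
        push_cast at t ⊢; linear_combination t
      exact keyz key (by omega)
  · have t := SA7 S 0 (S.W m) (S.memW m) a j
    rw [RW0, mul_zero] at t
    have key : ((2*j + 1 - 2*a : ℤ):ℂ) * S.cQ j (S.circ (S.W m) (S.L a)) = 0 := by
      push_cast at t ⊢; linear_combination 2*t
    exact keyz key (by omega)

lemma PWW (n m : ℤ) : ∃ α β : ℂ, S.circ (S.W n) (S.W m) = α • S.C1 + β • S.C2 := by
  refine ⟨_, _, elemZ S _ (fun j => SA1 S 0 (S.W n) (S.memW n) m j) (fun j => ?_)
    (fun j => SA2 S 0 (S.W n) (S.memW n) m j)⟩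
  rcases eq_or_ne j m with hj | hj
  · subst hj
    have t := SA12 S 0 (S.W n) (S.memW n) (xC1z S (S.W n)) j
    rwa [a0W S n, gW0 S n, mul_zero, add_zero] at t
  · have t := SA3 S 0 (S.W n) (S.memW n) m j
    rw [TW0, mul_zero] at t
    have key : ((m - j : ℤ):ℂ) * S.cW j (S.circ (S.W n) (S.W m)) = 0 := by
      push_cast at t ⊢; linear_combination t
    exact keyz key (by omega)

lemma PWQ (n k : ℤ) : ∃ α β : ℂ, S.circ (S.W n) (S.Q k) = α • S.C1 + β • S.C2 := by
  refine ⟨_, _, elemZ S _ (fun j => SA4 S 0 (S.W n) (S.memW n) k j) (fun j => ?_)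
    (fun j => ?_)⟩
  · have t := SA15 S 0 (S.W n) (S.memW n) k j
    rw [RW0, mul_zero] at t
    have key : ((2*j - 2*k - 1 : ℤ):ℂ) * S.cW j (S.circ (S.W n) (S.Q k)) = 0 := by
      push_cast at t ⊢; linear_combination 2*t
    exact keyz key (by omega)
  · rcases eq_or_ne j k with hj | hj
    · subst hj
      have t := SA14 S 0 (S.W n) (S.memW n) (xC1z S (S.W n)) j
      rwa [b0W S n, gW0 S n, mul_zero, add_zero] at t
    · have t := SA13 S 0 (S.W n) (S.memW n) k j
      rw [TW0, mul_zero] at t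
      have key : ((j - k : ℤ):ℂ) * S.cQ j (S.circ (S.W n) (S.Q k)) = 0 := by
        push_cast at t ⊢; linear_combination t
      exact keyz key (by omega)

lemma PQL (q a : ℤ) : ∃ α β : ℂ, S.circ (S.Q q) (S.L a) = α • S.C1 + β • S.C2 := by
  refine ⟨_, _, elemZ S _ (fun j => ?_) (fun j => ?_) (fun j => ?_)⟩
  · rcases eq_or_ne j a with hj | hj
    · subst hj
      have t := SA10 S 1 (S.Q q) (S.memQ q) (xC1z S (S.Q q)) j
      rwa [SA16 S (S.Q q) (S.memQ q) (xC1z S (S.Q q)), mul_zero] at t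
    · have t := SA5 S 1 (S.Q q) (S.memQ q) a j
      rw [TQ0, mul_zero] at t
      have key : ((j - a : ℤ):ℂ) * S.cL j (S.circ (S.Q q) (S.L a)) = 0 := by
        push_cast at t ⊢; linear_combination t
      exact keyz key (by omega)
  · rcases eq_or_ne j a with hj | hj
    · subst hj
      have t := SA11 S 1 (S.Q q) (S.memQ q) (xC1z S (S.Q q)) j
      rwa [wQ0 S q, mul_zero] at t
    · have t := SA6 S 1 (S.Q q) (S.memQ q) a j
      rw [SQ0, mul_zero] at t
      have key : ((j - a : ℤ):ℂ) * S.cW j (S.circ (S.Q q) (S.L a)) = 0 := by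
        push_cast at t ⊢; linear_combination t
      exact keyz key (by omega)
  · have t := SA7 S 1 (S.Q q) (S.memQ q) a j
    rw [RQ0, mul_zero] at t
    have key : ((2*j + 1 - 2*a : ℤ):ℂ) * S.cQ j (S.circ (S.Q q) (S.L a)) = 0 := by
      push_cast at t ⊢; linear_combination 2*t
    exact keyz key (by omega)

lemma PQW (q m : ℤ) : ∃ α β : ℂ, S.circ (S.Q q) (S.W m) = α • S.C1 + β • S.C2 := by
  refine ⟨_, _, elemZ S _ (fun j => SA1 S 1 (S.Q q) (S.memQ q) m j) (fun j => ?_)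
    (fun j => SA2 S 1 (S.Q q) (S.memQ q) m j)⟩
  rcases eq_or_ne j m with hj | hj
  · subst hj
    exact SA17 S (S.Q q) (S.memQ q) (xC1z S (S.Q q)) j
  · have t := SA3 S 1 (S.Q q) (S.memQ q) m j
    rw [TQ0, mul_zero] at t
    have key : ((m - j : ℤ):ℂ) * S.cW j (S.circ (S.Q q) (S.W m)) = 0 := by
      push_cast at t ⊢; linear_combination t
    exact keyz key (by omega)

lemma PQQ (q k : ℤ) : ∃ α β : ℂ, S.circ (S.Q q) (S.Q k) = α • S.C1 + β • S.C2 := by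
  refine ⟨_, _, elemZ S _ (fun j => SA4 S 1 (S.Q q) (S.memQ q) k j) (fun j => ?_)
    (fun j => ?_)⟩
  · have t := SA15 S 1 (S.Q q) (S.memQ q) k j
    rw [RQ0, mul_zero] at t
    have key : ((2*j - 2*k - 1 : ℤ):ℂ) * S.cW j (S.circ (S.Q q) (S.Q k)) = 0 := by
      push_cast at t ⊢; linear_combination 2*t
    exact keyz key (by omega)
  · rcases eq_or_ne j k with hj | hj
    · subst hj
      have t := SA14 S 1 (S.Q q) (S.memQ q) (xC1z S (S.Q q)) j
      rwa [b0Q S q, SA16 S (S.Q q) (S.memQ q) (xC1z S (S.Q q)), mul_zero, add_zero] at t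
    · have t := SA13 S 1 (S.Q q) (S.memQ q) k j
      rw [TQ0, mul_zero] at t
      have key : ((j - k : ℤ):ℂ) * S.cQ j (S.circ (S.Q q) (S.Q k)) = 0 := by
        push_cast at t ⊢; linear_combination t
      exact keyz key (by omega)

lemma allZ (i i' : I) : ∃ α β : ℂ, S.circ (S.bV i) (S.bV i') = α • S.C1 + β • S.C2 := by
  obtain ((a|a)|(u|u))|a := i
  all_goals try (cases u)
  case inl.inr.inl.unit =>
    exact ⟨0, 0, by rw [bV_iC1, C1z]; simp⟩
  case inl.inr.inr.unit =>
    exact ⟨0, 0, by rw [bV_iC2, C2z]; simp⟩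
  all_goals
    obtain ((b|b)|(v|v))|b := i'
  all_goals try (cases v)
  case inl.inl.inl.inl.inr.inl.unit => exact ⟨0, 0, by rw [bV_iC1, xC1z]; simp⟩
  case inl.inl.inl.inl.inr.inr.unit => exact ⟨0, 0, by rw [bV_iC2, xC2z]; simp⟩
  case inl.inl.inr.inl.inr.inl.unit => exact ⟨0, 0, by rw [bV_iC1, xC1z]; simp⟩
  case inl.inl.inr.inl.inr.inr.unit => exact ⟨0, 0, by rw [bV_iC2, xC2z]; simp⟩
  case inr.inl.inr.inl.unit => exact ⟨0, 0, by rw [bV_iC1, xC1z]; simp⟩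
  case inr.inl.inr.inr.unit => exact ⟨0, 0, by rw [bV_iC2, xC2z]; simp⟩
  case inl.inl.inl.inl.inl.inl => rw [bV_iL, bV_iL]; exact PLL S a b
  case inl.inl.inl.inl.inl.inr => rw [bV_iL, bV_iW]; exact PLW S a b
  case inl.inl.inl.inr => rw [bV_iL, bV_iQ]; exact PLQ S a b
  case inl.inl.inr.inl.inl.inl => rw [bV_iW, bV_iL]; exact PWL S a b
  case inl.inl.inr.inl.inl.inr => rw [bV_iW, bV_iW]; exact PWW S a b
  case inl.inl.inr.inr => rw [bV_iW, bV_iQ]; exact PWQ S a b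
  case inr.inl.inl.inl => rw [bV_iQ, bV_iL]; exact PQL S a b
  case inr.inl.inl.inr => rw [bV_iQ, bV_iW]; exact PQW S a b
  case inr.inr => rw [bV_iQ, bV_iQ]; exact PQQ S a b

lemma P4a (a b t : I) : S.circ (S.br (S.bV a) (S.bV b)) (S.bV t) = 0 := by
  have e := S.hpost1 (par a) (par b) (par t) (S.bV a) (memb S a) (S.bV b) (memb S b)
    (S.bV t) (memb S t)
  obtain ⟨α, β, h1⟩ := allZ S b t
  obtain ⟨α', β', h2⟩ := allZ S a t
  rw [e, h1, h2]
  rw [map_add, map_smul, map_smul, xC1z, xC2z, map_add, map_smul, map_smul, xC1z, xC2z]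
  simp

lemma P4b (s t : I) : S.circ (S.bV s) (S.bV t) = 0 := by
  obtain ⟨c₁, c₂, a₁, b₁, a₂, b₂, hrep⟩ := spanBr S s
  rw [hrep]
  simp only [map_add, map_smul, LinearMap.add_apply, LinearMap.smul_apply, P4a,
    smul_zero, add_zero]

theorem main : ∀ x y : V, S.circ x y = 0 := by
  have h : S.circ = 0 := by
    apply S.bV.ext; intro s
    apply S.bV.ext; intro t
    rw [P4b S s t]; rfl
  intro x y
  rw [h]; rfl

end Setup
end BMS3

theorem postLie_BMS3_trivial
    (V : Type) [AddCommGroup V] [Module ℂ V]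
    (bV : Module.Basis (((ℤ ⊕ ℤ) ⊕ (Unit ⊕ Unit)) ⊕ ℤ) ℂ V)
    (br : V →ₗ[ℂ] V →ₗ[ℂ] V)
    (L : ℤ → V) (W : ℤ → V) (C1 : V) (C2 : V) (Q : ℤ → V)
    (hLdef : ∀ m : ℤ, L m = bV (Sum.inl (Sum.inl (Sum.inl m))))
    (hWdef : ∀ m : ℤ, W m = bV (Sum.inl (Sum.inl (Sum.inr m))))
    (hC1def : C1 = bV (Sum.inl (Sum.inr (Sum.inl ()))))
    (hC2def : C2 = bV (Sum.inl (Sum.inr (Sum.inr ()))))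
    (hQdef : ∀ k : ℤ, Q k = bV (Sum.inr k))
    (Vsub : ZMod 2 → Submodule ℂ V)
    (hV0 : Vsub 0 = Submodule.span ℂ (Set.range (fun i : (ℤ ⊕ ℤ) ⊕ (Unit ⊕ Unit) => bV (Sum.inl i))))
    (hV1 : Vsub 1 = Submodule.span ℂ (Set.range (fun j : ℤ => bV (Sum.inr j))))
    (sgn : ZMod 2 → ℂ) (hsgn : ∀ p : ZMod 2, sgn p = if p = 1 then -1 else 1)
    (hLL : ∀ m n : ℤ, br (L m) (L n) = ((m : ℂ) - n) • L (m + n) +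
      (if m + n = 0 then ((m : ℂ) ^ 3 - m) / 12 else 0) • C1)
    (hLW : ∀ m n : ℤ, br (L m) (W n) = ((m : ℂ) - n) • W (m + n) +
      (if m + n = 0 then ((m : ℂ) ^ 3 - m) / 12 else 0) • C2)
    (hQQ : ∀ k l : ℤ, br (Q k) (Q l) = (2 : ℂ) • W (k + l + 1) +
      (if k + l + 1 = 0 then (((k : ℂ) + 1 / 2) ^ 2 - 1 / 4) / 3 else 0) • C2)
    (hLQ : ∀ m k : ℤ, br (L m) (Q k) = ((m : ℂ) / 2 - ((k : ℂ) + 1 / 2)) • Q (m + k))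
    (hWW : ∀ m n : ℤ, br (W m) (W n) = 0)
    (hWQ : ∀ m k : ℤ, br (W m) (Q k) = 0)
    (hC1x : ∀ x : V, br C1 x = 0)
    (hC2x : ∀ x : V, br C2 x = 0)
    (hskew : ∀ p q : ZMod 2, ∀ x ∈ Vsub p, ∀ y ∈ Vsub q,
      br x y = (-(sgn (p * q))) • br y x)
    (circ : V →ₗ[ℂ] V →ₗ[ℂ] V)
    (hcomm : ∀ p q : ZMod 2, ∀ x ∈ Vsub p, ∀ y ∈ Vsub q, circ x y = sgn (p * q) • circ y x)
    (hpost1 : ∀ p q t : ZMod 2, ∀ x ∈ Vsub p, ∀ y ∈ Vsub q, ∀ z ∈ Vsub t,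
      circ (br x y) z = circ x (circ y z) - sgn (p * q) • circ y (circ x z))
    (hpost2 : ∀ p q t : ZMod 2, ∀ x ∈ Vsub p, ∀ y ∈ Vsub q, ∀ z ∈ Vsub t,
      circ x (br y z) = br (circ x y) z + sgn (p * q) • br y (circ x z)) :
    ∀ x y : V, circ x y = 0 :=
  BMS3.Setup.main
    { bV := bV, br := br, L := L, W := W, C1 := C1, C2 := C2, Q := Q,
      hLdef := hLdef, hWdef := hWdef, hC1def := hC1def, hC2def := hC2def, hQdef := hQdef,
      Vsub := Vsub, hV0 := hV0, hV1 := hV1, sgn := sgn, hsgn := hsgn,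
      hLL := hLL, hLW := hLW, hQQ := hQQ, hLQ := hLQ, hWW := hWW, hWQ := hWQ,
      hC1x := hC1x, hC2x := hC2x, hskew := hskew, circ := circ,
      hcomm := hcomm, hpost1 := hpost1, hpost2 := hpost2 }
end

section
/- Every commutative post-Lie superalgebra structure ∘ on the Heisenberg–Virasoro superalgebra S is trivial, i.e. x ∘ y = 0 for all x, y ∈ S. -/
namespace HVS

abbrev Idx : Type := ((ℤ ⊕ ℤ) ⊕ Unit) ⊕ ℤ
abbrev LI (m : ℤ) : Idx := Sum.inl (Sum.inl (Sum.inl m))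
abbrev HI (m : ℤ) : Idx := Sum.inl (Sum.inl (Sum.inr m))
abbrev CI : Idx := Sum.inl (Sum.inr ())
abbrev GI (k : ℤ) : Idx := Sum.inr k

section Machinery
variable {V : Type} [AddCommGroup V] [Module ℂ V] (bV : Module.Basis Idx ℂ V)

lemma expand (T : V →ₗ[ℂ] V) (v : V) (i₁ : Idx) :
    bV.repr (T v) i₁ = (bV.repr v).sum (fun i a => a * bV.repr (T (bV i)) i₁) := by
  conv_lhs => rw [← Module.Basis.linearCombination_repr bV v]
  rw [Finsupp.linearCombination_apply, map_finsuppSum, map_finsuppSum, Finsupp.sum_apply]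
  refine Finsupp.sum_congr fun i _ => ?_
  rw [map_smul, map_smul, Finsupp.smul_apply, smul_eq_mul]

lemma master (T : V →ₗ[ℂ] V) (c : Idx → ℂ) (σ : Idx → Idx) (e : Idx → ℂ)
    (hT : ∀ i, T (bV i) = c i • bV (σ i) + e i • bV CI) (v : V) (i₁ : Idx)
    (hne : i₁ ≠ CI) (ι : Idx) (hσ : σ ι = i₁) (huniq : ∀ i, σ i = i₁ → i = ι) :
    bV.repr (T v) i₁ = c ι * bV.repr v ι := by
  have hC : ¬ (CI = i₁) := fun hh => hne hh.symm
  have key : ∀ i, bV.repr (T (bV i)) i₁ = if σ i = i₁ then c i else 0 := by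
    intro i
    by_cases h : σ i = i₁ <;>
      simp [hT i, Finsupp.single_apply, h, hC]
  rw [expand]
  rw [Finsupp.sum_eq_single ι]
  · rw [key, if_pos hσ, mul_comm]
  · intro b _ hb
    rw [key]
    by_cases h : σ b = i₁
    · exact absurd (huniq b h) hb
    · simp [h]
  · intro _; ring

lemma master0 (T : V →ₗ[ℂ] V) (c : Idx → ℂ) (σ : Idx → Idx) (e : Idx → ℂ)
    (hT : ∀ i, T (bV i) = c i • bV (σ i) + e i • bV CI) (v : V) (i₁ : Idx)
    (hne : i₁ ≠ CI) (h0 : ∀ i, σ i = i₁ → c i = 0) :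
    bV.repr (T v) i₁ = 0 := by
  have hC : ¬ (CI = i₁) := fun hh => hne hh.symm
  rw [expand, Finsupp.sum]
  apply Finset.sum_eq_zero
  intro i _
  by_cases h : σ i = i₁
  · simp [hT i, Finsupp.single_apply, h, hC, h0 i h]
  · simp [hT i, Finsupp.single_apply, h, hC]

lemma masterC (T : V →ₗ[ℂ] V) (c : Idx → ℂ) (σ : Idx → Idx) (e : Idx → ℂ)
    (hT : ∀ i, T (bV i) = c i • bV (σ i) + e i • bV CI) (v : V)
    (hσC : ∀ i, σ i = CI → c i = 0) (ιe : Idx) (he : ∀ i, i ≠ ιe → e i = 0) :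
    bV.repr (T v) CI = e ιe * bV.repr v ιe := by
  have key : ∀ i, bV.repr (T (bV i)) CI = (if σ i = CI then c i else 0) + e i := by
    intro i
    by_cases h : σ i = CI <;>
      simp [hT i, Finsupp.single_apply, h]
  rw [expand]
  rw [Finsupp.sum_eq_single ιe]
  · rw [key]
    by_cases h : σ ιe = CI
    · rw [if_pos h, hσC _ h, zero_add, mul_comm]
    · rw [if_neg h, zero_add, mul_comm]
  · intro b _ hb
    rw [key, he b hb]
    by_cases h : σ b = CI
    · simp [h, hσC b h]
    · simp [h]
  · intro _; ring

end Machinery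


structure Data (V : Type) [AddCommGroup V] [Module ℂ V] where
  bV : Module.Basis Idx ℂ V
  br : V →ₗ[ℂ] V →ₗ[ℂ] V
  circ : V →ₗ[ℂ] V →ₗ[ℂ] V
  Vsub : ZMod 2 → Submodule ℂ V
  sgn : ZMod 2 → ℂ
  hV0 : Vsub 0 = Submodule.span ℂ (Set.range (fun i : (ℤ ⊕ ℤ) ⊕ Unit => bV (Sum.inl i)))
  hV1 : Vsub 1 = Submodule.span ℂ (Set.range (fun j : ℤ => bV (Sum.inr j)))
  hsgn : ∀ p : ZMod 2, sgn p = if p = 1 then -1 else 1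
  hLL : ∀ m n : ℤ, br (bV (LI m)) (bV (LI n)) = ((m : ℂ) - n) • bV (LI (m + n)) +
      (if m + n = 0 then ((m : ℂ) ^ 3 - m) / 12 else 0) • bV CI
  hLH : ∀ m n : ℤ, br (bV (LI m)) (bV (HI n)) = (-(n : ℂ)) • bV (HI (m + n))
  hLG : ∀ m k : ℤ, br (bV (LI m)) (bV (GI k)) = (-((k : ℂ) + 1 / 2)) • bV (GI (m + k))
  hGG : ∀ k l : ℤ, br (bV (GI k)) (bV (GI l)) = (2 : ℂ) • bV (HI (k + l + 1))
  hHH : ∀ m n : ℤ, br (bV (HI m)) (bV (HI n)) = 0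
  hHG : ∀ m k : ℤ, br (bV (HI m)) (bV (GI k)) = 0
  hxC : ∀ x : V, br x (bV CI) = 0
  hskew : ∀ p q : ZMod 2, ∀ x ∈ Vsub p, ∀ y ∈ Vsub q, br x y = (-(sgn (p * q))) • br y x
  hcomm : ∀ p q : ZMod 2, ∀ x ∈ Vsub p, ∀ y ∈ Vsub q, circ x y = sgn (p * q) • circ y x
  hpost1 : ∀ p q t : ZMod 2, ∀ x ∈ Vsub p, ∀ y ∈ Vsub q, ∀ z ∈ Vsub t,
      circ (br x y) z = circ x (circ y z) - sgn (p * q) • circ y (circ x z)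
  hpost2 : ∀ p q t : ZMod 2, ∀ x ∈ Vsub p, ∀ y ∈ Vsub q, ∀ z ∈ Vsub t,
      circ x (br y z) = br (circ x y) z + sgn (p * q) • br y (circ x z)

namespace Data

variable {V : Type} [AddCommGroup V] [Module ℂ V] (S : Data V)

lemma sgn0 : S.sgn 0 = 1 := by rw [S.hsgn, if_neg (by decide : ¬ ((0:ZMod 2) = 1))]
lemma sgn1 : S.sgn 1 = -1 := by rw [S.hsgn]; simp

lemma mem0 (i : (ℤ ⊕ ℤ) ⊕ Unit) : S.bV (Sum.inl i) ∈ S.Vsub 0 := by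
  rw [S.hV0]; exact Submodule.subset_span ⟨i, rfl⟩

lemma mem1 (k : ℤ) : S.bV (GI k) ∈ S.Vsub 1 := by
  rw [S.hV1]; exact Submodule.subset_span ⟨k, rfl⟩

lemma skew00 (i j : (ℤ ⊕ ℤ) ⊕ Unit) :
    S.br (S.bV (Sum.inl i)) (S.bV (Sum.inl j)) = - S.br (S.bV (Sum.inl j)) (S.bV (Sum.inl i)) := by
  have := S.hskew 0 0 _ (S.mem0 i) _ (S.mem0 j)
  rw [this, show ((0:ZMod 2) * 0) = 0 by decide, S.sgn0, neg_smul, one_smul]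

lemma skew10 (k : ℤ) (j : (ℤ ⊕ ℤ) ⊕ Unit) :
    S.br (S.bV (GI k)) (S.bV (Sum.inl j)) = - S.br (S.bV (Sum.inl j)) (S.bV (GI k)) := by
  have := S.hskew 1 0 _ (S.mem1 k) _ (S.mem0 j)
  rw [this, show ((1:ZMod 2) * 0) = 0 by decide, S.sgn0, neg_smul, one_smul]

lemma brHL (j n : ℤ) : S.br (S.bV (HI j)) (S.bV (LI n)) = (j:ℂ) • S.bV (HI (j + n)) := by
  rw [show HI j = Sum.inl (Sum.inl (Sum.inr j)) from rfl]
  rw [skew00, S.hLH, add_comm n j]; rw [neg_smul, neg_neg]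

lemma brGL (k n : ℤ) : S.br (S.bV (GI k)) (S.bV (LI n)) = ((k:ℂ) + 1/2) • S.bV (GI (k + n)) := by
  rw [skew10, S.hLG, add_comm n k, neg_smul, neg_neg]

lemma brGH (k n : ℤ) : S.br (S.bV (GI k)) (S.bV (HI n)) = 0 := by
  rw [skew10, S.hHG, neg_zero]

lemma brCb (i : Idx) : S.br (S.bV CI) (S.bV i) = 0 := by
  rcases i with (i | k)
  · rw [show (Sum.inl i : Idx) = Sum.inl i from rfl, skew00, S.hxC, neg_zero]
  · have := S.hskew 0 1 _ (S.mem0 (Sum.inr ())) _ (S.mem1 k)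
    rw [this, show ((0:ZMod 2) * 1) = 0 by decide, S.sgn0, S.hxC]
    simp

lemma brH0b (i : Idx) : S.br (S.bV (HI 0)) (S.bV i) = 0 := by
  rcases i with (((m | m) | u) | k)
  · rw [brHL]; simp
  · exact S.hHH 0 m
  · exact S.hxC _
  · exact S.hHG 0 k

-- continuation inside namespace Data (to be appended)
noncomputable def dd : Idx → ℂ
  | Sum.inl (Sum.inl (Sum.inl m)) => (m : ℂ)
  | Sum.inl (Sum.inl (Sum.inr m)) => (m : ℂ)
  | Sum.inl (Sum.inr _) => 0
  | Sum.inr k => (k : ℂ) + 1/2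

lemma A0b (i : Idx) : S.br (S.bV (LI 0)) (S.bV i) = (-dd i) • S.bV i := by
  rcases i with (((m | m) | u) | k)
  · rw [S.hLL]
    have h1 : ((0:ℂ)^3 - 0)/12 = 0 := by norm_num
    simp only [h1, ite_self, zero_smul, add_zero, zero_add, dd]
    norm_num
  · rw [S.hLH]; simp [dd]
  · rw [show (Sum.inl (Sum.inr u) : Idx) = CI from rfl, S.hxC, dd]
    simp
  · rw [S.hLG]; rw [dd]; ring_nf

lemma repr_A0 (v : V) (i : Idx) :
    S.bV.repr (S.br (S.bV (LI 0)) v) i = -dd i * S.bV.repr v i := by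
  have hT : ∀ j, (S.br (S.bV (LI 0))) (S.bV j) = (fun j => -dd j) j • S.bV (id j)
      + (fun _ => (0:ℂ)) j • S.bV CI := by
    intro j; simp only [id, zero_smul, add_zero]; exact S.A0b j
  by_cases hi : i = CI
  · subst hi
    rw [masterC S.bV _ _ _ _ hT v (fun j hj => by simp only [id] at hj; subst hj; simp [dd]) CI
      (fun j hj => rfl)]
    simp [dd]
  · rw [master S.bV _ _ _ _ hT v i hi i rfl (fun j hj => hj)]


noncomputable def cL (n : ℤ) : Idx → ℂ
  | Sum.inl (Sum.inl (Sum.inl j)) => (j : ℂ) - n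
  | Sum.inl (Sum.inl (Sum.inr j)) => (j : ℂ)
  | Sum.inl (Sum.inr _) => 0
  | Sum.inr k => (k : ℂ) + 1/2

def sigL (n : ℤ) : Idx → Idx
  | Sum.inl (Sum.inl (Sum.inl j)) => LI (j + n)
  | Sum.inl (Sum.inl (Sum.inr j)) => HI (j + n)
  | Sum.inl (Sum.inr _) => CI
  | Sum.inr k => GI (k + n)

noncomputable def eeL (n : ℤ) : Idx → ℂ
  | Sum.inl (Sum.inl (Sum.inl j)) => if j + n = 0 then ((j : ℂ)^3 - j)/12 else 0
  | _ => 0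

lemma hTL (n : ℤ) : ∀ i, (S.br.flip (S.bV (LI n))) (S.bV i)
    = cL n i • S.bV (sigL n i) + eeL n i • S.bV CI := by
  intro i
  rcases i with (((m | m) | u) | k)
  · simpa [cL, sigL, eeL] using S.hLL m n
  · rw [LinearMap.flip_apply, brHL]; simp [cL, sigL, eeL]
  · rw [LinearMap.flip_apply]
    rw [show (Sum.inl (Sum.inr u) : Idx) = CI from rfl, brCb]
    simp [cL, sigL, eeL]
  · rw [LinearMap.flip_apply, brGL]; simp [cL, sigL, eeL]

lemma reprL_brL (v : V) (n s : ℤ) :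
    S.bV.repr (S.br v (S.bV (LI n))) (LI s) = ((s:ℂ) - 2*n) * S.bV.repr v (LI (s - n)) := by
  have h := master S.bV _ _ _ _ (S.hTL n) v (LI s) (by simp) (LI (s - n))
    (by simp [sigL]) ?_
  · rw [LinearMap.flip_apply] at h
    rw [h, cL]; push_cast; ring
  · intro i hi
    rcases i with (((m | m) | u) | k) <;> simp [sigL] at hi ⊢ <;> omega

lemma reprH_brL (v : V) (n s : ℤ) :
    S.bV.repr (S.br v (S.bV (LI n))) (HI s) = ((s:ℂ) - n) * S.bV.repr v (HI (s - n)) := by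
  have h := master S.bV _ _ _ _ (S.hTL n) v (HI s) (by simp) (HI (s - n))
    (by simp [sigL]) ?_
  · rw [LinearMap.flip_apply] at h
    rw [h, cL]; push_cast; ring
  · intro i hi
    rcases i with (((m | m) | u) | k) <;> simp [sigL] at hi ⊢ <;> omega

lemma reprG_brL (v : V) (n r : ℤ) :
    S.bV.repr (S.br v (S.bV (LI n))) (GI r) = ((r:ℂ) - n + 1/2) * S.bV.repr v (GI (r - n)) := by
  have h := master S.bV _ _ _ _ (S.hTL n) v (GI r) (by simp) (GI (r - n))
    (by simp [sigL]) ?_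
  · rw [LinearMap.flip_apply] at h
    rw [h, cL]; push_cast; ring
  · intro i hi
    rcases i with (((m | m) | u) | k) <;> simp [sigL] at hi ⊢ <;> omega

lemma reprC_brL (v : V) (n : ℤ) :
    S.bV.repr (S.br v (S.bV (LI n))) CI
      = ((-(n:ℂ))^3 + n)/12 * S.bV.repr v (LI (-n)) := by
  have h := masterC S.bV _ _ _ _ (S.hTL n) v ?_ (LI (-n)) ?_
  · rw [LinearMap.flip_apply] at h
    rw [h, eeL, if_pos (by omega)]; push_cast; ring
  · intro i hi
    rcases i with (((m | m) | u) | k) <;> simp [sigL, cL] at hi ⊢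
  · intro i hi
    rcases i with (((m | m) | u) | k) <;> simp [eeL] at hi ⊢
    intro hc; exfalso; exact hi (by omega)


noncomputable def cH (n : ℤ) : Idx → ℂ
  | Sum.inl (Sum.inl (Sum.inl _)) => -(n : ℂ)
  | _ => 0

def sigH (n : ℤ) : Idx → Idx
  | Sum.inl (Sum.inl (Sum.inl j)) => HI (j + n)
  | _ => CI

lemma hTH (n : ℤ) : ∀ i, (S.br.flip (S.bV (HI n))) (S.bV i)
    = cH n i • S.bV (sigH n i) + (0:ℂ) • S.bV CI := by
  intro i
  rcases i with (((m | m) | u) | k)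
  · simpa [cH, sigH] using S.hLH m n
  · rw [LinearMap.flip_apply, S.hHH]; simp [cH, sigH]
  · rw [LinearMap.flip_apply]
    rw [show (Sum.inl (Sum.inr u) : Idx) = CI from rfl, brCb]
    simp [cH, sigH]
  · rw [LinearMap.flip_apply, brGH]; simp [cH, sigH]

lemma reprH_brH (v : V) (n s : ℤ) :
    S.bV.repr (S.br v (S.bV (HI n))) (HI s) = (-(n:ℂ)) * S.bV.repr v (LI (s - n)) := by
  have h := master S.bV _ _ _ _ (S.hTH n) v (HI s) (by simp) (LI (s - n))
    (by simp [sigH]) ?_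
  · rw [LinearMap.flip_apply] at h
    rw [h, cH]
  · intro i hi
    rcases i with (((m | m) | u) | k) <;> simp [sigH] at hi ⊢ <;> omega

lemma reprL_brH (v : V) (n s : ℤ) :
    S.bV.repr (S.br v (S.bV (HI n))) (LI s) = 0 := by
  have h := master0 S.bV _ _ _ _ (S.hTH n) v (LI s) (by simp) ?_
  · rwa [LinearMap.flip_apply] at h
  · intro i hi
    rcases i with (((m | m) | u) | k) <;> simp [sigH] at hi ⊢

lemma reprG_brH (v : V) (n r : ℤ) :
    S.bV.repr (S.br v (S.bV (HI n))) (GI r) = 0 := by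
  have h := master0 S.bV _ _ _ _ (S.hTH n) v (GI r) (by simp) ?_
  · rwa [LinearMap.flip_apply] at h
  · intro i hi
    rcases i with (((m | m) | u) | k) <;> simp [sigH] at hi ⊢

lemma reprC_brH (v : V) (n : ℤ) :
    S.bV.repr (S.br v (S.bV (HI n))) CI = 0 := by
  have h := masterC S.bV _ _ _ _ (S.hTH n) v ?_ CI (fun i hi => rfl)
  · rw [LinearMap.flip_apply] at h
    rw [h]; ring
  · intro i hi
    rcases i with (((m | m) | u) | k) <;> simp [sigH, cH] at hi ⊢

noncomputable def cG (k : ℤ) : Idx → ℂ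
  | Sum.inl (Sum.inl (Sum.inl _)) => -(k : ℂ) - 1/2
  | Sum.inr _ => 2
  | _ => 0

def sigG (k : ℤ) : Idx → Idx
  | Sum.inl (Sum.inl (Sum.inl j)) => GI (j + k)
  | Sum.inr l => HI (l + k + 1)
  | _ => CI

lemma hTG (k : ℤ) : ∀ i, (S.br.flip (S.bV (GI k))) (S.bV i)
    = cG k i • S.bV (sigG k i) + (0:ℂ) • S.bV CI := by
  intro i
  rcases i with (((m | m) | u) | l)
  · rw [LinearMap.flip_apply, S.hLG]
    simp only [cG, sigG, zero_smul, add_zero]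
    congr 1; ring
  · rw [LinearMap.flip_apply, S.hHG]; simp [cG, sigG]
  · rw [LinearMap.flip_apply]
    rw [show (Sum.inl (Sum.inr u) : Idx) = CI from rfl, brCb]
    simp [cG, sigG]
  · rw [LinearMap.flip_apply, S.hGG]; simp [cG, sigG]

lemma reprG_brG (v : V) (k r : ℤ) :
    S.bV.repr (S.br v (S.bV (GI k))) (GI r) = (-(k:ℂ) - 1/2) * S.bV.repr v (LI (r - k)) := by
  have h := master S.bV _ _ _ _ (S.hTG k) v (GI r) (by simp) (LI (r - k))
    (by simp [sigG]) ?_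
  · rw [LinearMap.flip_apply] at h
    rw [h, cG]
  · intro i hi
    rcases i with (((m | m) | u) | l) <;> simp [sigG] at hi ⊢ <;> omega

lemma reprH_brG (v : V) (k s : ℤ) :
    S.bV.repr (S.br v (S.bV (GI k))) (HI s) = 2 * S.bV.repr v (GI (s - k - 1)) := by
  have h := master S.bV _ _ _ _ (S.hTG k) v (HI s) (by simp) (GI (s - k - 1))
    (by simp [sigG]; omega) ?_
  · rw [LinearMap.flip_apply] at h
    rw [h, cG]
  · intro i hi
    rcases i with (((m | m) | u) | l) <;> simp [sigG] at hi ⊢ <;> omega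

lemma reprL_brG (v : V) (k j : ℤ) :
    S.bV.repr (S.br v (S.bV (GI k))) (LI j) = 0 := by
  have h := master0 S.bV _ _ _ _ (S.hTG k) v (LI j) (by simp) ?_
  · rwa [LinearMap.flip_apply] at h
  · intro i hi
    rcases i with (((m | m) | u) | l) <;> simp [sigG] at hi ⊢

lemma reprC_brG (v : V) (k : ℤ) :
    S.bV.repr (S.br v (S.bV (GI k))) CI = 0 := by
  have h := masterC S.bV _ _ _ _ (S.hTG k) v ?_ CI (fun i hi => rfl)
  · rw [LinearMap.flip_apply] at h
    rw [h]; ring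
  · intro i hi
    rcases i with (((m | m) | u) | l) <;> simp [sigG, cG] at hi ⊢


def par : Idx → ZMod 2
  | Sum.inr _ => 1
  | _ => 0

lemma memp (i : Idx) : S.bV i ∈ S.Vsub (par i) := by
  rcases i with (i | k)
  · exact S.mem0 i
  · exact S.mem1 k

noncomputable def ss : Idx → Idx → ℂ
  | Sum.inr _, Sum.inr _ => -1
  | _, _ => 1

lemma sgn_par (i j : Idx) : S.sgn (par i * par j) = ss i j := by
  rcases i with (i | k) <;> rcases j with (j | l) <;>
    simp only [par, ss] <;>
    first
      | (rw [show ((0:ZMod 2) * 0) = 0 by decide, S.sgn0])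
      | (rw [show ((0:ZMod 2) * 1) = 0 by decide, S.sgn0])
      | (rw [show ((1:ZMod 2) * 0) = 0 by decide, S.sgn0])
      | (rw [show ((1:ZMod 2) * 1) = 1 by decide, S.sgn1])

lemma ss_mul_self (i j : Idx) : ss i j * ss j i = 1 := by
  rcases i with (i | k) <;> rcases j with (j | l) <;> simp [ss]

lemma hcommb (i j : Idx) : S.circ (S.bV i) (S.bV j) = ss i j • S.circ (S.bV j) (S.bV i) := by
  rw [S.hcomm (par i) (par j) _ (S.memp i) _ (S.memp j), sgn_par]

lemma post2b (i j l : Idx) : S.circ (S.bV i) (S.br (S.bV j) (S.bV l))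
    = S.br (S.circ (S.bV i) (S.bV j)) (S.bV l)
      + ss i j • S.br (S.bV j) (S.circ (S.bV i) (S.bV l)) := by
  rw [S.hpost2 (par i) (par j) (par l) _ (S.memp i) _ (S.memp j) _ (S.memp l), sgn_par]

lemma post1b (i j l : Idx) : S.circ (S.br (S.bV i) (S.bV j)) (S.bV l)
    = S.circ (S.bV i) (S.circ (S.bV j) (S.bV l))
      - ss i j • S.circ (S.bV j) (S.circ (S.bV i) (S.bV l)) := by
  rw [S.hpost1 (par i) (par j) (par l) _ (S.memp i) _ (S.memp j) _ (S.memp l), sgn_par]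

/-- `f v = L₀ ∘ v`. -/
noncomputable def f (v : V) : V := S.circ (S.bV (LI 0)) v

lemma ssE (i : Idx) (j : (ℤ ⊕ ℤ) ⊕ Unit) : ss i (Sum.inl j) = 1 := by
  rcases i with (i | k) <;> simp [ss]

lemma ssE' (i : (ℤ ⊕ ℤ) ⊕ Unit) (j : Idx) : ss (Sum.inl i) j = 1 := by
  rcases j with (j | k) <;> simp [ss]

lemma eq1 (i j : Idx) : S.br (S.bV (LI 0)) (S.circ (S.bV i) (S.bV j))
    = (-dd j) • S.circ (S.bV i) (S.bV j) - S.br (S.f (S.bV i)) (S.bV j) := by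
  have h := S.post2b i (LI 0) j
  rw [S.A0b j, map_smul, ssE, one_smul] at h
  have hx : S.circ (S.bV i) (S.bV (LI 0)) = S.f (S.bV i) := by
    rw [S.hcommb i (LI 0), ssE, one_smul]; rfl
  rw [hx] at h
  linear_combination (norm := module) (-1 : ℂ) • h

lemma Mm (i j : Idx) : (dd i - dd j) • S.circ (S.bV i) (S.bV j)
    = S.br (S.f (S.bV i)) (S.bV j) - ss i j • S.br (S.f (S.bV j)) (S.bV i) := by
  have e1 := S.eq1 i j
  have e2 := S.eq1 j i
  have hc := S.hcommb i j
  have h3 : S.br (S.bV (LI 0)) (S.circ (S.bV i) (S.bV j))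
      = ss i j • S.br (S.bV (LI 0)) (S.circ (S.bV j) (S.bV i)) := by
    rw [hc, map_smul]
  linear_combination (norm := module) (-1:ℂ) • e1 + h3 + ss i j • e2 + dd i • hc

lemma K2 (j : Idx) : S.br (S.bV (LI 0)) (S.f (S.bV j))
    = (-dd j) • S.f (S.bV j) - S.br (S.f (S.bV (LI 0))) (S.bV j) := S.eq1 (LI 0) j


lemma eq_zero_of_coords (v : V) (h : ∀ i, S.bV.repr v i = 0) : v = 0 := by
  apply S.bV.ext_elem
  intro i
  rw [h i, map_zero]; rfl

lemma WADD (j : Idx) (v : V) : S.br (S.bV (LI 0)) (S.br v (S.bV j))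
    = S.br (S.br (S.bV (LI 0)) v) (S.bV j) + (-dd j) • S.br v (S.bV j) := by
  rcases j with (((n | n) | ⟨⟩) | n)
  · apply S.bV.ext_elem
    intro i
    rw [map_add, Finsupp.add_apply, map_smul, Finsupp.smul_apply]
    rcases i with (((s | s) | ⟨⟩) | s) <;>
      simp only [S.repr_A0, S.reprL_brL, S.reprH_brL, S.reprG_brL, S.reprC_brL, dd,
        smul_eq_mul] <;>
      push_cast <;> ring
  · apply S.bV.ext_elem
    intro i
    rw [map_add, Finsupp.add_apply, map_smul, Finsupp.smul_apply]
    rcases i with (((s | s) | ⟨⟩) | s) <;>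
      simp only [S.repr_A0, S.reprL_brH, S.reprH_brH, S.reprG_brH, S.reprC_brH, dd,
        smul_eq_mul] <;>
      push_cast <;> ring
  · rw [show (Sum.inl (Sum.inr ()) : Idx) = CI from rfl]
    simp [S.hxC]
  · apply S.bV.ext_elem
    intro i
    rw [map_add, Finsupp.add_apply, map_smul, Finsupp.smul_apply]
    rcases i with (((s | s) | ⟨⟩) | s) <;>
      simp only [S.repr_A0, S.reprL_brG, S.reprH_brG, S.reprG_brG, S.reprC_brG, dd,
        smul_eq_mul] <;>
      push_cast <;> ring

lemma CONS2 (i j : Idx) :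
    S.br (S.br (S.f (S.bV (LI 0))) (S.bV i)) (S.bV j)
      + dd j • S.br (S.f (S.bV i)) (S.bV j)
    = ss i j • (S.br (S.br (S.f (S.bV (LI 0))) (S.bV j)) (S.bV i)
      + dd i • S.br (S.f (S.bV j)) (S.bV i)) := by
  have h0 := S.Mm i j
  have h1 := congrArg (S.br (S.bV (LI 0))) h0
  simp only [map_smul, map_sub] at h1
  have h2 := S.WADD j (S.f (S.bV i))
  have h3 := S.WADD i (S.f (S.bV j))
  have h4 : S.br (S.br (S.bV (LI 0)) (S.f (S.bV i))) (S.bV j)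
      = (-dd i) • S.br (S.f (S.bV i)) (S.bV j)
        - S.br (S.br (S.f (S.bV (LI 0))) (S.bV i)) (S.bV j) := by
    rw [S.K2 i, map_sub, map_smul, LinearMap.sub_apply, LinearMap.smul_apply]
  have h5 : S.br (S.br (S.bV (LI 0)) (S.f (S.bV j))) (S.bV i)
      = (-dd j) • S.br (S.f (S.bV j)) (S.bV i)
        - S.br (S.br (S.f (S.bV (LI 0))) (S.bV j)) (S.bV i) := by
    rw [S.K2 j, map_sub, map_smul, LinearMap.sub_apply, LinearMap.smul_apply]
  have h6 := S.eq1 i j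
  linear_combination (norm := module) h1 + h2 + (-(ss i j)) • h3 + h4 + (-(ss i j)) • h5
    + (-(dd i - dd j)) • h6 + (dd j) • h0


lemma intCast_ne {a b : ℤ} (h : a ≠ b) : (a : ℂ) ≠ (b : ℂ) := by exact_mod_cast h

lemma halfne (a b : ℤ) : (a:ℂ) + 1/2 ≠ (b:ℂ) := by
  intro h
  have h2 : ((2*a+1 : ℤ) : ℂ) = ((2*b : ℤ) : ℂ) := by push_cast; linear_combination 2*h
  have h3 : (2*a+1 : ℤ) = 2*b := by exact_mod_cast h2
  omega

lemma brxH0b (j : Idx) : S.br (S.bV j) (S.bV (HI 0)) = 0 := by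
  rcases j with (((m | m) | ⟨⟩) | k)
  · rw [S.hLH]; simp
  · exact S.hHH m 0
  · exact S.brCb (HI 0)
  · exact S.brGH k 0

lemma brC_op : S.br (S.bV CI) = 0 := by
  apply Module.Basis.ext S.bV
  intro i
  rw [S.brCb i]; rfl

lemma brH0_op : S.br (S.bV (HI 0)) = 0 := by
  apply Module.Basis.ext S.bV
  intro i
  rw [S.brH0b i]; rfl

/-- If `u` brackets to zero with every basis vector, then `u` is a combination of `H 0` and `C`. -/
lemma central_form (u : V) (h : ∀ j, S.br u (S.bV j) = 0) :
    u = S.bV.repr u (HI 0) • S.bV (HI 0) + S.bV.repr u CI • S.bV CI := by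
  have hL : ∀ j : ℤ, S.bV.repr u (LI j) = 0 := by
    intro j
    by_cases hj : j = 1
    · subst hj
      have := congrArg (fun w => S.bV.repr w (LI 3)) (h (LI 2))
      simp only [map_zero, Finsupp.coe_zero, Pi.zero_apply] at this
      rw [S.reprL_brL u 2 3] at this
      have h3 : ((3:ℂ) - 2*2) ≠ 0 := by norm_num
      have h4 := (mul_eq_zero.mp this).resolve_left h3
      rw [show (3:ℤ) - 2 = 1 by norm_num] at h4
      exact h4
    · have := congrArg (fun w => S.bV.repr w (LI (j+1))) (h (LI 1))
      simp only [map_zero, Finsupp.coe_zero, Pi.zero_apply] at this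
      rw [S.reprL_brL u 1 (j+1)] at this
      have h3 : ((j:ℂ) + 1 - 2*1) ≠ 0 := by
        intro hh
        have : ((j:ℤ)) = 1 := by
          have : ((j:ℂ)) = 1 := by linear_combination hh
          exact_mod_cast this
        exact hj this
      rcases mul_eq_zero.mp this with h4 | h4
      · exact absurd (by push_cast at h4 ⊢; linear_combination h4) h3
      · simpa using h4
  have hH : ∀ j : ℤ, j ≠ 0 → S.bV.repr u (HI j) = 0 := by
    intro j hj
    have := congrArg (fun w => S.bV.repr w (HI (j+1))) (h (LI 1))
    simp only [map_zero, Finsupp.coe_zero, Pi.zero_apply] at this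
    rw [S.reprH_brL u 1 (j+1)] at this
    rcases mul_eq_zero.mp this with h4 | h4
    · exfalso
      have : ((j:ℂ)) = 0 := by push_cast at h4; linear_combination h4
      exact hj (by exact_mod_cast this)
    · simpa using h4
  have hG : ∀ k : ℤ, S.bV.repr u (GI k) = 0 := by
    intro k
    have := congrArg (fun w => S.bV.repr w (GI (k+1))) (h (LI 1))
    simp only [map_zero, Finsupp.coe_zero, Pi.zero_apply] at this
    rw [S.reprG_brL u 1 (k+1)] at this
    rcases mul_eq_zero.mp this with h4 | h4
    · exfalso
      have h5 := halfne k 0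
      apply h5
      push_cast at h4 ⊢
      linear_combination h4
    · simpa using h4
  apply S.bV.ext_elem
  intro i
  rw [map_add, Finsupp.add_apply, map_smul, map_smul, Finsupp.smul_apply, Finsupp.smul_apply,
    Module.Basis.repr_self, Module.Basis.repr_self]
  rcases i with (((s | s) | ⟨⟩) | s)
  · rw [hL s]; simp [Finsupp.single_apply]
  · by_cases hs : s = 0
    · subst hs; simp [Finsupp.single_apply]
    · rw [hH s hs]; simp [Finsupp.single_apply, hs, Ne.symm hs]
  · simp [Finsupp.single_apply]
  · rw [hG s]; simp [Finsupp.single_apply]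


lemma br_circxC (i j : Idx) : S.br (S.circ (S.bV i) (S.bV CI)) (S.bV j) = 0 := by
  have h := S.post2b i CI j
  rw [show S.br (S.bV CI) (S.bV j) = 0 from S.brCb j, map_zero,
    show S.br (S.bV CI) (S.circ (S.bV i) (S.bV j)) = 0 from by rw [S.brC_op]; rfl] at h
  rw [smul_zero] at h
  linear_combination (norm := module) (-1:ℂ) • h

lemma br_circxH0 (i j : Idx) : S.br (S.circ (S.bV i) (S.bV (HI 0))) (S.bV j) = 0 := by
  have h := S.post2b i (HI 0) j
  rw [show S.br (S.bV (HI 0)) (S.bV j) = 0 from S.brH0b j, map_zero,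
    show S.br (S.bV (HI 0)) (S.circ (S.bV i) (S.bV j)) = 0 from by rw [S.brH0_op]; rfl] at h
  rw [smul_zero] at h
  linear_combination (norm := module) (-1:ℂ) • h

lemma br_y_central (u : V) (h : ∀ j, S.br u (S.bV j) = 0) (j : Idx) : S.br (S.bV j) u = 0 := by
  rw [S.central_form u h, map_add, map_smul, map_smul, S.brxH0b, S.hxC, smul_zero, smul_zero,
    add_zero]

lemma circC_brbasis (j l : Idx) : S.circ (S.bV CI) (S.br (S.bV j) (S.bV l)) = 0 := by
  have h := S.post2b CI j l
  have hcj : S.circ (S.bV CI) (S.bV j) = S.circ (S.bV j) (S.bV CI) := by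
    rw [S.hcommb CI j, ssE', one_smul]
  have hcl : S.circ (S.bV CI) (S.bV l) = S.circ (S.bV l) (S.bV CI) := by
    rw [S.hcommb CI l, ssE', one_smul]
  rw [hcj, hcl, S.br_circxC j l, S.br_y_central _ (S.br_circxC l) j, smul_zero, add_zero] at h
  exact h

lemma circH0_brbasis (j l : Idx) : S.circ (S.bV (HI 0)) (S.br (S.bV j) (S.bV l)) = 0 := by
  have h := S.post2b (HI 0) j l
  have hcj : S.circ (S.bV (HI 0)) (S.bV j) = S.circ (S.bV j) (S.bV (HI 0)) := by
    rw [S.hcommb (HI 0) j, ssE', one_smul]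
  have hcl : S.circ (S.bV (HI 0)) (S.bV l) = S.circ (S.bV l) (S.bV (HI 0)) := by
    rw [S.hcommb (HI 0) l, ssE', one_smul]
  rw [hcj, hcl, S.br_circxH0 j l, S.br_y_central _ (S.br_circxH0 l) j, smul_zero, add_zero] at h
  exact h

lemma central_basis (w : V) (hw : ∀ j l : Idx, S.circ w (S.br (S.bV j) (S.bV l)) = 0) :
    ∀ i, S.circ w (S.bV i) = 0 := by
  have hL0 : S.circ w (S.bV (LI 0)) = 0 := by
    have h := hw (LI 1) (LI (-1))
    rw [S.hLL, show (1 + -1 : ℤ) = 0 by norm_num] at h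
    rw [if_pos rfl] at h
    have e1 : (((1:ℤ):ℂ)^3 - ((1:ℤ):ℂ))/12 = 0 := by push_cast; norm_num
    rw [e1, zero_smul, add_zero, map_smul, smul_eq_zero] at h
    rcases h with h | h
    · exfalso
      have : ((1:ℤ):ℂ) - ((-1:ℤ):ℂ) = 2 := by push_cast; norm_num
      rw [this] at h
      norm_num at h
    · exact h
  have hLm : ∀ m : ℤ, S.circ w (S.bV (LI m)) = 0 := by
    intro m
    by_cases hm : m = 0
    · subst hm; exact hL0
    · have h := hw (LI 0) (LI m)
      rw [S.hLL, show (0 + m : ℤ) = m from zero_add m] at h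
      have hif : (if m = 0 then (((0:ℤ):ℂ)^3 - ((0:ℤ):ℂ))/12 else 0) = 0 := by
        rw [if_neg hm]
      rw [hif, zero_smul, add_zero, map_smul, smul_eq_zero] at h
      rcases h with h | h
      · exfalso
        apply hm
        have : ((m:ℤ):ℂ) = ((0:ℤ):ℂ) := by push_cast at h ⊢; linear_combination -h
        exact_mod_cast this
      · exact h
  have hHn : ∀ n : ℤ, S.circ w (S.bV (HI n)) = 0 := by
    intro n
    have h := hw (GI 0) (GI (n-1))
    rw [S.hGG, show (0 + (n-1) + 1 : ℤ) = n by ring, map_smul, smul_eq_zero] at h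
    rcases h with h | h
    · norm_num at h
    · exact h
  have hGk : ∀ k : ℤ, S.circ w (S.bV (GI k)) = 0 := by
    intro k
    have h := hw (LI 0) (GI k)
    rw [S.hLG, show (0 + k : ℤ) = k from zero_add k, map_smul, smul_eq_zero] at h
    rcases h with h | h
    · exfalso
      have := halfne k 0
      apply this
      push_cast at h ⊢
      linear_combination -h
    · exact h
  have hC : S.circ w (S.bV CI) = 0 := by
    have h := hw (LI 2) (LI (-2))
    rw [S.hLL, show (2 + -2 : ℤ) = 0 by norm_num, if_pos rfl] at h
    rw [map_add, map_smul, map_smul, hL0, smul_zero, zero_add, smul_eq_zero] at h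
    rcases h with h | h
    · exfalso
      have : (((2:ℤ):ℂ)^3 - ((2:ℤ):ℂ))/12 = 1/2 := by push_cast; norm_num
      rw [this] at h
      norm_num at h
    · exact h
  intro i
  rcases i with (((m | m) | ⟨⟩) | k)
  · exact hLm m
  · exact hHn m
  · exact hC
  · exact hGk k

lemma circC_op : S.circ (S.bV CI) = 0 := by
  apply Module.Basis.ext S.bV
  intro i
  rw [S.central_basis _ S.circC_brbasis i]; rfl

lemma circH0_op : S.circ (S.bV (HI 0)) = 0 := by
  apply Module.Basis.ext S.bV
  intro i
  rw [S.central_basis _ S.circH0_brbasis i]; rfl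

lemma circxC_basis (i : Idx) : S.circ (S.bV i) (S.bV CI) = 0 := by
  rw [S.hcommb i CI, ssE, one_smul, S.circC_op]; rfl

lemma circxH0_basis (i : Idx) : S.circ (S.bV i) (S.bV (HI 0)) = 0 := by
  rw [S.hcommb i (HI 0), ssE, one_smul, S.circH0_op]; rfl


lemma K2c (j i : Idx) : (dd j - dd i) * S.bV.repr (S.f (S.bV j)) i
    = - S.bV.repr (S.br (S.f (S.bV (LI 0))) (S.bV j)) i := by
  have h := congrArg (fun w => S.bV.repr w i) (S.K2 j)
  simp only [map_sub, map_smul, Finsupp.sub_apply, Finsupp.smul_apply, smul_eq_mul] at h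
  rw [S.repr_A0] at h
  linear_combination h

lemma lamh (u : ℤ) : S.bV.repr (S.f (S.bV (LI 0))) (LI u) = 0 := by
  have key : ∀ k : ℤ, ((k:ℂ) + 1/2) * 2 * S.bV.repr (S.f (S.bV (GI k))) (GI (u+k))
      = ((k:ℂ) + 1/2) * 2 * S.bV.repr (S.f (S.bV (LI 0))) (LI u) := by
    intro k
    have h := congrArg (fun w => S.bV.repr w (HI (u+2*k+1))) (S.CONS2 (GI k) (GI k))
    simp only [map_add, map_smul, Finsupp.add_apply, Finsupp.smul_apply, smul_eq_mul] at h
    simp only [S.reprH_brG, S.reprG_brG] at h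
    rw [show (u+2*k+1-k-1-k : ℤ) = u by ring, show (u+2*k+1-k-1 : ℤ) = u + k by ring] at h
    rw [show ss (GI k) (GI k) = -1 from rfl] at h
    simp only [dd] at h
    linear_combination (1/2 : ℂ) * h
  have rel : ∀ k r : ℤ, ((k:ℂ) + 1/2 - ((r:ℂ) + 1/2)) * S.bV.repr (S.f (S.bV (GI k))) (GI r)
      = - ((-(k:ℂ) - 1/2) * S.bV.repr (S.f (S.bV (LI 0))) (LI (r - k))) := by
    intro k r
    have h := S.K2c (GI k) (GI r)
    rw [S.reprG_brG] at h
    simpa [dd] using h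
  have r0 := rel 0 u
  have r1 := rel 1 (u+1)
  rw [show (u - 0 : ℤ) = u by ring] at r0
  rw [show (u + 1 - 1 : ℤ) = u by ring] at r1
  have k0 := key 0
  have k1 := key 1
  rw [show (u + 0 : ℤ) = u by ring] at k0
  set lam := S.bV.repr (S.f (S.bV (LI 0))) (LI u) with hlam
  set X0 := S.bV.repr (S.f (S.bV (GI 0))) (GI u) with hX0
  set X1 := S.bV.repr (S.f (S.bV (GI 1))) (GI (u+1)) with hX1
  push_cast at k0 k1 r0 r1
  have e0 : X0 = lam := by linear_combination k0
  have e1 : X1 = lam := by linear_combination (1/3 : ℂ) * k1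
  rw [e0] at r0
  rw [e1] at r1
  linear_combination r0 - r1

lemma nuh (u : ℤ) : S.bV.repr (S.f (S.bV (LI 0))) (GI u) = 0 := by
  have L8 : ∀ m r : ℤ, S.bV.repr (S.f (S.bV (LI m))) (GI r)
      = S.bV.repr (S.f (S.bV (LI 0))) (GI (r - m)) := by
    intro m r
    have h := S.K2c (LI m) (GI r)
    rw [S.reprG_brL] at h
    simp only [dd] at h
    have hc : ((m:ℂ) - ((r:ℂ) + 1/2)) ≠ 0 := by
      have := halfne r m
      intro hh; apply this; linear_combination -hh
    have h2 : ((m:ℂ) - ((r:ℂ)+1/2)) * S.bV.repr (S.f (S.bV (LI m))) (GI r)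
        = ((m:ℂ) - ((r:ℂ)+1/2)) * S.bV.repr (S.f (S.bV (LI 0))) (GI (r - m)) := by
      linear_combination h
    exact mul_left_cancel₀ hc h2
  have L5 : ∀ k s : ℤ, ((k:ℂ) + 1/2 - s) * S.bV.repr (S.f (S.bV (GI k))) (HI s)
      = - (2 * S.bV.repr (S.f (S.bV (LI 0))) (GI (s - k - 1))) := by
    intro k s
    have h := S.K2c (GI k) (HI s)
    rw [S.reprH_brG] at h
    simpa [dd] using h
  have main : ∀ m k : ℤ, ((m:ℂ)) * ((((u+m+k+1):ℤ):ℂ) - m)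
      * S.bV.repr (S.f (S.bV (GI k))) (HI (u+m+k+1-m)) = 0 := by
    intro m k
    have h := congrArg (fun w => S.bV.repr w (HI (u+m+k+1))) (S.CONS2 (LI m) (GI k))
    simp only [map_add, map_smul, Finsupp.add_apply, Finsupp.smul_apply, smul_eq_mul] at h
    simp only [S.reprH_brG, S.reprH_brL, S.reprG_brL] at h
    rw [show ss (LI m) (GI k) = 1 from rfl] at h
    rw [L8 m (u+m+k+1-k-1)] at h
    rw [show (u+m+k+1-k-1-m : ℤ) = u by ring, show (u+m+k+1-k-1 : ℤ) = u + m by ring,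
      show (u+m+k+1-m-k-1 : ℤ) = u by ring] at h
    simp only [dd] at h
    push_cast at h ⊢
    linear_combination -h
  by_cases hu : u = -1
  · have h := main 1 1
    have h5 := L5 1 (u+1+1+1-1)
    rw [show (u+1+1+1-1-1-1 : ℤ) = u by ring] at h5
    subst hu
    norm_num at h h5
    linear_combination (1/2 : ℂ) * h5 + (-(1:ℂ)/4) * h
  · have h := main 1 0
    have h5 := L5 0 (u+1+0+1-1)
    rw [show (u+1+0+1-1-0-1 : ℤ) = u by ring] at h5
    have hE : S.bV.repr (S.f (S.bV (GI 0))) (HI (u+1+0+1-1)) = 0 := by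
      have hc : ((u:ℂ) + 1) ≠ 0 := by
        intro hh
        have : ((u:ℤ):ℂ) = ((-1:ℤ):ℂ) := by push_cast; linear_combination hh
        exact hu (by exact_mod_cast this)
      have h' : ((u:ℂ)+1) * S.bV.repr (S.f (S.bV (GI 0))) (HI (u+1+0+1-1)) = 0 := by
        push_cast at h ⊢
        linear_combination h
      exact (mul_eq_zero.mp h').resolve_left hc
    rw [hE] at h5
    push_cast at h5
    linear_combination (1/2 : ℂ) * h5


lemma sub_half_ne (k s : ℤ) : ((k:ℂ) + 1/2 - s) ≠ 0 := by
  intro hh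
  exact halfne k s (by linear_combination hh)

lemma nu_fG (k r : ℤ) : S.bV.repr (S.f (S.bV (GI k))) (GI r) = 0 := by
  by_cases hr : r = k
  · rw [hr]
    have h := congrArg (fun w => S.bV.repr w (HI (2*k+1))) (S.CONS2 (GI k) (GI k))
    simp only [map_add, map_smul, Finsupp.add_apply, Finsupp.smul_apply, smul_eq_mul] at h
    simp only [S.reprH_brG, S.reprG_brG] at h
    rw [show ss (GI k) (GI k) = -1 from rfl] at h
    rw [show (2*k+1-k-1-k : ℤ) = 0 by ring, show (2*k+1-k-1 : ℤ) = k by ring, S.lamh 0] at h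
    simp only [dd] at h
    have h2 : ((k:ℂ) + 1/2) * (2 * S.bV.repr (S.f (S.bV (GI k))) (GI k)) = 0 := by
      linear_combination (1/2 : ℂ) * h
    have h3 := (mul_eq_zero.mp h2).resolve_left
      (fun hh => sub_half_ne k 0 (by push_cast; linear_combination hh))
    linear_combination (1/2 : ℂ) * h3
  · have h := S.K2c (GI k) (GI r)
    rw [S.reprG_brG, S.lamh (r - k)] at h
    simp only [dd] at h
    have hc : ((k:ℂ) + 1/2 - ((r:ℂ) + 1/2)) ≠ 0 := fun hh =>
      hr (by exact_mod_cast (show (r:ℂ) = (k:ℂ) from by linear_combination -hh))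
    have h2 : ((k:ℂ) + 1/2 - ((r:ℂ)+1/2)) * S.bV.repr (S.f (S.bV (GI k))) (GI r) = 0 := by
      linear_combination h
    exact (mul_eq_zero.mp h2).resolve_left hc

lemma eta_fG (k s : ℤ) : S.bV.repr (S.f (S.bV (GI k))) (HI s) = 0 := by
  have h := S.K2c (GI k) (HI s)
  rw [S.reprH_brG, S.nuh (s - k - 1)] at h
  simp only [dd] at h
  have h2 : ((k:ℂ) + 1/2 - (s:ℂ)) * S.bV.repr (S.f (S.bV (GI k))) (HI s) = 0 := by
    linear_combination h
  exact (mul_eq_zero.mp h2).resolve_left (sub_half_ne k s)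

lemma lam_fG (k j : ℤ) : S.bV.repr (S.f (S.bV (GI k))) (LI j) = 0 := by
  have h := S.K2c (GI k) (LI j)
  rw [S.reprL_brG] at h
  simp only [dd] at h
  have h2 : ((k:ℂ) + 1/2 - (j:ℂ)) * S.bV.repr (S.f (S.bV (GI k))) (LI j) = 0 := by
    linear_combination h
  exact (mul_eq_zero.mp h2).resolve_left (sub_half_ne k j)

lemma ga_fG (k : ℤ) : S.bV.repr (S.f (S.bV (GI k))) CI = 0 := by
  have h := S.K2c (GI k) CI
  rw [S.reprC_brG] at h
  simp only [dd] at h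
  have h2 : ((k:ℂ) + 1/2 - (0:ℂ)) * S.bV.repr (S.f (S.bV (GI k))) CI = 0 := by
    linear_combination h
  exact (mul_eq_zero.mp h2).resolve_left
    (fun hh => sub_half_ne k 0 (by push_cast at hh ⊢; linear_combination hh))

lemma fG_zero (k : ℤ) : S.f (S.bV (GI k)) = 0 := by
  apply S.eq_zero_of_coords
  intro i
  rcases i with (((s | s) | ⟨⟩) | s)
  · exact S.lam_fG k s
  · exact S.eta_fG k s
  · exact S.ga_fG k
  · exact S.nu_fG k s

lemma fH_zero (n : ℤ) : S.f (S.bV (HI n)) = 0 := by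
  have h := S.post2b (LI 0) (GI 0) (GI (n-1))
  rw [S.hGG, show (0 + (n-1) + 1 : ℤ) = n by ring, show ss (LI 0) (GI 0) = 1 from rfl, one_smul,
    show S.circ (S.bV (LI 0)) (S.bV (GI 0)) = 0 from S.fG_zero 0,
    show S.circ (S.bV (LI 0)) (S.bV (GI (n-1))) = 0 from S.fG_zero (n-1),
    map_smul] at h
  have h2 : S.br (0:V) (S.bV (GI (n-1))) = 0 := by rw [map_zero]; rfl
  have h3 : S.br (S.bV (GI 0)) (0:V) = 0 := map_zero _
  rw [h2, h3, zero_add] at h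
  have h4 : (2:ℂ) • S.f (S.bV (HI n)) = 0 := h
  rcases smul_eq_zero.mp h4 with h5 | h5
  · norm_num at h5
  · exact h5

lemma brfLG (m k : ℤ) : S.br (S.f (S.bV (LI m))) (S.bV (GI k)) = 0 := by
  have h := S.post2b (LI 0) (LI m) (GI k)
  rw [S.hLG, map_smul,
    show S.circ (S.bV (LI 0)) (S.bV (GI (m+k))) = 0 from S.fG_zero (m+k), smul_zero,
    show ss (LI 0) (LI m) = 1 from rfl, one_smul,
    show S.circ (S.bV (LI 0)) (S.bV (GI k)) = 0 from S.fG_zero k] at h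
  have h2 : S.br (S.bV (LI m)) (0:V) = 0 := map_zero _
  rw [h2, add_zero] at h
  exact h.symm

lemma lam_fL (m j : ℤ) : S.bV.repr (S.f (S.bV (LI m))) (LI j) = 0 := by
  by_cases hj : j = m
  · rw [hj]
    have h := congrArg (fun w => S.bV.repr w (GI m)) (S.brfLG m 0)
    simp only [map_zero, Finsupp.coe_zero, Pi.zero_apply] at h
    rw [S.reprG_brG] at h
    rw [show (m - 0 : ℤ) = m by ring] at h
    exact (mul_eq_zero.mp h).resolve_left (by norm_num)
  · have h := S.K2c (LI m) (LI j)
    rw [S.reprL_brL, S.lamh (j - m)] at h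
    simp only [dd] at h
    have hc : ((m:ℂ) - (j:ℂ)) ≠ 0 := fun hh =>
      hj (by exact_mod_cast (show (j:ℂ) = (m:ℂ) from by linear_combination -hh))
    have h2 : ((m:ℂ) - (j:ℂ)) * S.bV.repr (S.f (S.bV (LI m))) (LI j) = 0 := by
      linear_combination h
    exact (mul_eq_zero.mp h2).resolve_left hc

lemma nu_fL (m r : ℤ) : S.bV.repr (S.f (S.bV (LI m))) (GI r) = 0 := by
  have h := S.K2c (LI m) (GI r)
  rw [S.reprG_brL, S.nuh (r - m)] at h
  simp only [dd] at h
  have h2 : ((m:ℂ) - ((r:ℂ) + 1/2)) * S.bV.repr (S.f (S.bV (LI m))) (GI r) = 0 := by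
    linear_combination h
  refine (mul_eq_zero.mp h2).resolve_left ?_
  intro hh
  exact halfne r m (by linear_combination -hh)

lemma ga_fL (m : ℤ) (hm : m ≠ 0) : S.bV.repr (S.f (S.bV (LI m))) CI = 0 := by
  have h := S.K2c (LI m) CI
  rw [S.reprC_brL, S.lamh (-m)] at h
  simp only [dd] at h
  have hc : ((m:ℂ) - 0) ≠ 0 := fun hh =>
    hm (by exact_mod_cast (show (m:ℂ) = ((0:ℤ):ℂ) from by push_cast; linear_combination hh))
  have h2 : ((m:ℂ) - 0) * S.bV.repr (S.f (S.bV (LI m))) CI = 0 := by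
    linear_combination h
  exact (mul_eq_zero.mp h2).resolve_left hc

lemma brfLH (m n : ℤ) : S.br (S.f (S.bV (LI m))) (S.bV (HI n)) = 0 := by
  apply S.eq_zero_of_coords
  intro i
  rcases i with (((s | s) | ⟨⟩) | s)
  · exact S.reprL_brH _ n s
  · rw [S.reprH_brH, S.lam_fL m (s - n), mul_zero]
  · exact S.reprC_brH _ n
  · exact S.reprG_brH _ n s


lemma br_zero_left (w : V) : S.br (0:V) w = 0 := by rw [map_zero]; rfl

lemma prodLG (m k : ℤ) : S.circ (S.bV (LI m)) (S.bV (GI k)) = 0 := by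
  have h := S.Mm (LI m) (GI k)
  rw [S.brfLG, show (S.f (S.bV (GI k)) : V) = 0 from S.fG_zero k, S.br_zero_left,
    smul_zero, sub_zero] at h
  have hc : (dd (LI m) - dd (GI k)) ≠ 0 := by
    simp only [dd]
    intro hh
    exact halfne k m (by linear_combination -hh)
  rcases smul_eq_zero.mp h with h2 | h2
  · exact absurd h2 hc
  · exact h2

lemma prodLH (m n : ℤ) (hmn : m ≠ n) : S.circ (S.bV (LI m)) (S.bV (HI n)) = 0 := by
  have h := S.Mm (LI m) (HI n)
  rw [S.brfLH, show (S.f (S.bV (HI n)) : V) = 0 from S.fH_zero n, S.br_zero_left,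
    smul_zero, sub_zero] at h
  have hc : (dd (LI m) - dd (HI n)) ≠ 0 := by
    simp only [dd]
    intro hh
    exact hmn (by exact_mod_cast (show (m:ℂ) = (n:ℂ) from by linear_combination hh))
  rcases smul_eq_zero.mp h with h2 | h2
  · exact absurd h2 hc
  · exact h2

lemma prodHH (m n : ℤ) (hmn : m ≠ n) : S.circ (S.bV (HI m)) (S.bV (HI n)) = 0 := by
  have h := S.Mm (HI m) (HI n)
  rw [show (S.f (S.bV (HI n)) : V) = 0 from S.fH_zero n,
    show (S.f (S.bV (HI m)) : V) = 0 from S.fH_zero m, S.br_zero_left, S.br_zero_left,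
    smul_zero, sub_zero] at h
  have hc : (dd (HI m) - dd (HI n)) ≠ 0 := by
    simp only [dd]
    intro hh
    exact hmn (by exact_mod_cast (show (m:ℂ) = (n:ℂ) from by linear_combination hh))
  rcases smul_eq_zero.mp h with h2 | h2
  · exact absurd h2 hc
  · exact h2

lemma prodHG (n k : ℤ) : S.circ (S.bV (HI n)) (S.bV (GI k)) = 0 := by
  have h := S.Mm (HI n) (GI k)
  rw [show (S.f (S.bV (HI n)) : V) = 0 from S.fH_zero n,
    show (S.f (S.bV (GI k)) : V) = 0 from S.fG_zero k, S.br_zero_left, S.br_zero_left,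
    smul_zero, sub_zero] at h
  have hc : (dd (HI n) - dd (GI k)) ≠ 0 := by
    simp only [dd]
    intro hh
    exact halfne k n (by linear_combination -hh)
  rcases smul_eq_zero.mp h with h2 | h2
  · exact absurd h2 hc
  · exact h2

lemma prodGG (k l : ℤ) : S.circ (S.bV (GI k)) (S.bV (GI l)) = 0 := by
  by_cases hkl : k = l
  · rw [hkl]
    have h := S.hcommb (GI l) (GI l)
    rw [show ss (GI l) (GI l) = -1 from rfl] at h
    have h2 : (2:ℂ) • S.circ (S.bV (GI l)) (S.bV (GI l)) = 0 := by
      linear_combination (norm := module) h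
    rcases smul_eq_zero.mp h2 with h3 | h3
    · norm_num at h3
    · exact h3
  · have h := S.Mm (GI k) (GI l)
    rw [show (S.f (S.bV (GI k)) : V) = 0 from S.fG_zero k,
      show (S.f (S.bV (GI l)) : V) = 0 from S.fG_zero l, S.br_zero_left, S.br_zero_left,
      smul_zero, sub_zero] at h
    have hc : (dd (GI k) - dd (GI l)) ≠ 0 := by
      simp only [dd]
      intro hh
      exact hkl (by exact_mod_cast (show (k:ℂ) = (l:ℂ) from by linear_combination hh))
    rcases smul_eq_zero.mp h with h2 | h2
    · exact absurd h2 hc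
    · exact h2

lemma QL (n p j : ℤ) (hnp : n ≠ p) :
    S.bV.repr (S.circ (S.bV (LI n)) (S.bV (LI p))) (LI j) = 0 := by
  have h := congrArg (fun w => S.bV.repr w (LI j)) (S.Mm (LI n) (LI p))
  simp only [map_sub, map_smul, Finsupp.sub_apply, Finsupp.smul_apply, smul_eq_mul] at h
  rw [S.reprL_brL, S.reprL_brL, S.lam_fL, S.lam_fL] at h
  simp only [dd, mul_zero, zero_sub, sub_zero, mul_neg, neg_zero] at h
  have hc : ((n:ℂ) - (p:ℂ)) ≠ 0 := fun hh =>
    hnp (by exact_mod_cast (show (n:ℂ) = (p:ℂ) from by linear_combination hh))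
  have h2 : ((n:ℂ) - (p:ℂ)) * S.bV.repr (S.circ (S.bV (LI n)) (S.bV (LI p))) (LI j) = 0 := by
    linear_combination h
  exact (mul_eq_zero.mp h2).resolve_left hc

lemma QG (n p r : ℤ) (hnp : n ≠ p) :
    S.bV.repr (S.circ (S.bV (LI n)) (S.bV (LI p))) (GI r) = 0 := by
  have h := congrArg (fun w => S.bV.repr w (GI r)) (S.Mm (LI n) (LI p))
  simp only [map_sub, map_smul, Finsupp.sub_apply, Finsupp.smul_apply, smul_eq_mul] at h
  rw [S.reprG_brL, S.reprG_brL, S.nu_fL, S.nu_fL] at h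
  simp only [dd, mul_zero, zero_sub, sub_zero, mul_neg, neg_zero] at h
  have hc : ((n:ℂ) - (p:ℂ)) ≠ 0 := fun hh =>
    hnp (by exact_mod_cast (show (n:ℂ) = (p:ℂ) from by linear_combination hh))
  have h2 : ((n:ℂ) - (p:ℂ)) * S.bV.repr (S.circ (S.bV (LI n)) (S.bV (LI p))) (GI r) = 0 := by
    linear_combination h
  exact (mul_eq_zero.mp h2).resolve_left hc

lemma QC (n p : ℤ) (hnp : n ≠ p) :
    S.bV.repr (S.circ (S.bV (LI n)) (S.bV (LI p))) CI = 0 := by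
  have h := congrArg (fun w => S.bV.repr w CI) (S.Mm (LI n) (LI p))
  simp only [map_sub, map_smul, Finsupp.sub_apply, Finsupp.smul_apply, smul_eq_mul] at h
  rw [S.reprC_brL, S.reprC_brL, S.lam_fL, S.lam_fL] at h
  simp only [dd, mul_zero, zero_sub, sub_zero, mul_neg, neg_zero] at h
  have hc : ((n:ℂ) - (p:ℂ)) ≠ 0 := fun hh =>
    hnp (by exact_mod_cast (show (n:ℂ) = (p:ℂ) from by linear_combination hh))
  have h2 : ((n:ℂ) - (p:ℂ)) * S.bV.repr (S.circ (S.bV (LI n)) (S.bV (LI p))) CI = 0 := by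
    linear_combination h
  exact (mul_eq_zero.mp h2).resolve_left hc

lemma memspanH (v : V) (hL : ∀ j, S.bV.repr v (LI j) = 0) (hG : ∀ r, S.bV.repr v (GI r) = 0)
    (hC : S.bV.repr v CI = 0) :
    v ∈ Submodule.span ℂ (Set.range (fun j : ℤ => S.bV (HI j))) := by
  rw [← Module.Basis.linearCombination_repr S.bV v, Finsupp.linearCombination_apply, Finsupp.sum]
  apply Submodule.sum_mem
  intro i _
  rcases i with (((s | s) | ⟨⟩) | s)
  · rw [hL s, zero_smul]; exact Submodule.zero_mem _
  · exact Submodule.smul_mem _ _ (Submodule.subset_span ⟨s, rfl⟩)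
  · rw [hC, zero_smul]; exact Submodule.zero_mem _
  · rw [hG s, zero_smul]; exact Submodule.zero_mem _

lemma QspanH (n p : ℤ) (hnp : n ≠ p) : S.circ (S.bV (LI n)) (S.bV (LI p))
    ∈ Submodule.span ℂ (Set.range (fun j : ℤ => S.bV (HI j))) :=
  S.memspanH _ (fun j => S.QL n p j hnp) (fun r => S.QG n p r hnp) (S.QC n p hnp)

lemma circLmH (m j : ℤ) : S.circ (S.bV (LI m)) (S.bV (HI j)) = 0 := by
  by_cases hm : m = 0
  · rw [hm]; exact S.fH_zero j
  by_cases hj : j = m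
  · rw [hj]
    have h := S.post2b (LI m) (LI (2*m)) (HI (-m))
    rw [S.hLH, show (2*m + -m : ℤ) = m by ring, map_smul,
      show ss (LI m) (LI (2*m)) = 1 from rfl, one_smul,
      S.prodLH m (-m) (by omega), map_zero, add_zero] at h
    have hQ : S.br (S.circ (S.bV (LI m)) (S.bV (LI (2*m)))) (S.bV (HI (-m))) = 0 := by
      apply S.eq_zero_of_coords
      intro i
      rcases i with (((s | s) | ⟨⟩) | s)
      · exact S.reprL_brH _ _ s
      · rw [S.reprH_brH, S.QL m (2*m) (s - -m) (by omega), mul_zero]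
      · exact S.reprC_brH _ _
      · exact S.reprG_brH _ _ s
    rw [hQ] at h
    have hc : (-((-m:ℤ):ℂ)) ≠ 0 := by
      intro hh
      apply hm
      exact_mod_cast (show ((m:ℤ):ℂ) = ((0:ℤ):ℂ) from by push_cast at hh ⊢; linear_combination hh)
    rcases smul_eq_zero.mp h with h2 | h2
    · exact absurd h2 hc
    · exact h2
  · exact S.prodLH m j (fun hh => hj hh.symm)

lemma annspanH (m : ℤ) (w : V)
    (hw : w ∈ Submodule.span ℂ (Set.range (fun j : ℤ => S.bV (HI j)))) :
    S.circ (S.bV (LI m)) w = 0 := by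
  induction hw using Submodule.span_induction with
  | mem x hx =>
    obtain ⟨j, rfl⟩ := hx
    exact S.circLmH m j
  | zero => exact map_zero _
  | add x y _ _ hx hy => rw [map_add, hx, hy, add_zero]
  | smul a x _ hx => rw [map_smul, hx, smul_zero]

lemma prodLL (q p : ℤ) : S.circ (S.bV (LI q)) (S.bV (LI p)) = 0 := by
  set m : ℤ := (q.natAbs : ℤ) + (p.natAbs : ℤ) + 1 with hm
  set n : ℤ := q - m with hn
  have hmn : m ≠ n := by omega
  have hm0 : m ≠ 0 := by omega
  have hn0 : n ≠ 0 := by omega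
  have hmp : m ≠ p := by omega
  have hnp : n ≠ p := by omega
  have h := S.post1b (LI m) (LI n) (LI p)
  rw [show ss (LI m) (LI n) = 1 from rfl, one_smul] at h
  rw [S.annspanH n _ (S.QspanH m p hmp), S.annspanH m _ (S.QspanH n p hnp), sub_zero] at h
  rw [S.hLL, show (m + n : ℤ) = q by omega] at h
  rw [map_add, LinearMap.add_apply, map_smul, LinearMap.smul_apply, map_smul,
    LinearMap.smul_apply, show S.circ (S.bV CI) (S.bV (LI p)) = 0 from by rw [S.circC_op]; rfl,
    smul_zero, add_zero] at h
  have hc : ((m:ℂ) - (n:ℂ)) ≠ 0 := fun hh =>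
    hmn (by exact_mod_cast (show (m:ℂ) = (n:ℂ) from by linear_combination hh))
  rcases smul_eq_zero.mp h with h2 | h2
  · exact absurd h2 hc
  · exact h2

lemma circHmHm (m : ℤ) : S.circ (S.bV (HI m)) (S.bV (HI m)) = 0 := by
  by_cases hm : m = 0
  · rw [hm, show S.circ (S.bV (HI 0)) (S.bV (HI 0)) = 0 from by rw [S.circH0_op]; rfl]
  · have h := S.post2b (HI m) (LI (2*m)) (HI (-m))
    rw [S.hLH, show (2*m + -m : ℤ) = m by ring, map_smul,
      show ss (HI m) (LI (2*m)) = 1 from rfl, one_smul,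
      S.prodHH m (-m) (by omega), map_zero, add_zero] at h
    have hcm : S.circ (S.bV (HI m)) (S.bV (LI (2*m))) = 0 := by
      rw [S.hcommb (HI m) (LI (2*m)), show ss (HI m) (LI (2*m)) = 1 from rfl, one_smul,
        S.circLmH (2*m) m]
    rw [hcm, S.br_zero_left] at h
    have hc : (-((-m:ℤ):ℂ)) ≠ 0 := by
      intro hh
      apply hm
      exact_mod_cast (show ((m:ℤ):ℂ) = ((0:ℤ):ℂ) from by push_cast at hh ⊢; linear_combination hh)
    rcases smul_eq_zero.mp h with h2 | h2
    · exact absurd h2 hc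
    · exact h2

lemma allpairs (i j : Idx) : S.circ (S.bV i) (S.bV j) = 0 := by
  rcases i with (((q | q) | ⟨⟩) | q) <;> rcases j with (((p | p) | ⟨⟩) | p)
  · exact S.prodLL q p
  · exact S.circLmH q p
  · exact S.circxC_basis (LI q)
  · exact S.prodLG q p
  · rw [S.hcommb (HI q) (LI p), show ss (HI q) (LI p) = 1 from rfl, one_smul, S.circLmH p q]
  · by_cases hqp : q = p
    · rw [hqp]; exact S.circHmHm p
    · exact S.prodHH q p hqp
  · exact S.circxC_basis (HI q)
  · exact S.prodHG q p
  · rw [show S.circ (S.bV CI) (S.bV (LI p)) = 0 from by rw [S.circC_op]; rfl]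
  · rw [show S.circ (S.bV CI) (S.bV (HI p)) = 0 from by rw [S.circC_op]; rfl]
  · exact S.circxC_basis CI
  · rw [show S.circ (S.bV CI) (S.bV (GI p)) = 0 from by rw [S.circC_op]; rfl]
  · rw [S.hcommb (GI q) (LI p), show ss (GI q) (LI p) = 1 from rfl, one_smul, S.prodLG p q]
  · rw [S.hcommb (GI q) (HI p), show ss (GI q) (HI p) = 1 from rfl, one_smul, S.prodHG p q]
  · exact S.circxC_basis (GI q)
  · exact S.prodGG q p

theorem main : ∀ x y : V, S.circ x y = 0 := by
  have hop : S.circ = 0 := by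
    apply Module.Basis.ext S.bV
    intro i
    apply Module.Basis.ext S.bV
    intro j
    rw [S.allpairs i j]
    rfl
  intro x y
  rw [hop]
  rfl

end Data
end HVS

theorem postLie_HVS_trivial
    (V : Type) [AddCommGroup V] [Module ℂ V]
    (bV : Module.Basis (((ℤ ⊕ ℤ) ⊕ Unit) ⊕ ℤ) ℂ V)
    (br : V →ₗ[ℂ] V →ₗ[ℂ] V)
    (L : ℤ → V) (H : ℤ → V) (Cc : V) (G : ℤ → V)
    (hLdef : ∀ m : ℤ, L m = bV (Sum.inl (Sum.inl (Sum.inl m))))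
    (hHdef : ∀ m : ℤ, H m = bV (Sum.inl (Sum.inl (Sum.inr m))))
    (hCdef : Cc = bV (Sum.inl (Sum.inr ())))
    (hGdef : ∀ k : ℤ, G k = bV (Sum.inr k))
    (Vsub : ZMod 2 → Submodule ℂ V)
    (hV0 : Vsub 0 = Submodule.span ℂ (Set.range (fun i : (ℤ ⊕ ℤ) ⊕ Unit => bV (Sum.inl i))))
    (hV1 : Vsub 1 = Submodule.span ℂ (Set.range (fun j : ℤ => bV (Sum.inr j))))
    (sgn : ZMod 2 → ℂ) (hsgn : ∀ p : ZMod 2, sgn p = if p = 1 then -1 else 1)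
    (hLL : ∀ m n : ℤ, br (L m) (L n) = ((m : ℂ) - n) • L (m + n) +
      (if m + n = 0 then ((m : ℂ) ^ 3 - m) / 12 else 0) • Cc)
    (hLH : ∀ m n : ℤ, br (L m) (H n) = (-(n : ℂ)) • H (m + n))
    (hLG : ∀ m k : ℤ, br (L m) (G k) = (-((k : ℂ) + 1 / 2)) • G (m + k))
    (hGG : ∀ k l : ℤ, br (G k) (G l) = (2 : ℂ) • H (k + l + 1))
    (hHH : ∀ m n : ℤ, br (H m) (H n) = 0)
    (hHG : ∀ m k : ℤ, br (H m) (G k) = 0)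
    (hxC : ∀ x : V, br x Cc = 0)
    (hskew : ∀ p q : ZMod 2, ∀ x ∈ Vsub p, ∀ y ∈ Vsub q,
      br x y = (-(sgn (p * q))) • br y x)
    (circ : V →ₗ[ℂ] V →ₗ[ℂ] V)
    (hcomm : ∀ p q : ZMod 2, ∀ x ∈ Vsub p, ∀ y ∈ Vsub q, circ x y = sgn (p * q) • circ y x)
    (hpost1 : ∀ p q t : ZMod 2, ∀ x ∈ Vsub p, ∀ y ∈ Vsub q, ∀ z ∈ Vsub t,
      circ (br x y) z = circ x (circ y z) - sgn (p * q) • circ y (circ x z))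
    (hpost2 : ∀ p q t : ZMod 2, ∀ x ∈ Vsub p, ∀ y ∈ Vsub q, ∀ z ∈ Vsub t,
      circ x (br y z) = br (circ x y) z + sgn (p * q) • br y (circ x z)) :
    ∀ x y : V, circ x y = 0 := by
  simp only [hLdef, hHdef, hGdef, hCdef] at hLL hLH hLG hGG hHH hHG hxC
  exact HVS.Data.main
    { bV := bV, br := br, circ := circ, Vsub := Vsub, sgn := sgn,
      hV0 := hV0, hV1 := hV1, hsgn := hsgn,
      hLL := hLL, hLH := hLH, hLG := hLG, hGG := hGG, hHH := hHH, hHG := hHG,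
      hxC := hxC, hskew := hskew, hcomm := hcomm, hpost1 := hpost1, hpost2 := hpost2 }
end
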